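/- arXiv:1307.5632 — 6 statements merged into one kernel-verified Lean document; each statement's English description precedes it below -/
import Mathlib

section
/- Let A be a finite-dimensional Hopf algebra over a field k and let λ : A → k be a nonzero left integral in the dual. Then there exists a unique right integral Λ ∈ A such that λ(Λ) = 1. -/
open scoped TensorProduct

/-- Let `A` be a finite-dimensional Hopf algebra over a field `k` and let
`λ : A → k` be a nonzero left integral in the dual.  Then there exists a unique right
integral `Λ ∈ A` such that `λ(Λ) = 1`. -/
theorem existsUnique_right_integral (k A : Type*) [Field k] [Ring A] 
    [HopfAlgebra k A] [FiniteDimensional k A]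
    (lam : A →ₗ[k] k) (hne : lam ≠ 0)
    (hlam : ∀ a : A, (TensorProduct.rid k A)
        ((LinearMap.lTensor A lam) (Coalgebra.comul (R := k) a)) = lam a • 1) :
    ∃! Λ : A, (∀ a : A, Λ * a = Coalgebra.counit (R := k) a • Λ) ∧ lam Λ = 1 := by
  classical
  set S : A →ₗ[k] A := HopfAlgebra.antipode (R := k) with hS
  set Δ : A →ₗ[k] A ⊗[k] A := Coalgebra.comul (R := k) with hΔ
  set ε : A →ₗ[k] k := Coalgebra.counit (R := k) with hε
  set μ : A ⊗[k] A →ₗ[k] A := LinearMap.mul' k A with hμ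
  set R0 : A ⊗[k] A →ₗ[k] A :=
    (TensorProduct.rid k A).toLinearMap ∘ₗ LinearMap.lTensor A lam with hR0
  have hR0t : ∀ (x y : A), R0 (x ⊗ₜ[k] y) = lam y • x := by
    intro x y; simp [hR0]
  have hlam' : ∀ a : A, R0 (Δ a) = lam a • 1 := by
    intro a; simpa [hR0, hΔ] using hlam a
  have hmul : ∀ x y : A, Δ (x * y) = Δ x * Δ y := by
    intro x y; rw [hΔ]; exact Bialgebra.comul_mul x y
  have hcu1 : ε 1 = 1 := by rw [hε]; exact Bialgebra.counit_one
  have hcum : ∀ x y : A, ε (x * y) = ε x * ε y := by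
    intro x y; rw [hε]; exact Bialgebra.counit_mul x y
  have hco : ∀ a : A, TensorProduct.assoc k A A A (LinearMap.rTensor A Δ (Δ a)) =
      LinearMap.lTensor A Δ (Δ a) := by
    intro a; rw [hΔ]; exact Coalgebra.coassoc_apply a
  have hanti : ∀ a : A, μ (LinearMap.rTensor A S (Δ a)) = ε a • 1 := by
    intro a; rw [hμ, hΔ, hS, hε]
    rw [HopfAlgebra.mul_antipode_rTensor_comul_apply, Algebra.algebraMap_eq_smul_one]
  have hcounit_r : ∀ a : A, (TensorProduct.lid k A) (LinearMap.rTensor A ε (Δ a)) = a := by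
    intro a; rw [hε, hΔ, Coalgebra.rTensor_counit_comul]; simp
  have hcounit_l : ∀ a : A, (TensorProduct.rid k A) (LinearMap.lTensor A ε (Δ a)) = a := by
    intro a; rw [hε, hΔ, Coalgebra.lTensor_counit_comul]; simp
  -- helper maps
  set G : A → (A ⊗[k] A →ₗ[k] A) := fun b =>
    R0 ∘ₗ LinearMap.lTensor A (LinearMap.mulRight k b) ∘ₗ LinearMap.rTensor A S with hG
  have hGt : ∀ (b x y : A), G b (x ⊗ₜ[k] y) = lam (y * b) • S x := by
    intro b x y; simp [hG, hR0t]
  set J : (A →ₗ[k] k) → (A ⊗[k] A →ₗ[k] A) := fun h =>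
    (TensorProduct.lid k A).toLinearMap ∘ₗ LinearMap.rTensor A h with hJ
  have hJt : ∀ (h : A →ₗ[k] k) (x y : A), J h (x ⊗ₜ[k] y) = h x • y := by
    intro h x y; simp [hJ]
  set Ψ : A → (A ⊗[k] (A ⊗[k] A) →ₗ[k] A) := fun b =>
    μ ∘ₗ LinearMap.lTensor A R0 ∘ₗ
      TensorProduct.map S (LinearMap.mulRight k (Δ b)) with hΨ
  -- the key identity (dagger)
  have dagger : ∀ a b : A, R0 ((1 ⊗ₜ[k] a) * Δ b) = G b (Δ a) := by
    intro a b
    have stepA : Ψ b ∘ₗ LinearMap.lTensor A Δ = G b := by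
      apply TensorProduct.ext'
      intro x y
      have h1 : Δ y * Δ b = Δ (y * b) := (hmul y b).symm
      simp only [hΨ, hG, LinearMap.coe_comp, Function.comp_apply,
        LinearMap.lTensor_tmul, TensorProduct.map_tmul, LinearMap.rTensor_tmul,
        LinearMap.mulRight_apply, hR0t]
      rw [h1, hlam' (y * b)]
      simp [hμ, TensorProduct.tmul_smul, LinearMap.mul'_apply]
    have stepI : ∀ q z : A, R0 ∘ₗ LinearMap.mulLeft k (q ⊗ₜ[k] z) =
        LinearMap.mulLeft k q ∘ₗ R0 ∘ₗ LinearMap.mulLeft k ((1 : A) ⊗ₜ[k] z) := by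
      intro q z
      apply TensorProduct.ext'
      intro u v
      simp [hR0t, Algebra.TensorProduct.tmul_mul_tmul, mul_smul_comm]
    have stepAlpha : ∀ z : A, (Ψ b ∘ₗ (TensorProduct.assoc k A A A).toLinearMap ∘ₗ
        (TensorProduct.mk k (A ⊗[k] A) A).flip z) =
        LinearMap.mulRight k (R0 ((1 ⊗ₜ[k] z) * Δ b)) ∘ₗ μ ∘ₗ LinearMap.rTensor A S := by
      intro z
      apply TensorProduct.ext'
      intro p q
      have h2 := LinearMap.congr_fun (stepI q z) (Δ b)
      simp only [LinearMap.coe_comp, Function.comp_apply, LinearMap.mulLeft_apply] at h2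
      simp only [hΨ, LinearMap.coe_comp, Function.comp_apply, LinearMap.flip_apply,
        TensorProduct.mk_apply, LinearEquiv.coe_coe, TensorProduct.assoc_tmul,
        TensorProduct.map_tmul, LinearMap.lTensor_tmul, LinearMap.rTensor_tmul,
        LinearMap.mulRight_apply, LinearMap.mul'_apply, hμ]
      rw [h2, mul_assoc]
    have stepC : Ψ b ∘ₗ (TensorProduct.assoc k A A A).toLinearMap ∘ₗ LinearMap.rTensor A Δ =
        (R0 ∘ₗ LinearMap.mulRight k (Δ b) ∘ₗ TensorProduct.mk k A A 1) ∘ₗ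
          (TensorProduct.lid k A).toLinearMap ∘ₗ LinearMap.rTensor A ε := by
      apply TensorProduct.ext'
      intro x z
      have h3 := LinearMap.congr_fun (stepAlpha z) (Δ x)
      simp only [LinearMap.coe_comp, Function.comp_apply, LinearMap.flip_apply,
        TensorProduct.mk_apply, LinearMap.mulRight_apply] at h3
      simp only [LinearEquiv.coe_coe] at h3
      simp only [LinearMap.coe_comp, Function.comp_apply, LinearMap.rTensor_tmul,
        LinearEquiv.coe_coe, TensorProduct.mk_apply]
      rw [h3, hanti x]
      simp [TensorProduct.lid_tmul, TensorProduct.tmul_smul, smul_mul_assoc,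
        LinearMap.mulRight_apply]
    -- assemble
    calc R0 ((1 ⊗ₜ[k] a) * Δ b)
        = ((R0 ∘ₗ LinearMap.mulRight k (Δ b) ∘ₗ TensorProduct.mk k A A 1) ∘ₗ
            (TensorProduct.lid k A).toLinearMap ∘ₗ LinearMap.rTensor A ε) (Δ a) := by
          simp only [LinearMap.coe_comp, Function.comp_apply, LinearEquiv.coe_coe]
          rw [hcounit_r a]
          simp [TensorProduct.mk_apply, LinearMap.mulRight_apply]
      _ = (Ψ b ∘ₗ (TensorProduct.assoc k A A A).toLinearMap ∘ₗ LinearMap.rTensor A Δ)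
            (Δ a) := by rw [stepC]
      _ = Ψ b (LinearMap.lTensor A Δ (Δ a)) := by
          simp only [LinearMap.coe_comp, Function.comp_apply, LinearEquiv.coe_coe]
          rw [hco a]
      _ = G b (Δ a) := by simpa using LinearMap.congr_fun stepA (Δ a)
  -- step2: applying a functional to dagger's RHS
  have step2 : ∀ (h : A →ₗ[k] k) (a b : A),
      h (G b (Δ a)) = lam (J (h ∘ₗ S) (Δ a) * b) := by
    intro h a b
    have hcomp : h ∘ₗ G b = lam ∘ₗ LinearMap.mulRight k b ∘ₗ J (h ∘ₗ S) := by
      apply TensorProduct.ext'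
      intro x y
      simp only [LinearMap.coe_comp, Function.comp_apply, hGt, hJt,
        LinearMap.mulRight_apply, map_smul, smul_eq_mul, smul_mul_assoc]
      ring
    simpa using LinearMap.congr_fun hcomp (Δ a)
  -- choose c with lam c = 1
  obtain ⟨x0, hx0⟩ : ∃ x, lam x ≠ 0 := by
    by_contra h
    push_neg at h
    exact hne (LinearMap.ext fun x => h x)
  set c : A := (lam x0)⁻¹ • x0 with hc
  have hlamc : lam c = 1 := by
    rw [hc, map_smul, smul_eq_mul, inv_mul_cancel₀ hx0]
  -- the candidate integral
  let B := Module.finBasis k A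
  set Λ : A := ∑ i, J ((B.coord i) ∘ₗ (S ∘ₗ S)) (Δ (c * B i)) with hΛdef
  have hΛ : ∀ b : A, lam (Λ * b) = ε b := by
    intro b
    have e1 : lam (Λ * b) = ∑ i, lam (J ((B.coord i) ∘ₗ (S ∘ₗ S)) (Δ (c * B i)) * b) := by
      rw [hΛdef, Finset.sum_mul, map_sum]
    have e2 : ∀ i, lam (J ((B.coord i) ∘ₗ (S ∘ₗ S)) (Δ (c * B i)) * b)
        = ((B.coord i) ∘ₗ S) (R0 ((1 ⊗ₜ[k] (c * B i)) * Δ b)) := by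
      intro i
      rw [dagger (c * B i) b]
      rw [step2 ((B.coord i) ∘ₗ S) (c * B i) b, LinearMap.comp_assoc]
    have e3 : (∑ i, ((B.coord i) ∘ₗ S) ∘ₗ R0 ∘ₗ LinearMap.mulLeft k ((1 : A) ⊗ₜ[k] (c * B i)))
        = lam ∘ₗ LinearMap.mulLeft k c ∘ₗ μ ∘ₗ LinearMap.rTensor A S := by
      apply TensorProduct.ext'
      intro u v
      simp only [LinearMap.coe_sum, Finset.sum_apply, LinearMap.coe_comp,
        Function.comp_apply, LinearMap.mulLeft_apply, LinearMap.rTensor_tmul,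
        Algebra.TensorProduct.tmul_mul_tmul, one_mul, hR0t, map_smul, smul_eq_mul, hμ,
        LinearMap.mul'_apply]
      calc ∑ i, lam (c * B i * v) * (B.coord i) (S u)
          = lam (∑ i, c * ((B.coord i) (S u) • B i) * v) := by
            rw [map_sum]
            refine Finset.sum_congr rfl fun i _ => ?_
            have hx : c * ((B.coord i) (S u) • B i) * v
                = (B.coord i) (S u) • (c * B i * v) := by
              rw [mul_smul_comm, smul_mul_assoc]
            rw [hx, map_smul, smul_eq_mul, mul_comm]
        _ = lam (c * S u * v) := by
            have hrepr : (∑ i, (B.coord i) (S u) • B i) = S u := by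
              simpa [Module.Basis.coord_apply] using B.sum_repr (S u)
            rw [← Finset.sum_mul, ← Finset.mul_sum, hrepr]
        _ = lam (c * (S u * v)) := by rw [mul_assoc]
    have e4 := LinearMap.congr_fun e3 (Δ b)
    simp only [LinearMap.coe_sum, Finset.sum_apply, LinearMap.coe_comp,
      Function.comp_apply, LinearMap.mulLeft_apply] at e4
    rw [e1]
    calc ∑ i, lam (J ((B.coord i) ∘ₗ (S ∘ₗ S)) (Δ (c * B i)) * b)
        = ∑ i, ((B.coord i) ∘ₗ S) (R0 ((1 ⊗ₜ[k] (c * B i)) * Δ b)) :=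
          Finset.sum_congr rfl fun i _ => e2 i
      _ = lam (c * μ (LinearMap.rTensor A S (Δ b))) := e4
      _ = ε b := by
          rw [hanti b, mul_smul_comm, mul_one, map_smul, smul_eq_mul, hlamc, mul_one]
  have hΛ1 : lam Λ = 1 := by
    have := hΛ 1
    rwa [mul_one, hcu1] at this
  -- the pairing map
  set Θ : A →ₗ[k] Module.Dual k A :=
    (LinearMap.llcomp k A A k lam) ∘ₗ (LinearMap.mul k A) with hΘ
  have hΘt : ∀ a b : A, Θ a b = lam (a * b) := by
    intro a b
    simp [hΘ, LinearMap.llcomp_apply, LinearMap.mul_apply']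
  have hsurj : Function.Surjective Θ := by
    intro g
    refine ⟨J (g ∘ₗ S) (Δ Λ), ?_⟩
    apply LinearMap.ext
    intro b
    rw [hΘt, ← step2 g Λ b, ← dagger Λ b]
    have h2 : R0 ∘ₗ LinearMap.mulLeft k ((1 : A) ⊗ₜ[k] Λ) =
        (TensorProduct.rid k A).toLinearMap ∘ₗ LinearMap.lTensor A ε := by
      apply TensorProduct.ext'
      intro u v
      simp only [LinearMap.coe_comp, Function.comp_apply, LinearMap.mulLeft_apply,
        Algebra.TensorProduct.tmul_mul_tmul, one_mul, hR0t, LinearMap.lTensor_tmul,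
        LinearEquiv.coe_coe, TensorProduct.rid_tmul, hΛ v]
    have h3 := LinearMap.congr_fun h2 (Δ b)
    simp only [LinearMap.coe_comp, Function.comp_apply, LinearMap.mulLeft_apply,
      LinearEquiv.coe_coe] at h3
    rw [h3, hcounit_l b]
  have hinj : Function.Injective Θ := by
    have hfr : Module.finrank k A = Module.finrank k (Module.Dual k A) :=
      Subspace.dual_finrank_eq.symm
    exact (LinearMap.injective_iff_surjective_of_finrank_eq_finrank hfr).mpr hsurj
  -- Λ is a right integral
  have hri : ∀ a : A, Λ * a = ε a • Λ := by
    intro a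
    apply hinj
    apply LinearMap.ext
    intro b
    rw [hΘt, hΘt, mul_assoc, hΛ (a * b), hcum a b, smul_mul_assoc, map_smul,
      smul_eq_mul, hΛ b]
  refine ⟨Λ, ⟨hri, hΛ1⟩, ?_⟩
  rintro y ⟨hy1, hy2⟩
  apply hinj
  apply LinearMap.ext
  intro b
  rw [hΘt, hΘt]
  have h4 : lam (y * b) = ε b := by
    rw [hy1 b, map_smul, smul_eq_mul, hy2, mul_one]
  rw [h4, hΛ b]
end

section
/- Let A be a Hopf algebra over a field k whose antipode S is bijective, with inverse T = S⁻¹. Let λ : A → k be a left integral in the dual and let Λ ∈ A be a left integral with λ(Λ) = 1. Then for every a ∈ A one has λ(T(Λ₍₁₎) a) · Λ₍₂₎ = a and λ(a Λ₍₂₎) · T(Λ₍₁₎) = a (implicit summation over the Sweedler components of Δ(Λ) understood). In other words, the element U_λ = Λ₍₂₎ ⊗ S⁻¹(Λ₍₁₎) ∈ A ⊗ A satisfies the two characterizing properties of the canonical element of the non-degenerate form ⟨a, b⟩_λ = λ(ab). -/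
open scoped TensorProduct
open Coalgebra

namespace HopfAux
variable {k A B : Type*} [CommRing k] [Ring A] [HopfAlgebra k A] [Ring B] [Algebra k B]

noncomputable def conv (f g : A →ₗ[k] B) : A →ₗ[k] B :=
  LinearMap.mul' k B ∘ₗ TensorProduct.map f g ∘ₗ Coalgebra.comul

noncomputable def cunit : A →ₗ[k] B := Algebra.linearMap k B ∘ₗ Coalgebra.counit

lemma conv_repr (f g : A →ₗ[k] B) {x : A} {ι : Type*} (r : Coalgebra.Repr k x ι) :
    conv f g x = ∑ i ∈ r.index, f (r.left i) * g (r.right i) := by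
  simp [conv, ← r.eq, map_sum]

lemma sum_counit_smul {x : A} {ι : Type*} (r : Coalgebra.Repr k x ι) :
    ∑ i ∈ r.index, Coalgebra.counit (R := k) (r.left i) • r.right i = x := by
  have := congrArg (TensorProduct.lid k A) (Coalgebra.sum_counit_tmul_eq r)
  simp only [map_sum, TensorProduct.lid_tmul, one_smul] at this
  exact this

lemma sum_smul_counit {x : A} {ι : Type*} (r : Coalgebra.Repr k x ι) :
    ∑ i ∈ r.index, Coalgebra.counit (R := k) (r.right i) • r.left i = x := by
  have := congrArg (TensorProduct.rid k A) (Coalgebra.sum_tmul_counit_eq r)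
  simp only [map_sum, TensorProduct.rid_tmul, one_smul] at this
  exact this

lemma cunit_apply (x : A) : (cunit (k := k) (A := A) (B := B)) x
    = Coalgebra.counit (R := k) x • 1 := by
  simp [cunit, Algebra.smul_def]

lemma conv_cunit_left (f : A →ₗ[k] B) : conv cunit f = f := by
  ext x
  rw [conv_repr _ _ (ℛ k x)]
  simp only [cunit_apply, smul_mul_assoc, one_mul]
  have := congrArg f (sum_counit_smul (ℛ k x))
  rw [map_sum] at this
  simpa [map_smul] using this

lemma conv_cunit_right (f : A →ₗ[k] B) : conv f cunit = f := by
  ext x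
  rw [conv_repr _ _ (ℛ k x)]
  simp only [cunit_apply, mul_smul_comm, mul_one]
  have := congrArg f (sum_smul_counit (ℛ k x))
  rw [map_sum] at this
  simpa [map_smul] using this

lemma conv_assoc (f g h : A →ₗ[k] B) : conv (conv f g) h = conv f (conv g h) := by
  ext x
  set r := ℛ k x
  set r₁ : (i : r.ι) → Coalgebra.Repr k (r.left i) (A × A) := fun i => ℛ k (r.left i)
  set r₂ : (i : r.ι) → Coalgebra.Repr k (r.right i) (A × A) := fun i => ℛ k (r.right i)
  have key := Coalgebra.sum_map_tmul_tmul_eq f g h x (repr := r) (a₁ := r₁) (a₂ := r₂)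
  have := congrArg (LinearMap.mul' k B ∘ₗ LinearMap.lTensor B (LinearMap.mul' k B)) key
  simp only [map_sum, LinearMap.comp_apply, LinearMap.lTensor_tmul, LinearMap.mul'_apply] at this
  rw [conv_repr _ _ r, conv_repr _ _ r]
  calc ∑ i ∈ r.index, conv f g (r.left i) * h (r.right i)
      = ∑ i ∈ r.index, ∑ j ∈ (r₁ i).index,
          f ((r₁ i).left j) * (g ((r₁ i).right j) * h (r.right i)) := by
        refine Finset.sum_congr rfl fun i _ => ?_
        rw [conv_repr _ _ (r₁ i), Finset.sum_mul]
        simp [mul_assoc]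
    _ = ∑ i ∈ r.index, ∑ j ∈ (r₂ i).index,
          f (r.left i) * (g ((r₂ i).left j) * h ((r₂ i).right j)) := this.symm
    _ = ∑ i ∈ r.index, f (r.left i) * conv g h (r.right i) := by
        refine Finset.sum_congr rfl fun i _ => ?_
        rw [conv_repr _ _ (r₂ i), Finset.mul_sum]

lemma conv_unique (f g h : A →ₗ[k] B) (h1 : conv g f = cunit) (h2 : conv f h = cunit) :
    g = h := by
  have := conv_assoc g f h
  rw [h1, conv_cunit_left, h2, conv_cunit_right] at this
  exact this.symm


variable {k A : Type*} [CommRing k] [Ring A] [HopfAlgebra k A]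
local notation "S" => HopfAlgebra.antipode (R := k) (A := A)
local notation "ε" => Coalgebra.counit (R := k) (A := A)


lemma antipode_one : S 1 = (1 : A) := by
  have := HopfAlgebra.mul_antipode_rTensor_comul_apply (R := k) (A := A) (a := 1)
  rw [Bialgebra.comul_one] at this
  rw [Algebra.TensorProduct.one_def] at this
  simpa using this

lemma counit_antipode (x : A) :
    Coalgebra.counit (R := k) (S x) = Coalgebra.counit (R := k) x := by
  have h := HopfAlgebra.sum_antipode_mul_eq_smul (R := k) (ℛ k x)
  have h2 := congrArg (Coalgebra.counit (R := k)) h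
  simp only [map_sum, Bialgebra.counit_mul, map_smul, Bialgebra.counit_one, smul_eq_mul,
    mul_one] at h2
  calc Coalgebra.counit (R := k) (S x)
      = Coalgebra.counit (R := k) (S (∑ i ∈ (ℛ k x).index,
          Coalgebra.counit (R := k) ((ℛ k x).right i) • (ℛ k x).left i)) := by
        rw [sum_smul_counit]
    _ = ∑ i ∈ (ℛ k x).index, Coalgebra.counit (R := k) (S ((ℛ k x).left i)) *
          Coalgebra.counit (R := k) ((ℛ k x).right i) := by
        simp [map_sum, map_smul, mul_comm, smul_eq_mul]
    _ = Coalgebra.counit (R := k) x := h2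

/-- product representation: `comul (x*y) = comul x * comul y` as a `Repr`. -/
noncomputable def mulRepr {x y : A} {ι₁ ι₂ : Type*} (r1 : Coalgebra.Repr k x ι₁)
    (r2 : Coalgebra.Repr k y ι₂) :
    Coalgebra.Repr k (x * y) (ι₁ × ι₂) where
  index := r1.index ×ˢ r2.index
  left := fun p => r1.left p.1 * r2.left p.2
  right := fun p => r1.right p.1 * r2.right p.2
  eq := by
    rw [Bialgebra.comul_mul, ← r1.eq, ← r2.eq, Finset.sum_mul_sum]
    rw [Finset.sum_product]
    simp [Algebra.TensorProduct.tmul_mul_tmul]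

@[simp] lemma mulRepr_index {x y : A} {ι₁ ι₂ : Type*} (r1 : Coalgebra.Repr k x ι₁) (r2 : Coalgebra.Repr k y ι₂) :
    (mulRepr r1 r2).index = r1.index ×ˢ r2.index := rfl
@[simp] lemma mulRepr_left {x y : A} {ι₁ ι₂ : Type*} (r1 : Coalgebra.Repr k x ι₁) (r2 : Coalgebra.Repr k y ι₂) (p) :
    (mulRepr r1 r2).left p = r1.left p.1 * r2.left p.2 := rfl
@[simp] lemma mulRepr_right {x y : A} {ι₁ ι₂ : Type*} (r1 : Coalgebra.Repr k x ι₁) (r2 : Coalgebra.Repr k y ι₂) (p) :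
    (mulRepr r1 r2).right p = r1.right p.1 * r2.right p.2 := rfl

noncomputable def T3 (f g h : A →ₗ[k] A) : A ⊗[k] (A ⊗[k] A) →ₗ[k] A :=
  LinearMap.mul' k A ∘ₗ TensorProduct.map f (LinearMap.mul' k A ∘ₗ TensorProduct.map g h)

@[simp] lemma T3_tmul (f g h : A →ₗ[k] A) (x y z : A) :
    T3 f g h (x ⊗ₜ[k] (y ⊗ₜ[k] z)) = f x * (g y * h z) := by
  simp [T3]


lemma coassoc_swap {M : Type*} [AddCommMonoid M] [Module k M]
    (Φ : A ⊗[k] (A ⊗[k] A) →ₗ[k] M) {x : A} {ι κ₁ κ₂ : Type*} (r : Coalgebra.Repr k x ι)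
    (rL : (i : r.ι) → Coalgebra.Repr k (r.left i) κ₁)
    (rR : (i : r.ι) → Coalgebra.Repr k (r.right i) κ₂) :
    ∑ i ∈ r.index, ∑ m ∈ (rR i).index,
      Φ (r.left i ⊗ₜ[k] ((rR i).left m ⊗ₜ[k] (rR i).right m))
    = ∑ i ∈ r.index, ∑ m ∈ (rL i).index,
      Φ ((rL i).left m ⊗ₜ[k] ((rL i).right m ⊗ₜ[k] r.right i)) := by
  have key := Coalgebra.sum_tmul_tmul_eq r rL rR
  have h2 := congrArg Φ key
  simp only [map_sum] at h2
  exact h2.symm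

lemma sum_swap4 {α γ M : Type*} {β : α → Type*} {δ : γ → Type*} [AddCommMonoid M]
    (s : Finset α) (t : ∀ a, Finset (β a)) (u : Finset γ) (v : ∀ c, Finset (δ c))
    (F : ∀ a, β a → ∀ c, δ c → M) :
    ∑ i ∈ s, ∑ m ∈ t i, ∑ j ∈ u, ∑ n ∈ v j, F i m j n
    = ∑ j ∈ u, ∑ n ∈ v j, ∑ i ∈ s, ∑ m ∈ t i, F i m j n := by
  calc ∑ i ∈ s, ∑ m ∈ t i, ∑ j ∈ u, ∑ n ∈ v j, F i m j n
      = ∑ i ∈ s, ∑ j ∈ u, ∑ m ∈ t i, ∑ n ∈ v j, F i m j n :=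
        Finset.sum_congr rfl fun i _ => Finset.sum_comm
    _ = ∑ j ∈ u, ∑ i ∈ s, ∑ m ∈ t i, ∑ n ∈ v j, F i m j n := Finset.sum_comm
    _ = ∑ j ∈ u, ∑ i ∈ s, ∑ n ∈ v j, ∑ m ∈ t i, F i m j n :=
        Finset.sum_congr rfl fun j _ => Finset.sum_congr rfl fun i _ => Finset.sum_comm
    _ = ∑ j ∈ u, ∑ n ∈ v j, ∑ i ∈ s, ∑ m ∈ t i, F i m j n :=
        Finset.sum_congr rfl fun j _ => Finset.sum_comm

set_option maxHeartbeats 1000000 in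
lemma antipode_mul (a b : A) : S (a * b) = S b * S a := by
  classical
  set ra := ℛ k a with hra
  set rb := ℛ k b with hrb
  set raL : (i : ra.ι) → Coalgebra.Repr k (ra.left i) (A × A) := fun i => ℛ k (ra.left i) with hraL
  set raR : (i : ra.ι) → Coalgebra.Repr k (ra.right i) (A × A) := fun i => ℛ k (ra.right i) with hraR
  set rbL : (j : rb.ι) → Coalgebra.Repr k (rb.left j) (A × A) := fun j => ℛ k (rb.left j) with hrbL
  set rbR : (j : rb.ι) → Coalgebra.Repr k (rb.right j) (A × A) := fun j => ℛ k (rb.right j) with hrbR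
  set M : A := ∑ i ∈ ra.index, ∑ m ∈ (raR i).index, ∑ j ∈ rb.index, ∑ n ∈ (rbR j).index,
      S (ra.left i * rb.left j) *
        ((raR i).left m * (((rbR j).left n * S ((rbR j).right n)) * S ((raR i).right m)))
    with hM
  have hA : M = S (a * b) := by
    calc M = ∑ i ∈ ra.index, ∑ m ∈ (raR i).index, ∑ j ∈ rb.index,
          ε (rb.right j) • (S (ra.left i * rb.left j) * ((raR i).left m * S ((raR i).right m)))
        := by
          refine Finset.sum_congr rfl fun i _ => Finset.sum_congr rfl fun m _ =>
            Finset.sum_congr rfl fun j _ => ?_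
          rw [← Finset.mul_sum]
          rw [show (∑ n ∈ (rbR j).index,
              (raR i).left m * (((rbR j).left n * S ((rbR j).right n)) * S ((raR i).right m)))
            = (raR i).left m * ((∑ n ∈ (rbR j).index,
                (rbR j).left n * S ((rbR j).right n)) * S ((raR i).right m)) by
            rw [Finset.sum_mul, Finset.mul_sum]]
          rw [HopfAlgebra.sum_mul_antipode_eq_smul (rbR j)]
          simp [smul_mul_assoc, mul_smul_comm]
      _ = ∑ i ∈ ra.index, ∑ m ∈ (raR i).index,
          S (ra.left i * b) * ((raR i).left m * S ((raR i).right m)) := by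
          refine Finset.sum_congr rfl fun i _ => Finset.sum_congr rfl fun m _ => ?_
          have := congrArg
            ((LinearMap.mulRight k ((raR i).left m * S ((raR i).right m))) ∘ₗ
              (HopfAlgebra.antipode (R := k) (A := A)) ∘ₗ (LinearMap.mulLeft k (ra.left i)))
            (sum_smul_counit rb)
          rw [map_sum] at this
          simpa [map_smul, mul_smul_comm, smul_mul_assoc, mul_assoc] using this
      _ = ∑ i ∈ ra.index, ε (ra.right i) • S (ra.left i * b) := by
          refine Finset.sum_congr rfl fun i _ => ?_
          rw [← Finset.mul_sum, HopfAlgebra.sum_mul_antipode_eq_smul (raR i)]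
          simp [mul_smul_comm]
      _ = S (a * b) := by
          have := congrArg
            ((HopfAlgebra.antipode (R := k) (A := A)) ∘ₗ (LinearMap.mulRight k b))
            (sum_smul_counit ra)
          rw [map_sum] at this
          simpa [map_smul] using this
  have hB : M = S b * S a := by
    set Φ : A ⊗[k] (A ⊗[k] A) →ₗ[k] A :=
      ∑ j ∈ rb.index, ∑ n ∈ (rbR j).index,
        T3 ((HopfAlgebra.antipode (R := k) (A := A)) ∘ₗ LinearMap.mulRight k (rb.left j))
          LinearMap.id
          (LinearMap.mulLeft k ((rbR j).left n * S ((rbR j).right n)) ∘ₗ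
            (HopfAlgebra.antipode (R := k) (A := A))) with hΦ
    have hΦ_tmul : ∀ x y z : A, Φ (x ⊗ₜ[k] (y ⊗ₜ[k] z)) =
        ∑ j ∈ rb.index, ∑ n ∈ (rbR j).index,
          S (x * rb.left j) * (y * (((rbR j).left n * S ((rbR j).right n)) * S z)) := by
      intro x y z
      rw [hΦ]
      simp [LinearMap.sum_apply, T3_tmul, mul_assoc]
    have B1 : M = ∑ i ∈ ra.index, ∑ m ∈ (raL i).index, ∑ j ∈ rb.index, ∑ n ∈ (rbR j).index,
        S ((raL i).left m * rb.left j) *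
          ((raL i).right m * (((rbR j).left n * S ((rbR j).right n)) * S (ra.right i))) := by
      calc M = ∑ i ∈ ra.index, ∑ m ∈ (raR i).index,
            Φ (ra.left i ⊗ₜ[k] ((raR i).left m ⊗ₜ[k] (raR i).right m)) := by
            rw [hM]
            refine Finset.sum_congr rfl fun i _ => Finset.sum_congr rfl fun m _ => ?_
            rw [hΦ_tmul]
        _ = ∑ i ∈ ra.index, ∑ m ∈ (raL i).index,
            Φ ((raL i).left m ⊗ₜ[k] ((raL i).right m ⊗ₜ[k] ra.right i)) :=
            coassoc_swap Φ ra raL raR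
        _ = _ := by
            refine Finset.sum_congr rfl fun i _ => Finset.sum_congr rfl fun m _ => ?_
            rw [hΦ_tmul]
    set Ψ : A ⊗[k] (A ⊗[k] A) →ₗ[k] A :=
      ∑ i ∈ ra.index, ∑ m ∈ (raL i).index,
        T3 ((HopfAlgebra.antipode (R := k) (A := A)) ∘ₗ LinearMap.mulLeft k ((raL i).left m))
          (LinearMap.mulLeft k ((raL i).right m))
          (LinearMap.mulRight k (S (ra.right i)) ∘ₗ
            (HopfAlgebra.antipode (R := k) (A := A))) with hΨ
    have hΨ_tmul : ∀ x y z : A, Ψ (x ⊗ₜ[k] (y ⊗ₜ[k] z)) =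
        ∑ i ∈ ra.index, ∑ m ∈ (raL i).index,
          S ((raL i).left m * x) * (((raL i).right m * y) * (S z * S (ra.right i))) := by
      intro x y z
      rw [hΨ]
      simp [LinearMap.sum_apply, T3_tmul]
    have B2 : M = ∑ j ∈ rb.index, ∑ p ∈ (rbL j).index, ∑ i ∈ ra.index, ∑ m ∈ (raL i).index,
        S ((raL i).left m * (rbL j).left p) *
          (((raL i).right m * (rbL j).right p) * (S (rb.right j) * S (ra.right i))) := by
      calc M = ∑ j ∈ rb.index, ∑ n ∈ (rbR j).index, ∑ i ∈ ra.index, ∑ m ∈ (raL i).index,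
            S ((raL i).left m * rb.left j) *
              ((raL i).right m * (((rbR j).left n * S ((rbR j).right n)) * S (ra.right i)))
          := by rw [B1]; exact sum_swap4 _ _ _ _ _
        _ = ∑ j ∈ rb.index, ∑ n ∈ (rbR j).index,
            Ψ (rb.left j ⊗ₜ[k] ((rbR j).left n ⊗ₜ[k] (rbR j).right n)) := by
            refine Finset.sum_congr rfl fun j _ => Finset.sum_congr rfl fun n _ => ?_
            rw [hΨ_tmul]
            refine Finset.sum_congr rfl fun i _ => Finset.sum_congr rfl fun m _ => ?_
            simp [mul_assoc]
        _ = ∑ j ∈ rb.index, ∑ p ∈ (rbL j).index,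
            Ψ ((rbL j).left p ⊗ₜ[k] ((rbL j).right p ⊗ₜ[k] rb.right j)) :=
            coassoc_swap Ψ rb rbL rbR
        _ = _ := by
            refine Finset.sum_congr rfl fun j _ => Finset.sum_congr rfl fun p _ => ?_
            rw [hΨ_tmul]
    rw [B2]
    calc ∑ j ∈ rb.index, ∑ p ∈ (rbL j).index, ∑ i ∈ ra.index, ∑ m ∈ (raL i).index,
          S ((raL i).left m * (rbL j).left p) *
            (((raL i).right m * (rbL j).right p) * (S (rb.right j) * S (ra.right i)))
        = ∑ j ∈ rb.index, ∑ i ∈ ra.index, ∑ m ∈ (raL i).index, ∑ p ∈ (rbL j).index,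
          S ((raL i).left m * (rbL j).left p) *
            (((raL i).right m * (rbL j).right p) * (S (rb.right j) * S (ra.right i))) := by
          refine Finset.sum_congr rfl fun j _ => ?_
          calc ∑ p ∈ (rbL j).index, ∑ i ∈ ra.index, ∑ m ∈ (raL i).index, _
              = ∑ i ∈ ra.index, ∑ p ∈ (rbL j).index, ∑ m ∈ (raL i).index, _ := Finset.sum_comm
            _ = ∑ i ∈ ra.index, ∑ m ∈ (raL i).index, ∑ p ∈ (rbL j).index, _ :=
                Finset.sum_congr rfl fun i _ => Finset.sum_comm
      _ = ∑ j ∈ rb.index, ∑ i ∈ ra.index,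
            (ε (ra.left i) * ε (rb.left j)) • (S (rb.right j) * S (ra.right i)) := by
          refine Finset.sum_congr rfl fun j _ => Finset.sum_congr rfl fun i _ => ?_
          have hcontr : ∑ m ∈ (raL i).index, ∑ p ∈ (rbL j).index,
              S ((raL i).left m * (rbL j).left p) * ((raL i).right m * (rbL j).right p)
              = ε (ra.left i * rb.left j) • (1 : A) := by
            have h0 := HopfAlgebra.sum_antipode_mul_eq_smul (R := k)
              (mulRepr (raL i) (rbL j))
            rw [← Finset.sum_product']
            exact h0
          calc ∑ m ∈ (raL i).index, ∑ p ∈ (rbL j).index,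
                S ((raL i).left m * (rbL j).left p) *
                  (((raL i).right m * (rbL j).right p) * (S (rb.right j) * S (ra.right i)))
              = (∑ m ∈ (raL i).index, ∑ p ∈ (rbL j).index,
                  S ((raL i).left m * (rbL j).left p) *
                    ((raL i).right m * (rbL j).right p)) * (S (rb.right j) * S (ra.right i))
                := by
                  rw [Finset.sum_mul]
                  refine Finset.sum_congr rfl fun m _ => ?_
                  rw [Finset.sum_mul]
                  refine Finset.sum_congr rfl fun p _ => ?_
                  simp [mul_assoc]
            _ = (ε (ra.left i * rb.left j) • (1 : A)) * (S (rb.right j) * S (ra.right i)) := by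
                  rw [hcontr]
            _ = (ε (ra.left i) * ε (rb.left j)) • (S (rb.right j) * S (ra.right i)) := by
                  rw [Bialgebra.counit_mul]
                  simp [smul_mul_assoc]
      _ = S b * S a := by
          have ha : ∑ i ∈ ra.index, ε (ra.left i) • S (ra.right i) = S a := by
            have := congrArg (HopfAlgebra.antipode (R := k) (A := A)) (sum_counit_smul ra)
            rw [map_sum] at this
            simpa [map_smul] using this
          have hb : ∑ j ∈ rb.index, ε (rb.left j) • S (rb.right j) = S b := by
            have := congrArg (HopfAlgebra.antipode (R := k) (A := A)) (sum_counit_smul rb)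
            rw [map_sum] at this
            simpa [map_smul] using this
          calc ∑ j ∈ rb.index, ∑ i ∈ ra.index,
                (ε (ra.left i) * ε (rb.left j)) • (S (rb.right j) * S (ra.right i))
              = ∑ j ∈ rb.index, ε (rb.left j) •
                  (S (rb.right j) * ∑ i ∈ ra.index, ε (ra.left i) • S (ra.right i)) := by
                refine Finset.sum_congr rfl fun j _ => ?_
                rw [Finset.mul_sum, Finset.smul_sum]
                refine Finset.sum_congr rfl fun i _ => ?_
                rw [mul_smul_comm, mul_comm (ε (ra.left i)) (ε (rb.left j)), mul_smul]
            _ = ∑ j ∈ rb.index, ε (rb.left j) • (S (rb.right j) * S a) := by rw [ha]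
            _ = (∑ j ∈ rb.index, ε (rb.left j) • S (rb.right j)) * S a := by
                rw [Finset.sum_mul]
                exact Finset.sum_congr rfl fun j _ => by rw [smul_mul_assoc]
            _ = S b * S a := by rw [hb]
  rw [← hA, hB]


set_option maxHeartbeats 1000000 in
lemma conv_comul_antipode_left :
    conv ((Coalgebra.comul (R := k) (A := A)) ∘ₗ (HopfAlgebra.antipode (R := k) (A := A)))
      (Coalgebra.comul (R := k) (A := A)) = cunit := by
  ext x
  rw [conv_repr _ _ (ℛ k x)]
  have : ∀ i ∈ (ℛ k x).index,
      ((Coalgebra.comul (R := k) (A := A)) ∘ₗ (HopfAlgebra.antipode (R := k) (A := A)))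
          ((ℛ k x).left i) * (Coalgebra.comul (R := k) (A := A)) ((ℛ k x).right i)
        = Coalgebra.comul (R := k) (S ((ℛ k x).left i) * (ℛ k x).right i) := by
    intro i _
    simp [Bialgebra.comul_mul]
  rw [Finset.sum_congr rfl this, ← map_sum,
    HopfAlgebra.sum_antipode_mul_eq_smul (ℛ k x)]
  simp [cunit_apply]

set_option maxHeartbeats 1000000 in
lemma conv_comul_antipode_right :
    conv (Coalgebra.comul (R := k) (A := A))
      (TensorProduct.map (HopfAlgebra.antipode (R := k) (A := A))
          (HopfAlgebra.antipode (R := k) (A := A)) ∘ₗ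
        (TensorProduct.comm k A A).toLinearMap ∘ₗ (Coalgebra.comul (R := k) (A := A)))
    = cunit := by
  ext x
  set r := ℛ k x with hr
  set rL : (i : r.ι) → Coalgebra.Repr k (r.left i) (A × A) := fun i => ℛ k (r.left i) with hrL
  set rR : (i : r.ι) → Coalgebra.Repr k (r.right i) (A × A) := fun i => ℛ k (r.right i) with hrR
  set Ψ0 : A ⊗[k] (A ⊗[k] A) →ₗ[k] A ⊗[k] A :=
    LinearMap.mul' k (A ⊗[k] A) ∘ₗ
      TensorProduct.map (Coalgebra.comul (R := k) (A := A))
        (TensorProduct.map (HopfAlgebra.antipode (R := k) (A := A))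
            (HopfAlgebra.antipode (R := k) (A := A)) ∘ₗ
          (TensorProduct.comm k A A).toLinearMap) with hΨ0
  have hΨ0_tmul : ∀ u v w : A, Ψ0 (u ⊗ₜ[k] (v ⊗ₜ[k] w)) =
      Coalgebra.comul (R := k) u * (S w ⊗ₜ[k] S v) := by
    intro u v w; simp [hΨ0]
  have step1 : conv (Coalgebra.comul (R := k) (A := A))
      (TensorProduct.map (HopfAlgebra.antipode (R := k) (A := A))
          (HopfAlgebra.antipode (R := k) (A := A)) ∘ₗ
        (TensorProduct.comm k A A).toLinearMap ∘ₗ (Coalgebra.comul (R := k) (A := A))) x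
      = ∑ i ∈ r.index, ∑ n ∈ (rR i).index,
          Ψ0 (r.left i ⊗ₜ[k] ((rR i).left n ⊗ₜ[k] (rR i).right n)) := by
    rw [conv_repr _ _ r]
    refine Finset.sum_congr rfl fun i _ => ?_
    simp only [LinearMap.comp_apply, LinearEquiv.coe_coe]
    rw [show (Coalgebra.comul (R := k) ((r.right i) : A)) = ∑ n ∈ (rR i).index,
        (rR i).left n ⊗ₜ[k] (rR i).right n from ((rR i).eq).symm]
    rw [map_sum, map_sum, Finset.mul_sum]
    refine Finset.sum_congr rfl fun n _ => ?_
    rw [hΨ0_tmul]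
    simp
  rw [step1, coassoc_swap Ψ0 r rL rR]
  have step2 : ∀ i ∈ r.index, ∑ m ∈ (rL i).index,
      Ψ0 ((rL i).left m ⊗ₜ[k] ((rL i).right m ⊗ₜ[k] r.right i))
      = (r.left i * S (r.right i)) ⊗ₜ[k] (1 : A) := by
    intro i _
    set c := S (r.right i) with hc
    set Φc : A ⊗[k] (A ⊗[k] A) →ₗ[k] A ⊗[k] A :=
      TensorProduct.map (LinearMap.mulRight k c)
        (LinearMap.mul' k A ∘ₗ TensorProduct.map LinearMap.id
          (HopfAlgebra.antipode (R := k) (A := A))) with hΦc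
    have hΦc_tmul : ∀ u v w : A, Φc (u ⊗ₜ[k] (v ⊗ₜ[k] w)) = (u * c) ⊗ₜ[k] (v * S w) := by
      intro u v w; simp [hΦc]
    set rLL : (m : (rL i).ι) → Coalgebra.Repr k ((rL i).left m) (A × A) :=
      fun m => ℛ k ((rL i).left m) with hrLL
    set rLR : (m : (rL i).ι) → Coalgebra.Repr k ((rL i).right m) (A × A) :=
      fun m => ℛ k ((rL i).right m) with hrLR
    calc ∑ m ∈ (rL i).index, Ψ0 ((rL i).left m ⊗ₜ[k] ((rL i).right m ⊗ₜ[k] r.right i))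
        = ∑ m ∈ (rL i).index, ∑ p ∈ (rLL m).index,
            Φc ((rLL m).left p ⊗ₜ[k] ((rLL m).right p ⊗ₜ[k] (rL i).right m)) := by
          refine Finset.sum_congr rfl fun m _ => ?_
          rw [hΨ0_tmul]
          rw [show (Coalgebra.comul (R := k) (((rL i).left m) : A)) = ∑ p ∈ (rLL m).index,
              (rLL m).left p ⊗ₜ[k] (rLL m).right p from ((rLL m).eq).symm]
          rw [Finset.sum_mul]
          refine Finset.sum_congr rfl fun p _ => ?_
          rw [hΦc_tmul]
          simp [Algebra.TensorProduct.tmul_mul_tmul, hc]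
      _ = ∑ m ∈ (rL i).index, ∑ p ∈ (rLR m).index,
            Φc ((rL i).left m ⊗ₜ[k] ((rLR m).left p ⊗ₜ[k] (rLR m).right p)) :=
          (coassoc_swap Φc (rL i) rLL rLR).symm
      _ = ∑ m ∈ (rL i).index,
            Coalgebra.counit (R := k) ((rL i).right m) • (((rL i).left m * c) ⊗ₜ[k] (1 : A)) := by
          refine Finset.sum_congr rfl fun m _ => ?_
          have : ∑ p ∈ (rLR m).index, Φc ((rL i).left m ⊗ₜ[k] ((rLR m).left p ⊗ₜ[k] (rLR m).right p))
              = ((rL i).left m * c) ⊗ₜ[k]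
                  (∑ p ∈ (rLR m).index, (rLR m).left p * S ((rLR m).right p)) := by
            rw [TensorProduct.tmul_sum]
            exact Finset.sum_congr rfl fun p _ => hΦc_tmul _ _ _
          rw [this, HopfAlgebra.sum_mul_antipode_eq_smul (rLR m)]
          rw [TensorProduct.tmul_smul]
      _ = (r.left i * c) ⊗ₜ[k] (1 : A) := by
          have h1 : ∀ m : (rL i).ι,
              Coalgebra.counit (R := k) ((rL i).right m) • (((rL i).left m * c) ⊗ₜ[k] (1 : A))
              = ((Coalgebra.counit (R := k) ((rL i).right m) • (rL i).left m) * c) ⊗ₜ[k] (1 : A) := by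
            intro m; rw [smul_mul_assoc, ← TensorProduct.smul_tmul']
          simp only [h1]
          rw [← TensorProduct.sum_tmul, ← Finset.sum_mul, sum_smul_counit (rL i)]
  rw [Finset.sum_congr rfl step2, ← TensorProduct.sum_tmul,
    HopfAlgebra.sum_mul_antipode_eq_smul r]
  simp [cunit_apply, Algebra.TensorProduct.one_def, TensorProduct.smul_tmul']

lemma comul_antipode (x : A) :
    Coalgebra.comul (R := k) (S x)
      = TensorProduct.map (HopfAlgebra.antipode (R := k) (A := A))
          (HopfAlgebra.antipode (R := k) (A := A))
          ((TensorProduct.comm k A A) (Coalgebra.comul (R := k) x)) := by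
  have := conv_unique (B := A ⊗[k] A) (Coalgebra.comul (R := k) (A := A))
    ((Coalgebra.comul (R := k) (A := A)) ∘ₗ (HopfAlgebra.antipode (R := k) (A := A)))
    (TensorProduct.map (HopfAlgebra.antipode (R := k) (A := A))
        (HopfAlgebra.antipode (R := k) (A := A)) ∘ₗ
      (TensorProduct.comm k A A).toLinearMap ∘ₗ (Coalgebra.comul (R := k) (A := A)))
    conv_comul_antipode_left conv_comul_antipode_right
  exact DFunLike.congr_fun this x


section Tinv
variable (Tl : A →ₗ[k] A)
  (hTS : ∀ a : A, Tl (HopfAlgebra.antipode (R := k) a) = a)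
  (hST : ∀ a : A, HopfAlgebra.antipode (R := k) (Tl a) = a)

include hTS hST

lemma S_inj : Function.Injective (HopfAlgebra.antipode (R := k) (A := A)) := by
  intro u v huv
  have := congrArg Tl huv
  rwa [hTS, hTS] at this

lemma Tl_mul (x y : A) : Tl (x * y) = Tl y * Tl x := by
  apply S_inj Tl hTS hST
  rw [hST, antipode_mul, hST, hST]

lemma counit_Tl (x : A) : ε (Tl x) = ε x := by
  conv_rhs => rw [← hST x]
  rw [counit_antipode]

lemma Tl_cop {y : A} {ι : Type*} (r : Coalgebra.Repr k y ι) :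
    ∑ i ∈ r.index, Tl (r.right i) * r.left i = ε y • (1 : A) := by
  apply S_inj Tl hTS hST
  rw [map_sum, map_smul, antipode_one]
  calc ∑ i ∈ r.index, S (Tl (r.right i) * r.left i)
      = ∑ i ∈ r.index, S (r.left i) * r.right i := by
        refine Finset.sum_congr rfl fun i _ => ?_
        rw [antipode_mul, hST]
    _ = ε y • (1 : A) := HopfAlgebra.sum_antipode_mul_eq_smul r

end Tinv

noncomputable def Pmap (lam : A →ₗ[k] k) {Λ : A} {ιΛ : Type*} (rΛ : Coalgebra.Repr k Λ ιΛ) : A →ₗ[k] A :=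
  ∑ i ∈ rΛ.index, (LinearMap.toSpanSingleton k A (rΛ.left i)) ∘ₗ lam ∘ₗ
    LinearMap.mulRight k (rΛ.right i)

lemma Pmap_apply (lam : A →ₗ[k] k) {Λ : A} {ιΛ : Type*} (rΛ : Coalgebra.Repr k Λ ιΛ) (z : A) :
    Pmap lam rΛ z = ∑ i ∈ rΛ.index, lam (z * rΛ.right i) • rΛ.left i := by
  simp [Pmap, LinearMap.sum_apply, LinearMap.toSpanSingleton_apply]

section Integral
variable (Tl : A →ₗ[k] A)
  (hTS : ∀ a : A, Tl (HopfAlgebra.antipode (R := k) a) = a)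
  (hST : ∀ a : A, HopfAlgebra.antipode (R := k) (Tl a) = a)
  (lam : A →ₗ[k] k)
  (hlam : ∀ a : A, (TensorProduct.rid k A)
      ((LinearMap.lTensor A lam) (Coalgebra.comul (R := k) a)) = lam a • 1)
  (Λ : A) (hΛ : ∀ a : A, a * Λ = Coalgebra.counit (R := k) a • Λ)
  (hΛ1 : lam Λ = 1)
  {ιΛ : Type*} (rΛ : Coalgebra.Repr k Λ ιΛ)

include hlam in
lemma qmap_eq (y : A) {ι : Type*} {ry : Coalgebra.Repr k y ι} :
    lam (y * Λ) • (1 : A) = ∑ m ∈ ry.index, ry.left m * Pmap lam rΛ (ry.right m) := by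
  rw [← hlam (y * Λ)]
  calc (TensorProduct.rid k A) ((LinearMap.lTensor A lam) (Coalgebra.comul (R := k) (y * Λ)))
      = ∑ p ∈ ry.index ×ˢ rΛ.index,
          lam (ry.right p.1 * rΛ.right p.2) • (ry.left p.1 * rΛ.left p.2) := by
        rw [show Coalgebra.comul (R := k) (y * Λ) = ∑ p ∈ (mulRepr ry rΛ).index,
            (mulRepr ry rΛ).left p ⊗ₜ[k] (mulRepr ry rΛ).right p from (mulRepr ry rΛ).eq.symm]
        rw [map_sum, map_sum]
        exact Finset.sum_congr rfl fun p _ => by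
          simp [mulRepr, LinearMap.lTensor_tmul, TensorProduct.rid_tmul]
    _ = ∑ m ∈ ry.index, ∑ i ∈ rΛ.index,
          lam (ry.right m * rΛ.right i) • (ry.left m * rΛ.left i) := Finset.sum_product _ _ _
    _ = ∑ m ∈ ry.index, ry.left m * Pmap lam rΛ (ry.right m) := by
        refine Finset.sum_congr rfl fun m _ => ?_
        rw [Pmap_apply, Finset.mul_sum]
        exact Finset.sum_congr rfl fun i _ => (mul_smul_comm _ _ _).symm

include hTS hST hlam hΛ hΛ1 in
lemma claim2_core (a : A) :
    ∑ i ∈ rΛ.index, lam (a * rΛ.right i) • rΛ.left i = HopfAlgebra.antipode (R := k) a := by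
  rw [← Pmap_apply]
  set r := ℛ k a with hr
  set rL : (i : r.ι) → Coalgebra.Repr k (r.left i) (A × A) := fun i => ℛ k (r.left i) with hrL
  set rR : (i : r.ι) → Coalgebra.Repr k (r.right i) (A × A) := fun i => ℛ k (r.right i) with hrR
  have key : HopfAlgebra.antipode (R := k) a
      = ∑ j ∈ r.index, ∑ m ∈ (rR j).index,
          T3 (HopfAlgebra.antipode (R := k) (A := A)) LinearMap.id (Pmap lam rΛ)
            (r.left j ⊗ₜ[k] ((rR j).left m ⊗ₜ[k] (rR j).right m)) := by
    calc HopfAlgebra.antipode (R := k) a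
        = ∑ j ∈ r.index, ε (r.right j) • S (r.left j) := by
          have := congrArg (HopfAlgebra.antipode (R := k) (A := A)) (sum_smul_counit r)
          rw [map_sum] at this
          simp only [map_smul] at this
          exact this.symm
      _ = ∑ j ∈ r.index, S (r.left j) * (lam (r.right j * Λ) • (1 : A)) := by
          refine Finset.sum_congr rfl fun j _ => ?_
          rw [hΛ (r.right j), map_smul, hΛ1, smul_eq_mul, mul_one, mul_smul_comm, mul_one]
      _ = ∑ j ∈ r.index, S (r.left j) *
            (∑ m ∈ (rR j).index, (rR j).left m * Pmap lam rΛ ((rR j).right m)) := by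
          refine Finset.sum_congr rfl fun j _ => ?_
          rw [qmap_eq lam hlam Λ rΛ (r.right j) (ry := rR j)]
      _ = _ := by
          refine Finset.sum_congr rfl fun j _ => ?_
          rw [Finset.mul_sum]
          refine Finset.sum_congr rfl fun m _ => ?_
          simp [T3_tmul]
  rw [key, coassoc_swap _ r rL rR]
  symm
  calc ∑ j ∈ r.index, ∑ m ∈ (rL j).index,
        T3 (HopfAlgebra.antipode (R := k) (A := A)) LinearMap.id (Pmap lam rΛ)
          ((rL j).left m ⊗ₜ[k] ((rL j).right m ⊗ₜ[k] r.right j))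
      = ∑ j ∈ r.index, (∑ m ∈ (rL j).index, S ((rL j).left m) * (rL j).right m)
          * Pmap lam rΛ (r.right j) := by
        refine Finset.sum_congr rfl fun j _ => ?_
        rw [Finset.sum_mul]
        refine Finset.sum_congr rfl fun m _ => ?_
        simp [T3_tmul, mul_assoc]
    _ = ∑ j ∈ r.index, ε (r.left j) • Pmap lam rΛ (r.right j) := by
        refine Finset.sum_congr rfl fun j _ => ?_
        rw [HopfAlgebra.sum_antipode_mul_eq_smul (rL j), smul_mul_assoc, one_mul]
    _ = Pmap lam rΛ a := by
        have := congrArg (Pmap lam rΛ) (sum_counit_smul r)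
        rw [map_sum] at this
        simp only [map_smul] at this
        exact this

include hTS hST hlam hΛ hΛ1 in
lemma claim2 (a : A) :
    ∑ i ∈ rΛ.index, lam (a * rΛ.right i) • Tl (rΛ.left i) = a := by
  have := congrArg Tl (claim2_core Tl hTS hST lam hlam Λ hΛ hΛ1 rΛ a)
  rw [map_sum, hTS] at this
  simpa [map_smul] using this

include hTS hST hΛ in
set_option maxHeartbeats 2000000 in
lemma lemmaL (x : A) :
    ∑ i ∈ rΛ.index, (x * rΛ.left i) ⊗ₜ[k] rΛ.right i
    = ∑ i ∈ rΛ.index, rΛ.left i ⊗ₜ[k] (Tl x * rΛ.right i) := by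
  set r := ℛ k x with hr
  set rL : (i : r.ι) → Coalgebra.Repr k (r.left i) (A × A) := fun i => ℛ k (r.left i) with hrL
  set rR : (i : r.ι) → Coalgebra.Repr k (r.right i) (A × A) := fun i => ℛ k (r.right i) with hrR
  set ν : A ⊗[k] A →ₗ[k] A :=
    LinearMap.mul' k A ∘ₗ TensorProduct.map Tl LinearMap.id ∘ₗ
      (TensorProduct.comm k A A).toLinearMap with hν
  have hν_tmul : ∀ y z : A, ν (y ⊗ₜ[k] z) = Tl z * y := by
    intro y z; simp [hν]
  set Θ : A ⊗[k] (A ⊗[k] A) →ₗ[k] A ⊗[k] A :=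
    ∑ i ∈ rΛ.index, TensorProduct.map (LinearMap.mulRight k (rΛ.left i))
      (LinearMap.mulRight k (rΛ.right i) ∘ₗ ν) with hΘ
  have hΘ_tmul : ∀ u v w : A, Θ (u ⊗ₜ[k] (v ⊗ₜ[k] w)) =
      ∑ i ∈ rΛ.index, (u * rΛ.left i) ⊗ₜ[k] ((Tl w * v) * rΛ.right i) := by
    intro u v w
    rw [hΘ]
    simp [LinearMap.sum_apply, hν_tmul]
  calc ∑ i ∈ rΛ.index, (x * rΛ.left i) ⊗ₜ[k] rΛ.right i
      = ∑ j ∈ r.index, ∑ i ∈ rΛ.index,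
          ε (r.right j) • ((r.left j * rΛ.left i) ⊗ₜ[k] rΛ.right i) := by
        rw [Finset.sum_comm]
        refine Finset.sum_congr rfl fun i _ => ?_
        have := congrArg
          (((TensorProduct.mk k A A).flip (rΛ.right i)) ∘ₗ LinearMap.mulRight k (rΛ.left i))
          (sum_smul_counit r)
        rw [map_sum] at this
        simp only [map_smul, LinearMap.comp_apply, LinearMap.mulRight_apply,
          LinearMap.flip_apply, TensorProduct.mk_apply] at this
        exact this.symm
    _ = ∑ j ∈ r.index, ∑ m ∈ (rR j).index,
          Θ (r.left j ⊗ₜ[k] ((rR j).left m ⊗ₜ[k] (rR j).right m)) := by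
        refine Finset.sum_congr rfl fun j _ => ?_
        have hcop := Tl_cop Tl hTS hST (rR j)
        calc ∑ i ∈ rΛ.index, ε (r.right j) • ((r.left j * rΛ.left i) ⊗ₜ[k] rΛ.right i)
            = ∑ i ∈ rΛ.index,
                (r.left j * rΛ.left i) ⊗ₜ[k] ((ε (r.right j) • (1:A)) * rΛ.right i) := by
              refine Finset.sum_congr rfl fun i _ => ?_
              rw [smul_mul_assoc, one_mul, TensorProduct.tmul_smul]
          _ = ∑ i ∈ rΛ.index, ∑ m ∈ (rR j).index,
                (r.left j * rΛ.left i) ⊗ₜ[k]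
                  ((Tl ((rR j).right m) * (rR j).left m) * rΛ.right i) := by
              refine Finset.sum_congr rfl fun i _ => ?_
              rw [← hcop, Finset.sum_mul, TensorProduct.tmul_sum]
          _ = ∑ m ∈ (rR j).index, ∑ i ∈ rΛ.index,
                (r.left j * rΛ.left i) ⊗ₜ[k]
                  ((Tl ((rR j).right m) * (rR j).left m) * rΛ.right i) := Finset.sum_comm
          _ = _ := by
              refine Finset.sum_congr rfl fun m _ => ?_
              rw [hΘ_tmul]
    _ = ∑ j ∈ r.index, ∑ m ∈ (rL j).index,
          Θ ((rL j).left m ⊗ₜ[k] ((rL j).right m ⊗ₜ[k] r.right j)) :=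
        coassoc_swap Θ r rL rR
    _ = ∑ j ∈ r.index, (1 ⊗ₜ[k] Tl (r.right j)) * Coalgebra.comul (R := k) (r.left j * Λ) := by
        refine Finset.sum_congr rfl fun j _ => ?_
        rw [show Coalgebra.comul (R := k) (r.left j * Λ) = ∑ p ∈ (mulRepr (rL j) rΛ).index,
            (mulRepr (rL j) rΛ).left p ⊗ₜ[k] (mulRepr (rL j) rΛ).right p
          from (mulRepr (rL j) rΛ).eq.symm]
        rw [Finset.mul_sum]
        calc ∑ m ∈ (rL j).index, Θ ((rL j).left m ⊗ₜ[k] ((rL j).right m ⊗ₜ[k] r.right j))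
            = ∑ m ∈ (rL j).index, ∑ i ∈ rΛ.index,
                (1 ⊗ₜ[k] Tl (r.right j)) *
                  (((rL j).left m * rΛ.left i) ⊗ₜ[k] ((rL j).right m * rΛ.right i)) := by
              refine Finset.sum_congr rfl fun m _ => ?_
              rw [hΘ_tmul]
              refine Finset.sum_congr rfl fun i _ => ?_
              rw [Algebra.TensorProduct.tmul_mul_tmul, one_mul, mul_assoc]
          _ = _ := by
              exact Eq.symm (Finset.sum_product' (s := (rL j).index) (t := rΛ.index)
                (f := fun m i => (1 : A) ⊗ₜ[k] Tl (r.right j) *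
                  (((rL j).left m * rΛ.left i) ⊗ₜ[k] ((rL j).right m * rΛ.right i))))
    _ = ∑ j ∈ r.index,
          ε (r.left j) • ((1 ⊗ₜ[k] Tl (r.right j)) * Coalgebra.comul (R := k) Λ) := by
        refine Finset.sum_congr rfl fun j _ => ?_
        rw [hΛ (r.left j), map_smul, mul_smul_comm]
    _ = (1 ⊗ₜ[k] Tl x) * Coalgebra.comul (R := k) Λ := by
        have := congrArg
          ((LinearMap.mulRight k (Coalgebra.comul (R := k) Λ)) ∘ₗ
            (TensorProduct.mk k A A 1) ∘ₗ Tl)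
          (sum_counit_smul r)
        rw [map_sum] at this
        simp only [map_smul, LinearMap.comp_apply, TensorProduct.mk_apply,
          LinearMap.mulRight_apply] at this
        exact this
    _ = ∑ i ∈ rΛ.index, rΛ.left i ⊗ₜ[k] (Tl x * rΛ.right i) := by
        rw [show Coalgebra.comul (R := k) Λ = ∑ i ∈ rΛ.index, rΛ.left i ⊗ₜ[k] rΛ.right i
          from rΛ.eq.symm]
        rw [Finset.mul_sum]
        refine Finset.sum_congr rfl fun i _ => ?_
        rw [Algebra.TensorProduct.tmul_mul_tmul, one_mul]

include hTS hST hΛ in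
lemma claim1_eq (a : A) :
    ∑ i ∈ rΛ.index, lam (Tl (rΛ.left i) * a) • rΛ.right i
    = a * ∑ i ∈ rΛ.index, lam (Tl (rΛ.left i)) • rΛ.right i := by
  have L := lemmaL Tl hTS hST Λ hΛ rΛ (HopfAlgebra.antipode (R := k) a)
  set ρ : A ⊗[k] A →ₗ[k] A :=
    (TensorProduct.lid k A).toLinearMap ∘ₗ LinearMap.rTensor A (lam ∘ₗ Tl) with hρ
  have hρ_tmul : ∀ u v : A, ρ (u ⊗ₜ[k] v) = lam (Tl u) • v := by
    intro u v; simp [hρ]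
  have key := congrArg ρ L
  rw [map_sum, map_sum] at key
  simp only [hρ_tmul] at key
  calc ∑ i ∈ rΛ.index, lam (Tl (rΛ.left i) * a) • rΛ.right i
      = ∑ i ∈ rΛ.index,
          lam (Tl (HopfAlgebra.antipode (R := k) a * rΛ.left i)) • rΛ.right i := by
        refine Finset.sum_congr rfl fun i _ => ?_
        rw [Tl_mul Tl hTS hST, hTS]
    _ = ∑ i ∈ rΛ.index, lam (Tl (rΛ.left i)) •
          (Tl (HopfAlgebra.antipode (R := k) a) * rΛ.right i) := key
    _ = a * ∑ i ∈ rΛ.index, lam (Tl (rΛ.left i)) • rΛ.right i := by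
        rw [Finset.mul_sum]
        refine Finset.sum_congr rfl fun i _ => ?_
        rw [hTS, mul_smul_comm]

include hTS hST hlam in
lemma e_eq :
    ∑ i ∈ rΛ.index, lam (Tl (rΛ.left i)) • rΛ.right i = lam (Tl Λ) • (1 : A) := by
  have hmapTS : TensorProduct.map Tl Tl ∘ₗ
      TensorProduct.map (HopfAlgebra.antipode (R := k) (A := A))
        (HopfAlgebra.antipode (R := k) (A := A)) = LinearMap.id := by
    rw [← TensorProduct.map_comp]
    rw [show Tl ∘ₗ (HopfAlgebra.antipode (R := k) (A := A)) = LinearMap.id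
      from LinearMap.ext hTS]
    exact TensorProduct.map_id
  have hcom : Coalgebra.comul (R := k) (Tl Λ)
      = ∑ i ∈ rΛ.index, Tl (rΛ.right i) ⊗ₜ[k] Tl (rΛ.left i) := by
    have h1 := comul_antipode (k := k) (Tl Λ)
    rw [hST] at h1
    have h2 := congrArg (TensorProduct.map Tl Tl) h1
    have hX := LinearMap.congr_fun hmapTS
      ((TensorProduct.comm k A A) (Coalgebra.comul (R := k) (Tl Λ)))
    simp only [LinearMap.comp_apply, LinearMap.id_apply] at hX
    rw [hX] at h2
    have h3 : Coalgebra.comul (R := k) (Tl Λ)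
        = (TensorProduct.comm k A A).symm (TensorProduct.map Tl Tl
            (Coalgebra.comul (R := k) Λ)) := by
      have h4 := congrArg (TensorProduct.comm k A A).symm h2
      rw [LinearEquiv.symm_apply_apply] at h4
      exact h4.symm
    rw [h3, show Coalgebra.comul (R := k) Λ = ∑ i ∈ rΛ.index, rΛ.left i ⊗ₜ[k] rΛ.right i
      from rΛ.eq.symm, map_sum, map_sum]
    refine Finset.sum_congr rfl fun i _ => ?_
    rw [TensorProduct.map_tmul, TensorProduct.comm_symm_tmul]
  have h3 := hlam (Tl Λ)
  rw [hcom, map_sum, map_sum] at h3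
  simp only [LinearMap.lTensor_tmul, TensorProduct.rid_tmul] at h3
  have h4 : Tl (∑ i ∈ rΛ.index, lam (Tl (rΛ.left i)) • rΛ.right i) = lam (Tl Λ) • 1 := by
    rw [map_sum]
    simpa [map_smul] using h3
  have h5 := congrArg (HopfAlgebra.antipode (R := k) (A := A)) h4
  rw [hST, map_smul, antipode_one] at h5
  exact h5

include hTS hST hΛ hΛ1 in
lemma claim1_at_lambda :
    ∑ i ∈ rΛ.index, lam (Tl (rΛ.left i) * Λ) • rΛ.right i = Λ := by
  calc ∑ i ∈ rΛ.index, lam (Tl (rΛ.left i) * Λ) • rΛ.right i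
      = ∑ i ∈ rΛ.index, ε (rΛ.left i) • rΛ.right i := by
        refine Finset.sum_congr rfl fun i _ => ?_
        rw [hΛ (Tl (rΛ.left i)), map_smul, hΛ1, smul_eq_mul, mul_one,
          counit_Tl Tl hTS hST]
    _ = Λ := sum_counit_smul rΛ

end Integral

end HopfAux

/-- Let `A` be a Hopf algebra over a field `k` whose antipode `S` is
bijective with two-sided inverse `T`.  Let `λ` be a left integral in the dual and `Λ` a left
integral with `λ(Λ) = 1`.  Then, for any representation `Δ(Λ) = ∑ᵢ Λ1 i ⊗ Λ2 i` and any
`a ∈ A`, one has `∑ᵢ λ(T(Λ1 i) * a) • Λ2 i = a` and `∑ᵢ λ(a * Λ2 i) • T(Λ1 i) = a`; i.e.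
`U_λ = Λ₍₂₎ ⊗ S⁻¹(Λ₍₁₎)` is the canonical element of the form `⟨a, b⟩ = λ(ab)`. -/
theorem Ulambda_left_integral (k A : Type*) [Field k] [Ring A] [HopfAlgebra k A]
    (T : A → A)
    (hT1 : ∀ a : A, T (HopfAlgebra.antipode (R := k) a) = a)
    (hT2 : ∀ a : A, HopfAlgebra.antipode (R := k) (T a) = a)
    (lam : A →ₗ[k] k)
    (hlam : ∀ a : A, (TensorProduct.rid k A)
        ((LinearMap.lTensor A lam) (Coalgebra.comul (R := k) a)) = lam a • 1)
    (Λ : A) (hΛ : ∀ a : A, a * Λ = Coalgebra.counit (R := k) a • Λ)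
    (hΛ1 : lam Λ = 1)
    (ι : Type*) (s : Finset ι) (Λ1 Λ2 : ι → A)
    (hrep : Coalgebra.comul (R := k) Λ = ∑ i ∈ s, Λ1 i ⊗ₜ[k] Λ2 i)
    (a : A) :
    (∑ i ∈ s, lam (T (Λ1 i) * a) • Λ2 i) = a ∧
    (∑ i ∈ s, lam (a * Λ2 i) • T (Λ1 i)) = a := by
  classical
  have hSsurj : Function.Surjective (HopfAlgebra.antipode (R := k) (A := A)) :=
    fun x => ⟨T x, hT2 x⟩
  have hSinj : Function.Injective (HopfAlgebra.antipode (R := k) (A := A)) := by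
    intro u v huv
    have := congrArg T huv
    rwa [hT1, hT1] at this
  set Sl := LinearEquiv.ofBijective (HopfAlgebra.antipode (R := k) (A := A))
    ⟨hSinj, hSsurj⟩ with hSl
  set Tl : A →ₗ[k] A := Sl.symm.toLinearMap with hTl
  have hST : ∀ x : A, HopfAlgebra.antipode (R := k) (Tl x) = x := fun x =>
    Sl.apply_symm_apply x
  have hTS : ∀ x : A, Tl (HopfAlgebra.antipode (R := k) x) = x := fun x =>
    Sl.symm_apply_apply x
  have hTT : ∀ x : A, T x = Tl x := fun x => hSinj (by rw [hT2, hST])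
  set rΛ : Coalgebra.Repr k Λ ι :=
    ⟨s, Λ1, Λ2, hrep.symm⟩ with hrΛ
  have hee : (∑ i ∈ s, lam (Tl (Λ1 i)) • Λ2 i) = lam (Tl Λ) • (1 : A) :=
    HopfAux.e_eq Tl hTS hST lam hlam Λ rΛ
  have hE : ∀ x : A, (∑ i ∈ s, lam (Tl (Λ1 i) * x) • Λ2 i)
      = x * ∑ i ∈ s, lam (Tl (Λ1 i)) • Λ2 i := fun x =>
    HopfAux.claim1_eq Tl hTS hST lam Λ hΛ rΛ x
  have hL : (∑ i ∈ s, lam (Tl (Λ1 i) * Λ) • Λ2 i) = Λ :=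
    HopfAux.claim1_at_lambda Tl hTS hST lam Λ hΛ hΛ1 rΛ
  have hcΛ : lam (Tl Λ) • Λ = Λ := by
    have h0 := hE Λ
    rw [hL, hee, mul_smul_comm, mul_one] at h0
    exact h0.symm
  have hΛ0 : Λ ≠ 0 := by
    intro h
    rw [h, map_zero] at hΛ1
    exact one_ne_zero hΛ1.symm
  have hc : lam (Tl Λ) = 1 := by
    by_contra hne
    have hz : (lam (Tl Λ) - 1) • Λ = 0 := by
      rw [sub_smul, one_smul, hcΛ, sub_self]
    rcases smul_eq_zero.mp hz with h | h
    · exact hne (sub_eq_zero.mp h)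
    · exact hΛ0 h
  constructor
  · calc ∑ i ∈ s, lam (T (Λ1 i) * a) • Λ2 i
        = ∑ i ∈ s, lam (Tl (Λ1 i) * a) • Λ2 i :=
          Finset.sum_congr rfl fun i _ => by rw [hTT]
      _ = a * ∑ i ∈ s, lam (Tl (Λ1 i)) • Λ2 i := hE a
      _ = a := by rw [hee, hc, one_smul, mul_one]
  · calc ∑ i ∈ s, lam (a * Λ2 i) • T (Λ1 i)
        = ∑ i ∈ s, lam (a * Λ2 i) • Tl (Λ1 i) :=
          Finset.sum_congr rfl fun i _ => by rw [hTT]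
      _ = a := HopfAux.claim2 Tl hTS hST lam hlam Λ hΛ hΛ1 rΛ a
end

section
/- Let A be a finite-dimensional unimodular Hopf algebra over a field k and let λ : A → k be a left integral in the dual. Then for all a, b ∈ A, λ(ab) = λ(b S(S(a))). -/
open scoped TensorProduct
open Coalgebra HopfAlgebra TensorProduct LinearMap Finset

section Aux
variable {k A : Type*} [Field k] [Ring A] [HopfAlgebra k A]
variable {ι κ : Type*}

local notation "ε" => Coalgebra.counit (R := k)
local notation "Sa" => HopfAlgebra.antipode (R := k) (A := A)

/-- product representation -/
noncomputable def mulRepr {x y : A} (rx : Coalgebra.Repr k x ι) (ry : Coalgebra.Repr k y κ) :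
    Coalgebra.Repr k (x * y) (ι × κ) where
  index := rx.index ×ˢ ry.index
  left := fun p => rx.left p.1 * ry.left p.2
  right := fun p => rx.right p.1 * ry.right p.2
  eq := by
    rw [Bialgebra.comul_mul, ← rx.eq, ← ry.eq, Finset.sum_mul_sum]
    rw [Finset.sum_product]
    simp [Algebra.TensorProduct.tmul_mul_tmul]

variable (lam : A →ₗ[k] k)

theorem hlam_sum
    (hlam : ∀ a : A, (TensorProduct.rid k A)
        ((LinearMap.lTensor A lam) (Coalgebra.comul (R := k) a)) = lam a • 1)
    (x : A) (re : Coalgebra.Repr k x ι) :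
    ∑ i ∈ re.index, lam (re.right i) • re.left i = lam x • 1 := by
  have h := hlam x
  rw [← re.eq, map_sum, map_sum] at h
  simpa using h

theorem counit_right_sum (x : A) (re : Coalgebra.Repr k x ι) :
    ∑ i ∈ re.index, ε (re.right i) • re.left i = x := by
  have h := Coalgebra.sum_tmul_counit_eq re
  have h2 := congrArg (TensorProduct.rid k A) h
  rw [map_sum] at h2
  simpa using h2

theorem counit_left_sum (x : A) (re : Coalgebra.Repr k x ι) :
    ∑ i ∈ re.index, ε (re.left i) • re.right i = x := by
  have h := Coalgebra.sum_counit_tmul_eq re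
  have h2 := congrArg (TensorProduct.lid k A) h
  rw [map_sum] at h2
  simpa using h2

theorem E_sum (a : A) (ra : Coalgebra.Repr k a ι) (a₂ : ∀ i : ι, Coalgebra.Repr k (ra.right i) κ) :
    ∑ i ∈ ra.index, ∑ p ∈ (a₂ i).index,
      (Sa (ra.left i) * (a₂ i).left p) ⊗ₜ[k] (a₂ i).right p = (1 : A) ⊗ₜ[k] a := by
  classical
  set a₁ : ∀ i : ι, Coalgebra.Repr k (ra.left i) (A × A) := fun i => Coalgebra.Repr.arbitrary k (ra.left i)
  have coas := Coalgebra.sum_tmul_tmul_eq ra a₁ a₂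
  set Ψ : A ⊗[k] (A ⊗[k] A) →ₗ[k] A ⊗[k] A :=
    (LinearMap.rTensor A ((LinearMap.mul' k A) ∘ₗ LinearMap.rTensor A Sa)) ∘ₗ
      (TensorProduct.assoc k A A A).symm.toLinearMap with hΨ
  have hΨt : ∀ (x y z : A), Ψ (x ⊗ₜ[k] (y ⊗ₜ[k] z)) = (Sa x * y) ⊗ₜ[k] z := by
    intro x y z
    simp [hΨ]
  have happ := congrArg Ψ coas
  rw [map_sum, map_sum] at happ
  simp_rw [map_sum, hΨt] at happ
  -- now LHS of happ : ∑ i, ∑ j, (Sa ((a₁ i).left j) * (a₁ i).right j) ⊗ₜ ra.right i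
  rw [← happ]
  have hstep : ∀ i ∈ ra.index, ∑ j ∈ (a₁ i).index,
      (Sa ((a₁ i).left j) * (a₁ i).right j) ⊗ₜ[k] ra.right i
        = (1 : A) ⊗ₜ[k] (ε (ra.left i) • ra.right i) := by
    intro i _
    rw [← TensorProduct.sum_tmul, HopfAlgebra.sum_antipode_mul_eq_smul (a₁ i),
      TensorProduct.smul_tmul]
  rw [Finset.sum_congr rfl hstep, ← TensorProduct.tmul_sum, counit_left_sum a ra]

theorem star_id
    (hlam : ∀ a : A, (TensorProduct.rid k A)
        ((LinearMap.lTensor A lam) (Coalgebra.comul (R := k) a)) = lam a • 1)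
    (a b : A) (ra : Coalgebra.Repr k a ι) (rb : Coalgebra.Repr k b κ) :
    ∑ j ∈ rb.index, lam (a * rb.right j) • rb.left j
      = ∑ i ∈ ra.index, lam (ra.right i * b) • Sa (ra.left i) := by
  classical
  set a₂ : ∀ i : ι, Coalgebra.Repr k (ra.right i) (A × A) :=
    fun i => Coalgebra.Repr.arbitrary k (ra.right i) with ha₂
  set Φ : A ⊗[k] A →ₗ[k] A := TensorProduct.lift (LinearMap.mk₂ k
      (fun u v => ∑ q ∈ rb.index, lam (v * rb.right q) • (u * rb.left q))
      (fun u u' v => by simp [add_mul, smul_add, Finset.sum_add_distrib])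
      (fun c u v => by
        simp only [smul_mul_assoc, ← Finset.smul_sum, smul_comm (lam _)])
      (fun u v v' => by simp [add_mul, add_smul, Finset.sum_add_distrib])
      (fun c u v => by
        simp only [smul_mul_assoc, map_smul, smul_eq_mul, mul_smul, ← Finset.smul_sum]))
      with hΦ
  have hΦt : ∀ (u v : A), Φ (u ⊗ₜ[k] v)
      = ∑ q ∈ rb.index, lam (v * rb.right q) • (u * rb.left q) := by
    intro u v; simp [hΦ]
  have key := congrArg Φ (E_sum a ra a₂)
  rw [map_sum] at key
  simp_rw [map_sum, hΦt] at key
  -- key LHS: ∑ i ∑ p ∑ q lam((a₂ i).right p * rb.right q) • ((Sa lᵢ * lp) * lq)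
  -- key RHS: ∑ q lam (a * rb.right q) • (1 * rb.left q)
  have hR : ∀ i ∈ ra.index,
      lam (ra.right i * b) • Sa (ra.left i)
        = ∑ p ∈ (a₂ i).index, ∑ q ∈ rb.index,
            lam ((a₂ i).right p * rb.right q) •
              (Sa (ra.left i) * (a₂ i).left p * rb.left q) := by
    intro i _
    have h1 := hlam_sum lam hlam (ra.right i * b) (mulRepr (a₂ i) rb)
    have h2 := congrArg (fun z => Sa (ra.left i) * z) h1
    simp only [Finset.mul_sum, mul_smul_comm, mul_one] at h2
    rw [← h2]
    unfold mulRepr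
    rw [Finset.sum_product]
    simp [mul_assoc]
  calc ∑ j ∈ rb.index, lam (a * rb.right j) • rb.left j
      = ∑ q ∈ rb.index, lam (a * rb.right q) • (1 * rb.left q) := by simp
    _ = ∑ i ∈ ra.index, ∑ p ∈ (a₂ i).index, ∑ q ∈ rb.index,
          lam ((a₂ i).right p * rb.right q) •
            (Sa (ra.left i) * (a₂ i).left p * rb.left q) := key.symm
    _ = ∑ i ∈ ra.index, lam (ra.right i * b) • Sa (ra.left i) :=
        (Finset.sum_congr rfl hR).symm

theorem kernel_repr [FiniteDimensional k A]
    (hlam : ∀ a : A, (TensorProduct.rid k A)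
        ((LinearMap.lTensor A lam) (Coalgebra.comul (R := k) a)) = lam a • 1)
    (y : A) (h0 : ∀ x : A, lam (x * y) = 0) :
    ∃ (c e : Fin (Module.finrank k A) → A),
      (∀ i, ∀ x : A, lam (x * c i) = 0) ∧ (y = ∑ i, ε (c i) • e i) ∧
      (ε y • (1 : A) = ∑ i, Sa (e i) * c i) := by
  classical
  set eb := Module.finBasis k A with heb
  set ry := Coalgebra.Repr.arbitrary k y with hry
  have hstar0 : ∀ x : A, ∑ j ∈ ry.index, lam (x * ry.right j) • ry.left j = 0 := by
    intro x
    rw [star_id lam hlam x y (Coalgebra.Repr.arbitrary k x) ry]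
    simp [h0]
  refine ⟨fun i => ∑ j ∈ ry.index, eb.repr (ry.left j) i • ry.right j, fun i => eb i,
    ?_, ?_, ?_⟩
  · intro i x
    have h1 := congrArg (eb.coord i) (hstar0 x)
    rw [map_sum] at h1
    simp only [map_smul, Module.Basis.coord_apply, smul_eq_mul, map_zero] at h1
    rw [Finset.mul_sum]
    simp only [mul_smul_comm, map_sum, map_smul, smul_eq_mul]
    rw [← h1]
    exact Finset.sum_congr rfl fun j _ => mul_comm _ _
  · have h2 := counit_right_sum y ry
    conv_lhs => rw [← h2]
    have h3 : ∀ j ∈ ry.index, ε (ry.right j) • ry.left j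
        = ∑ i, (eb.repr (ry.left j) i * ε (ry.right j)) • eb i := by
      intro j _
      conv_lhs => rw [← eb.sum_repr (ry.left j)]
      rw [Finset.smul_sum]
      exact Finset.sum_congr rfl fun i _ => by rw [smul_smul, mul_comm]
    rw [Finset.sum_congr rfl h3, Finset.sum_comm]
    refine Finset.sum_congr rfl fun i _ => ?_
    simp only [map_sum, map_smul, smul_eq_mul, Finset.sum_smul]
  · rw [← HopfAlgebra.sum_antipode_mul_eq_smul ry]
    have h4 : ∀ j ∈ ry.index, Sa (ry.left j) * ry.right j
        = ∑ i, eb.repr (ry.left j) i • (Sa (eb i) * ry.right j) := by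
      intro j _
      conv_lhs => rw [← eb.sum_repr (ry.left j)]
      rw [map_sum, Finset.sum_mul]
      exact Finset.sum_congr rfl fun i _ => by rw [map_smul, smul_mul_assoc]
    rw [Finset.sum_congr rfl h4, Finset.sum_comm]
    refine Finset.sum_congr rfl fun i _ => ?_
    rw [Finset.mul_sum]
    exact Finset.sum_congr rfl fun j _ => by rw [mul_smul_comm]

end Aux

/-- Let `A` be a finite-dimensional unimodular Hopf algebra over a field
`k` (the left integrals in `A` coincide with the right integrals in `A`) and let `λ` be a
left integral in the dual.  Then `λ(ab) = λ(b S(S(a)))` for all `a b ∈ A`. -/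
theorem lam_mul_eq_lam_mul_antipode_sq (k A : Type*) [Field k] [Ring A] [HopfAlgebra k A]
    [FiniteDimensional k A]
    (hu : ∀ Λ : A, (∀ a : A, a * Λ = Coalgebra.counit (R := k) a • Λ) ↔
      (∀ a : A, Λ * a = Coalgebra.counit (R := k) a • Λ))
    (lam : A →ₗ[k] k)
    (hlam : ∀ a : A, (TensorProduct.rid k A)
        ((LinearMap.lTensor A lam) (Coalgebra.comul (R := k) a)) = lam a • 1) :
    ∀ a b : A, lam (a * b) =
      lam (b * HopfAlgebra.antipode (R := k) (HopfAlgebra.antipode (R := k) a)) := by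
  classical
  by_cases hcase : ∀ y : A, (∀ x : A, lam (x * y) = 0) → Coalgebra.counit (R := k) y = 0
  · -- ℓ : a ↦ (x ↦ lam (x * a)) is injective, hence bijective
    set ℓ : A →ₗ[k] Module.Dual k A :=
      ((LinearMap.mul k A).flip).compr₂ lam with hℓdef
    have hℓ : ∀ (c x : A), ℓ c x = lam (x * c) := fun c x => by
      simp [hℓdef, LinearMap.compr₂_apply, LinearMap.flip_apply, LinearMap.mul_apply']
    have hker : ∀ b : A, ℓ b = 0 → b = 0 := by
      intro b hb
      have h0 : ∀ x : A, lam (x * b) = 0 := fun x => by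
        rw [← hℓ]; rw [hb]; rfl
      obtain ⟨c, e, hc, hy, -⟩ := kernel_repr lam hlam b h0
      have hz : ∀ i, Coalgebra.counit (R := k) (c i) = 0 := fun i => hcase (c i) (hc i)
      rw [hy]
      simp [hz]
    have hinj : Function.Injective ℓ :=
      LinearMap.ker_eq_bot.mp (LinearMap.ker_eq_bot'.mpr hker)
    have hsurj : Function.Surjective ℓ :=
      (LinearMap.injective_iff_surjective_of_finrank_eq_finrank
        (Subspace.dual_finrank_eq (V := A)).symm).mp hinj
    obtain ⟨Λ, hΛ⟩ := hsurj (Coalgebra.counit (R := k) (A := A))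
    have hΛ1 : ∀ x : A, lam (x * Λ) = Coalgebra.counit (R := k) x := fun x => by
      rw [← hℓ, hΛ]
    have hleft : ∀ a : A, a * Λ = Coalgebra.counit (R := k) a • Λ := by
      intro a
      apply hinj
      ext x
      rw [hℓ, map_smul, LinearMap.smul_apply, hℓ, ← mul_assoc, hΛ1, hΛ1,
        Bialgebra.counit_mul, mul_comm, smul_eq_mul]
    have hright : ∀ a : A, Λ * a = Coalgebra.counit (R := k) a • Λ := (hu Λ).mp hleft
    have hlamΛ : lam Λ = 1 := by
      have := hΛ1 1
      rwa [one_mul, Bialgebra.counit_one] at this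
    set rΛ := Coalgebra.Repr.arbitrary k Λ with hrΛ
    have hF : ∀ a : A, ∑ i ∈ rΛ.index, lam (a * rΛ.right i) • rΛ.left i
        = HopfAlgebra.antipode (R := k) a := by
      intro a
      rw [star_id lam hlam a Λ (Coalgebra.Repr.arbitrary k a) rΛ]
      have : ∀ i ∈ (Coalgebra.Repr.arbitrary k a).index,
          lam ((Coalgebra.Repr.arbitrary k a).right i * Λ) •
              HopfAlgebra.antipode (R := k) ((Coalgebra.Repr.arbitrary k a).left i)
            = HopfAlgebra.antipode (R := k)
              (Coalgebra.counit (R := k) ((Coalgebra.Repr.arbitrary k a).right i) •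
                (Coalgebra.Repr.arbitrary k a).left i) := by
        intro i _
        rw [hΛ1, map_smul]
      rw [Finset.sum_congr rfl this, ← map_sum,
        counit_right_sum a (Coalgebra.Repr.arbitrary k a)]
    have hH : ∀ b : A, ∑ i ∈ rΛ.index,
        lam (rΛ.right i * b) • HopfAlgebra.antipode (R := k) (rΛ.left i) = b := by
      intro b
      rw [← star_id lam hlam Λ b rΛ (Coalgebra.Repr.arbitrary k b)]
      have : ∀ j ∈ (Coalgebra.Repr.arbitrary k b).index,
          lam (Λ * (Coalgebra.Repr.arbitrary k b).right j) •
              (Coalgebra.Repr.arbitrary k b).left j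
            = Coalgebra.counit (R := k) ((Coalgebra.Repr.arbitrary k b).right j) •
              (Coalgebra.Repr.arbitrary k b).left j := by
        intro j _
        rw [hright, map_smul, smul_eq_mul, hlamΛ, mul_one]
      rw [Finset.sum_congr rfl this, counit_right_sum b (Coalgebra.Repr.arbitrary k b)]
    intro a b
    obtain ⟨c, hc⟩ := hsurj (lam ∘ₗ LinearMap.mulLeft k a)
    have hcx : ∀ x : A, lam (x * c) = lam (a * x) := fun x => by
      rw [← hℓ, hc]; rfl
    have h2 : c = HopfAlgebra.antipode (R := k) (HopfAlgebra.antipode (R := k) a) := by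
      calc c = ∑ i ∈ rΛ.index,
            lam (rΛ.right i * c) • HopfAlgebra.antipode (R := k) (rΛ.left i) := (hH c).symm
        _ = ∑ i ∈ rΛ.index,
            lam (a * rΛ.right i) • HopfAlgebra.antipode (R := k) (rΛ.left i) := by
            exact Finset.sum_congr rfl fun i _ => by rw [hcx]
        _ = HopfAlgebra.antipode (R := k)
            (∑ i ∈ rΛ.index, lam (a * rΛ.right i) • rΛ.left i) := by
            rw [map_sum]
            exact Finset.sum_congr rfl fun i _ => (map_smul _ _ _).symm
        _ = HopfAlgebra.antipode (R := k) (HopfAlgebra.antipode (R := k) a) := by rw [hF a]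
    rw [← h2, hcx b]
  · -- degenerate case : lam = 0
    push_neg at hcase
    obtain ⟨y, h0, hεy⟩ := hcase
    obtain ⟨c, e, hc, -, hεe⟩ := kernel_repr lam hlam y h0
    have hlam0 : ∀ x : A, lam x = 0 := by
      intro x
      have h5 : lam (x * (Coalgebra.counit (R := k) y • (1 : A))) = 0 := by
        rw [hεe, Finset.mul_sum, map_sum]
        refine Finset.sum_eq_zero fun i _ => ?_
        rw [← mul_assoc]
        exact hc i _
      rw [mul_smul_comm, mul_one, map_smul, smul_eq_mul] at h5
      exact (mul_eq_zero.mp h5).resolve_left hεy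
    intro a b
    rw [hlam0, hlam0]
end

section
/- Let A be a finite-dimensional unimodular Hopf algebra over a field k and let λ : A → k be a left integral in the dual. Then λ is invariant under the conjugate action: for all a, b ∈ A, λ(a₍₁₎ b S(a₍₂₎)) = ε(a) λ(b). -/
open scoped TensorProduct
open Coalgebra HopfAlgebra LinearMap

namespace LamConj

variable {k A : Type*} [Field k] [Ring A] [HopfAlgebra k A]

noncomputable def CR (f : A →ₗ[k] k) : A ⊗[k] A →ₗ[k] A :=
  (TensorProduct.rid k A).toLinearMap ∘ₗ f.lTensor A

@[simp] lemma CR_tmul (f : A →ₗ[k] k) (u v : A) : CR f (u ⊗ₜ[k] v) = f v • u := by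
  simp [CR]

lemma csumR {ι : Type*} {x : A} (r : Coalgebra.Repr k x ι) :
    ∑ i ∈ r.index, Coalgebra.counit (R := k) (r.right i) • r.left i = x := by
  have h := Coalgebra.sum_tmul_counit_eq (R := k) r
  apply_fun (TensorProduct.rid k A) at h
  simp only [map_sum, TensorProduct.rid_tmul] at h
  simpa using h

lemma csumL {ι : Type*} {x : A} (r : Coalgebra.Repr k x ι) :
    ∑ i ∈ r.index, Coalgebra.counit (R := k) (r.left i) • r.right i = x := by
  have h := Coalgebra.sum_counit_tmul_eq (R := k) r
  apply_fun (TensorProduct.lid k A) at h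
  simp only [map_sum, TensorProduct.lid_tmul] at h
  simpa using h

lemma coassoc3 {B : Type*} [AddCommGroup B] [Module k B]
    (φ : A ⊗[k] (A ⊗[k] A) →ₗ[k] B) {ι : Type*} {κ₁ κ₂ : ι → Type*} {a : A} (r : Coalgebra.Repr k a ι)
    (r1 : ∀ i, Coalgebra.Repr k (r.left i) (κ₁ i)) (r2 : ∀ i, Coalgebra.Repr k (r.right i) (κ₂ i)) :
    ∑ i ∈ r.index, ∑ j ∈ (r1 i).index,
      φ ((r1 i).left j ⊗ₜ[k] ((r1 i).right j ⊗ₜ[k] r.right i)) =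
    ∑ i ∈ r.index, ∑ j ∈ (r2 i).index,
      φ (r.left i ⊗ₜ[k] ((r2 i).left j ⊗ₜ[k] (r2 i).right j)) := by
  have h := Coalgebra.sum_tmul_tmul_eq (R := k) r r1 r2
  apply_fun φ at h
  simpa [map_sum] using h

noncomputable def mulRepr {ι κ : Type*} {x y : A} (rx : Coalgebra.Repr k x ι) (ry : Coalgebra.Repr k y κ) :
    Coalgebra.Repr k (x * y) (ι × κ) where
  index := rx.index ×ˢ ry.index
  left := fun p => rx.left p.1 * ry.left p.2
  right := fun p => rx.right p.1 * ry.right p.2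
  eq := by
    rw [Bialgebra.comul_mul, ← rx.eq, ← ry.eq, Finset.sum_mul_sum]
    simp [Finset.sum_product, Algebra.TensorProduct.tmul_mul_tmul]

noncomputable def phi1 (lam : A →ₗ[k] k) (c q : A) : A ⊗[k] (A ⊗[k] A) →ₗ[k] A :=
  LinearMap.mul' k A ∘ₗ LinearMap.lTensor A (CR lam) ∘ₗ
    TensorProduct.map (HopfAlgebra.antipode (R := k))
      (TensorProduct.map (LinearMap.mulRight k q) (LinearMap.mulRight k c))

@[simp] lemma phi1_tmul (lam : A →ₗ[k] k) (c q u v z : A) :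
    phi1 lam c q (u ⊗ₜ[k] (v ⊗ₜ[k] z)) =
      lam (z * c) • (HopfAlgebra.antipode (R := k) u * (v * q)) := by
  simp [phi1, mul_smul_comm]

section withlam

variable (lam : A →ₗ[k] k)

lemma hl (hlam : ∀ a : A, (TensorProduct.rid k A)
        ((LinearMap.lTensor A lam) (Coalgebra.comul (R := k) a)) = lam a • 1) (x : A) : CR lam (Coalgebra.comul (R := k) x) = lam x • 1 := hlam x

/-- identity (2):  ∑ S(b₁) λ(b₂ a) = ∑ a₁ λ(b a₂) -/
lemma two (hlam : ∀ a : A, (TensorProduct.rid k A)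
        ((LinearMap.lTensor A lam) (Coalgebra.comul (R := k) a)) = lam a • 1) {ι κ : Type*} {κ₁ κ₂ : κ → Type*} (a b : A) (ra : Coalgebra.Repr k a ι) (rb : Coalgebra.Repr k b κ)
    (rbl : ∀ i, Coalgebra.Repr k (rb.left i) (κ₁ i)) (rbr : ∀ i, Coalgebra.Repr k (rb.right i) (κ₂ i)) :
    ∑ i ∈ rb.index, lam (rb.right i * a) • HopfAlgebra.antipode (R := k) (rb.left i)
      = ∑ j ∈ ra.index, lam (b * ra.right j) • ra.left j := by
  classical
  set S := HopfAlgebra.antipode (R := k) (A := A) with hS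
  -- step 1: expand λ(b₂ * a) via hlam
  have e1 : ∀ i ∈ rb.index,
      lam (rb.right i * a) • S (rb.left i)
        = ∑ j ∈ ra.index, ∑ m ∈ (rbr i).index,
            lam ((rbr i).right m * ra.right j) • (S (rb.left i) * ((rbr i).left m * ra.left j)) := by
    intro i _
    have h := hl lam hlam (rb.right i * a)
    rw [← (mulRepr (rbr i) ra).eq] at h
    simp only [map_sum, CR_tmul, mulRepr] at h
    calc lam (rb.right i * a) • S (rb.left i)
        = S (rb.left i) * (lam (rb.right i * a) • 1) := by
          rw [mul_smul_comm, mul_one]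
      _ = S (rb.left i) * (∑ p ∈ (rbr i).index ×ˢ ra.index,
            lam ((rbr i).right p.1 * ra.right p.2) • ((rbr i).left p.1 * ra.left p.2)) := by
          rw [h]
      _ = ∑ p ∈ (rbr i).index ×ˢ ra.index,
            lam ((rbr i).right p.1 * ra.right p.2) • (S (rb.left i) * ((rbr i).left p.1 * ra.left p.2)) := by
          rw [Finset.mul_sum]; exact Finset.sum_congr rfl fun p _ => by rw [mul_smul_comm]
      _ = _ := by
          rw [Finset.sum_product]; exact Finset.sum_comm
  rw [Finset.sum_congr rfl e1]
  rw [Finset.sum_comm]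
  -- now LHS = ∑ j ∑ i ∑ m  lam (rbr.right m * ra.right j) • (S (rb.left i) * (rbr.left m * ra.left j))
  have e2 : ∀ j ∈ ra.index,
      (∑ i ∈ rb.index, ∑ m ∈ (rbr i).index,
        lam ((rbr i).right m * ra.right j) • (S (rb.left i) * ((rbr i).left m * ra.left j)))
      = lam (b * ra.right j) • ra.left j := by
    intro j _
    have hco := (coassoc3 (phi1 lam (ra.right j) (ra.left j)) rb rbl rbr).symm
    simp only [phi1_tmul, ← hS] at hco
    rw [hco]
    have e3 : ∀ i ∈ rb.index,
        (∑ m ∈ (rbl i).index,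
          lam (rb.right i * ra.right j) • (S ((rbl i).left m) * ((rbl i).right m * ra.left j)))
        = (Coalgebra.counit (R := k) (rb.left i) * lam (rb.right i * ra.right j)) • ra.left j := by
      intro i _
      have hant := HopfAlgebra.sum_antipode_mul_eq_smul (rbl i)
      calc (∑ m ∈ (rbl i).index,
          lam (rb.right i * ra.right j) • (S ((rbl i).left m) * ((rbl i).right m * ra.left j)))
          = lam (rb.right i * ra.right j) •
              ((∑ m ∈ (rbl i).index, S ((rbl i).left m) * (rbl i).right m) * ra.left j) := by
            rw [Finset.sum_mul, Finset.smul_sum]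
            exact Finset.sum_congr rfl fun m _ => by rw [mul_assoc]
        _ = _ := by
            rw [hant, smul_mul_assoc, one_mul, smul_smul, mul_comm (lam _)]
    rw [Finset.sum_congr rfl e3]
    have : ∑ i ∈ rb.index,
        (Coalgebra.counit (R := k) (rb.left i) * lam (rb.right i * ra.right j)) • ra.left j
        = (∑ i ∈ rb.index,
            lam ((Coalgebra.counit (R := k) (rb.left i) • rb.right i) * ra.right j)) • ra.left j := by
      rw [← Finset.sum_smul]
      congr 1
      exact Finset.sum_congr rfl fun i _ => by rw [smul_mul_assoc, map_smul, smul_eq_mul]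
    rw [this, ← map_sum, ← Finset.sum_mul, csumL rb]
  exact Finset.sum_congr rfl e2

lemma S_one : HopfAlgebra.antipode (R := k) (1 : A) = 1 := by
  have h := HopfAlgebra.sum_antipode_mul_eq_smul
    (⟨({0} : Finset (Fin 1)), fun _ => (1 : A), fun _ => (1 : A), by
      simp [Bialgebra.comul_one, Algebra.TensorProduct.one_def]⟩ : Coalgebra.Repr k (1 : A) (Fin 1))
  simpa using h

noncomputable def phiX (Y1 Y2 Y3 : A) : A ⊗[k] (A ⊗[k] A) →ₗ[k] A :=
  LinearMap.mul' k A ∘ₗ LinearMap.lTensor A (LinearMap.mul' k A) ∘ₗ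
    TensorProduct.map (HopfAlgebra.antipode (R := k) ∘ₗ LinearMap.mulRight k Y1)
      (TensorProduct.map (LinearMap.mulRight k Y2)
        (LinearMap.mulLeft k (HopfAlgebra.antipode (R := k) Y3) ∘ₗ HopfAlgebra.antipode (R := k)))

@[simp] lemma phiX_tmul (Y1 Y2 Y3 u v z : A) :
    phiX Y1 Y2 Y3 (u ⊗ₜ[k] (v ⊗ₜ[k] z)) =
      HopfAlgebra.antipode (R := k) (u * Y1) *
        ((v * Y2) * (HopfAlgebra.antipode (R := k) Y3 * HopfAlgebra.antipode (R := k) z)) := by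
  simp [phiX]

noncomputable def phiY (X1 X2 X3 : A) : A ⊗[k] (A ⊗[k] A) →ₗ[k] A :=
  LinearMap.mul' k A ∘ₗ LinearMap.lTensor A (LinearMap.mul' k A) ∘ₗ
    TensorProduct.map (HopfAlgebra.antipode (R := k) ∘ₗ LinearMap.mulLeft k X1)
      (TensorProduct.map (LinearMap.mulLeft k X2)
        (LinearMap.mulRight k (HopfAlgebra.antipode (R := k) X3) ∘ₗ HopfAlgebra.antipode (R := k)))

@[simp] lemma phiY_tmul (X1 X2 X3 u v z : A) :
    phiY X1 X2 X3 (u ⊗ₜ[k] (v ⊗ₜ[k] z)) =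
      HopfAlgebra.antipode (R := k) (X1 * u) *
        ((X2 * v) * (HopfAlgebra.antipode (R := k) z * HopfAlgebra.antipode (R := k) X3)) := by
  simp [phiY]

lemma S_mul (x y : A) :
    HopfAlgebra.antipode (R := k) (x * y)
      = HopfAlgebra.antipode (R := k) y * HopfAlgebra.antipode (R := k) x := by
  classical
  set S := HopfAlgebra.antipode (R := k) (A := A) with hS
  set rx := ℛ k x with hrx; set ry := ℛ k y with hry
  set rxl : ∀ i, Coalgebra.Repr k (rx.left i) (A × A) := fun i => ℛ k (rx.left i) with hrxl
  set rxr : ∀ i, Coalgebra.Repr k (rx.right i) (A × A) := fun i => ℛ k (rx.right i) with hrxr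
  set ryl : ∀ j, Coalgebra.Repr k (ry.left j) (A × A) := fun j => ℛ k (ry.left j) with hryl
  set ryr : ∀ j, Coalgebra.Repr k (ry.right j) (A × A) := fun j => ℛ k (ry.right j) with hryr
  have hE1 : ∑ i ∈ rx.index, ∑ m ∈ (rxr i).index, ∑ j ∈ ry.index, ∑ n ∈ (ryr j).index,
      S (rx.left i * ry.left j) *
        (((rxr i).left m * (ryr j).left n) * (S ((ryr j).right n) * S ((rxr i).right m)))
      = S (x * y) := by
    have inner1 : ∀ i, ∀ m, ∀ j,
        (∑ n ∈ (ryr j).index, S (rx.left i * ry.left j) *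
          (((rxr i).left m * (ryr j).left n) * (S ((ryr j).right n) * S ((rxr i).right m))))
        = Coalgebra.counit (R := k) (ry.right j) •
            (S (rx.left i * ry.left j) * ((rxr i).left m * S ((rxr i).right m))) := by
      intro i m j
      have hcol := HopfAlgebra.sum_mul_antipode_eq_smul (ryr j)
      calc (∑ n ∈ (ryr j).index, S (rx.left i * ry.left j) *
          (((rxr i).left m * (ryr j).left n) * (S ((ryr j).right n) * S ((rxr i).right m))))
          = S (rx.left i * ry.left j) * ((rxr i).left m *
              ((∑ n ∈ (ryr j).index, (ryr j).left n * S ((ryr j).right n)) * S ((rxr i).right m))) := by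
            rw [Finset.sum_mul, Finset.mul_sum, Finset.mul_sum]
            exact Finset.sum_congr rfl fun n _ => by noncomm_ring
        _ = _ := by
            rw [hcol, smul_mul_assoc, one_mul, mul_smul_comm, mul_smul_comm]
    have inner2 : ∀ i, ∀ m,
        (∑ j ∈ ry.index, Coalgebra.counit (R := k) (ry.right j) •
          (S (rx.left i * ry.left j) * ((rxr i).left m * S ((rxr i).right m))))
        = S (rx.left i * y) * ((rxr i).left m * S ((rxr i).right m)) := by
      intro i m
      calc ∑ j ∈ ry.index, Coalgebra.counit (R := k) (ry.right j) •
            (S (rx.left i * ry.left j) * ((rxr i).left m * S ((rxr i).right m)))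
          = ∑ j ∈ ry.index, (Coalgebra.counit (R := k) (ry.right j) • S (rx.left i * ry.left j)) *
              ((rxr i).left m * S ((rxr i).right m)) :=
            Finset.sum_congr rfl fun j _ => (smul_mul_assoc _ _ _).symm
        _ = (∑ j ∈ ry.index, Coalgebra.counit (R := k) (ry.right j) • S (rx.left i * ry.left j)) *
              ((rxr i).left m * S ((rxr i).right m)) := (Finset.sum_mul _ _ _).symm
        _ = S (rx.left i * y) * ((rxr i).left m * S ((rxr i).right m)) := by
            congr 1
            calc ∑ j ∈ ry.index, Coalgebra.counit (R := k) (ry.right j) • S (rx.left i * ry.left j)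
                = S (∑ j ∈ ry.index, Coalgebra.counit (R := k) (ry.right j) • (rx.left i * ry.left j)) := by
                  rw [map_sum]; exact Finset.sum_congr rfl fun j _ => (map_smul S _ _).symm
              _ = S (rx.left i * y) := by
                  rw [show (∑ j ∈ ry.index, Coalgebra.counit (R := k) (ry.right j) • (rx.left i * ry.left j))
                    = rx.left i * ∑ j ∈ ry.index, Coalgebra.counit (R := k) (ry.right j) • ry.left j from by
                      rw [Finset.mul_sum]; exact Finset.sum_congr rfl fun j _ => (mul_smul_comm _ _ _).symm,
                    csumR ry]
    have inner3 : ∀ i,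
        (∑ m ∈ (rxr i).index, S (rx.left i * y) * ((rxr i).left m * S ((rxr i).right m)))
        = Coalgebra.counit (R := k) (rx.right i) • S (rx.left i * y) := by
      intro i
      rw [← Finset.mul_sum, HopfAlgebra.sum_mul_antipode_eq_smul (rxr i), mul_smul_comm, mul_one]
    calc ∑ i ∈ rx.index, ∑ m ∈ (rxr i).index, ∑ j ∈ ry.index, ∑ n ∈ (ryr j).index,
        S (rx.left i * ry.left j) *
          (((rxr i).left m * (ryr j).left n) * (S ((ryr j).right n) * S ((rxr i).right m)))
        = ∑ i ∈ rx.index, Coalgebra.counit (R := k) (rx.right i) • S (rx.left i * y) := by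
          refine Finset.sum_congr rfl fun i _ => ?_
          refine Eq.trans (Finset.sum_congr rfl fun m _ => Eq.trans
            (Finset.sum_congr rfl fun j _ => inner1 i m j) (inner2 i m)) (inner3 i)
      _ = S (x * y) := by
          calc ∑ i ∈ rx.index, Coalgebra.counit (R := k) (rx.right i) • S (rx.left i * y)
              = S (∑ i ∈ rx.index, Coalgebra.counit (R := k) (rx.right i) • (rx.left i * y)) := by
                rw [map_sum]; exact Finset.sum_congr rfl fun i _ => (map_smul S _ _).symm
            _ = S (x * y) := by
                rw [show (∑ i ∈ rx.index, Coalgebra.counit (R := k) (rx.right i) • (rx.left i * y))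
                  = (∑ i ∈ rx.index, Coalgebra.counit (R := k) (rx.right i) • rx.left i) * y from by
                    rw [Finset.sum_mul]; exact Finset.sum_congr rfl fun i _ => (smul_mul_assoc _ _ _).symm,
                  csumR rx]
  have hE2 : ∑ i ∈ rx.index, ∑ m ∈ (rxr i).index, ∑ j ∈ ry.index, ∑ n ∈ (ryr j).index,
      S (rx.left i * ry.left j) *
        (((rxr i).left m * (ryr j).left n) * (S ((ryr j).right n) * S ((rxr i).right m)))
      = S y * S x := by
    -- x-side coassociativity, with the (j,n)-sum packaged into a single linear map
    set Φ : A ⊗[k] (A ⊗[k] A) →ₗ[k] A :=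
      ∑ j ∈ ry.index, ∑ n ∈ (ryr j).index,
        phiX (ry.left j) ((ryr j).left n) ((ryr j).right n) with hΦ
    have hPhiApp : ∀ u v z : A, Φ (u ⊗ₜ[k] (v ⊗ₜ[k] z)) =
        ∑ j ∈ ry.index, ∑ n ∈ (ryr j).index,
          S (u * ry.left j) * ((v * (ryr j).left n) * (S ((ryr j).right n) * S z)) := by
      intro u v z
      simp [hΦ, LinearMap.sum_apply, hS]
    have step1 : ∑ i ∈ rx.index, ∑ m ∈ (rxr i).index, ∑ j ∈ ry.index, ∑ n ∈ (ryr j).index,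
        S (rx.left i * ry.left j) *
          (((rxr i).left m * (ryr j).left n) * (S ((ryr j).right n) * S ((rxr i).right m)))
        = ∑ i ∈ rx.index, ∑ m ∈ (rxl i).index, ∑ j ∈ ry.index, ∑ n ∈ (ryr j).index,
            S ((rxl i).left m * ry.left j) *
              (((rxl i).right m * (ryr j).left n) * (S ((ryr j).right n) * S (rx.right i))) := by
      have h := (coassoc3 Φ rx rxl rxr).symm
      calc _ = ∑ i ∈ rx.index, ∑ m ∈ (rxr i).index,
            Φ (rx.left i ⊗ₜ[k] ((rxr i).left m ⊗ₜ[k] (rxr i).right m)) := by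
              exact Finset.sum_congr rfl fun i _ => Finset.sum_congr rfl fun m _ =>
                (hPhiApp _ _ _).symm
        _ = ∑ i ∈ rx.index, ∑ m ∈ (rxl i).index,
            Φ ((rxl i).left m ⊗ₜ[k] ((rxl i).right m ⊗ₜ[k] rx.right i)) := h
        _ = _ := Finset.sum_congr rfl fun i _ => Finset.sum_congr rfl fun m _ => hPhiApp _ _ _
    -- y-side coassociativity
    have step2 : ∀ X1 X2 X3 : A,
        (∑ j ∈ ry.index, ∑ n ∈ (ryr j).index,
          S (X1 * ry.left j) * ((X2 * (ryr j).left n) * (S ((ryr j).right n) * S X3)))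
        = ∑ j ∈ ry.index, ∑ n ∈ (ryl j).index,
            S (X1 * (ryl j).left n) * ((X2 * (ryl j).right n) * (S (ry.right j) * S X3)) := by
      intro X1 X2 X3
      have h := (coassoc3 (phiY X1 X2 X3) ry ryl ryr).symm
      simpa only [phiY_tmul, ← hS] using h
    rw [step1]
    rw [Finset.sum_congr rfl fun i _ => Finset.sum_congr rfl fun m _ =>
      step2 ((rxl i).left m) ((rxl i).right m) (rx.right i)]
    -- now collapse the inner (m,n) double sums via the antipode axiom for products
    have step3 : ∀ i j,
        (∑ m ∈ (rxl i).index, ∑ n ∈ (ryl j).index,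
          S ((rxl i).left m * (ryl j).left n) *
            (((rxl i).right m * (ryl j).right n) * (S (ry.right j) * S (rx.right i))))
        = (Coalgebra.counit (R := k) (rx.left i) * Coalgebra.counit (R := k) (ry.left j)) •
            (S (ry.right j) * S (rx.right i)) := by
      intro i j
      have hcol := HopfAlgebra.sum_antipode_mul_eq_smul (mulRepr (rxl i) (ryl j))
      simp only [mulRepr] at hcol
      calc (∑ m ∈ (rxl i).index, ∑ n ∈ (ryl j).index,
          S ((rxl i).left m * (ryl j).left n) *
            (((rxl i).right m * (ryl j).right n) * (S (ry.right j) * S (rx.right i))))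
          = ∑ m ∈ (rxl i).index, ∑ n ∈ (ryl j).index,
              (S ((rxl i).left m * (ryl j).left n) * ((rxl i).right m * (ryl j).right n)) *
              (S (ry.right j) * S (rx.right i)) :=
            Finset.sum_congr rfl fun m _ => Finset.sum_congr rfl fun n _ => (mul_assoc _ _ _).symm
        _ = (∑ m ∈ (rxl i).index, ∑ n ∈ (ryl j).index,
              S ((rxl i).left m * (ryl j).left n) * ((rxl i).right m * (ryl j).right n)) *
              (S (ry.right j) * S (rx.right i)) := by
            rw [Finset.sum_mul]
            exact Finset.sum_congr rfl fun m _ => (Finset.sum_mul _ _ _).symm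
        _ = (∑ p ∈ (rxl i).index ×ˢ (ryl j).index,
              S ((rxl i).left p.1 * (ryl j).left p.2) * ((rxl i).right p.1 * (ryl j).right p.2)) *
              (S (ry.right j) * S (rx.right i)) := by
            rw [Finset.sum_product]
        _ = _ := by
            rw [hcol, smul_mul_assoc, one_mul, Bialgebra.counit_mul]
    refine Eq.trans (Finset.sum_congr rfl fun i _ =>
      Eq.trans Finset.sum_comm (Finset.sum_congr rfl fun j _ => step3 i j)) ?_
    -- final counit collapses
    calc ∑ i ∈ rx.index, ∑ j ∈ ry.index,
        (Coalgebra.counit (R := k) (rx.left i) * Coalgebra.counit (R := k) (ry.left j)) •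
          (S (ry.right j) * S (rx.right i))
        = ∑ i ∈ rx.index,
            S y * (Coalgebra.counit (R := k) (rx.left i) • S (rx.right i)) := by
          refine Finset.sum_congr rfl fun i _ => ?_
          calc ∑ j ∈ ry.index,
              (Coalgebra.counit (R := k) (rx.left i) * Coalgebra.counit (R := k) (ry.left j)) •
                (S (ry.right j) * S (rx.right i))
              = (∑ j ∈ ry.index, Coalgebra.counit (R := k) (ry.left j) • S (ry.right j)) *
                  (Coalgebra.counit (R := k) (rx.left i) • S (rx.right i)) := by
                rw [Finset.sum_mul]
                refine Finset.sum_congr rfl fun j _ => ?_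
                rw [smul_mul_smul_comm]
                rw [mul_comm (Coalgebra.counit (R := k) (rx.left i))]
              _ = S y * (Coalgebra.counit (R := k) (rx.left i) • S (rx.right i)) := by
                congr 1
                calc ∑ j ∈ ry.index, Coalgebra.counit (R := k) (ry.left j) • S (ry.right j)
                    = S (∑ j ∈ ry.index, Coalgebra.counit (R := k) (ry.left j) • ry.right j) := by
                      rw [map_sum]
                      exact Finset.sum_congr rfl fun j _ => (map_smul S _ _).symm
                  _ = S y := by rw [csumL ry]
      _ = S y * S x := by
          rw [← Finset.mul_sum]
          congr 1
          calc ∑ i ∈ rx.index, Coalgebra.counit (R := k) (rx.left i) • S (rx.right i)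
              = S (∑ i ∈ rx.index, Coalgebra.counit (R := k) (rx.left i) • rx.right i) := by
                rw [map_sum]; exact Finset.sum_congr rfl fun i _ => (map_smul S _ _).symm
            _ = S x := by rw [csumL rx]
  rw [← hE1, hE2]
end withlam

-- basis decomposition of a tensor
lemma basisDecomp {n : ℕ} (b : Module.Basis (Fin n) k A) (t : A ⊗[k] A) :
    t = ∑ j, b j ⊗ₜ[k] (TensorProduct.lid k A) ((LinearMap.rTensor A (b.coord j)) t) := by
  induction t with
  | zero => simp
  | tmul u v =>
      simp only [LinearMap.rTensor_tmul, TensorProduct.lid_tmul]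
      calc u ⊗ₜ[k] v = (∑ j, b.coord j u • b j) ⊗ₜ[k] v := by
            rw [show (∑ j, b.coord j u • b j) = u from ?_]
            · simp only [Module.Basis.coord_apply]
              exact b.sum_repr u
      _ = ∑ j, b j ⊗ₜ[k] (b.coord j u • v) := by
            rw [TensorProduct.sum_tmul]
            exact Finset.sum_congr rfl fun j _ => by
              rw [TensorProduct.smul_tmul, TensorProduct.tmul_smul]
  | add p q hp hq =>
      conv_lhs => rw [hp, hq]
      rw [← Finset.sum_add_distrib]
      exact Finset.sum_congr rfl fun j _ => by rw [map_add, map_add, TensorProduct.tmul_add]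

section nondeg

variable [FiniteDimensional k A]

lemma nondeg (lam : A →ₗ[k] k)
    (hlam : ∀ a : A, (TensorProduct.rid k A)
        ((LinearMap.lTensor A lam) (Coalgebra.comul (R := k) a)) = lam a • 1)
    (h0 : lam ≠ 0) (x : A) (hx : ∀ y, lam (y * x) = 0) : x = 0 := by
  classical
  set b := Module.finBasis k A with hb
  set comp : A → Fin (Module.finrank k A) → A := fun z j =>
    (TensorProduct.lid k A) ((LinearMap.rTensor A (b.coord j)) (Coalgebra.comul (R := k) z))
    with hcompdef
  have hdec : ∀ z : A, Coalgebra.comul (R := k) z = ∑ j, b j ⊗ₜ[k] comp z j :=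
    fun z => basisDecomp b _
  have hcomp : ∀ z, (∀ y, lam (y * z) = 0) → ∀ j y, lam (y * comp z j) = 0 := by
    intro z hz j y
    have h2 := two lam hlam z y
      (⟨Finset.univ, fun j => b j, comp z, (hdec z).symm⟩ : Coalgebra.Repr k z (Fin (Module.finrank k A)))
      (ℛ k y) (fun i => ℛ k ((ℛ k y).left i)) (fun i => ℛ k ((ℛ k y).right i))
    simp only [hz] at h2
    simp only [zero_smul, Finset.sum_const_zero] at h2
    have h3 : ∑ j, lam (y * comp z j) • b j = 0 := h2.symm
    exact Fintype.linearIndependent_iff.mp b.linearIndependent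
      (fun j => lam (y * comp z j)) h3 j
  have heps : ∀ z, (∀ y, lam (y * z) = 0) → Coalgebra.counit (R := k) z = 0 := by
    intro z hz
    have hant := HopfAlgebra.sum_antipode_mul_eq_smul
      (⟨Finset.univ, fun j => b j, comp z, (hdec z).symm⟩ : Coalgebra.Repr k z (Fin (Module.finrank k A)))
    simp only at hant
    obtain ⟨y0, hy0⟩ : ∃ y0, lam y0 ≠ 0 := by
      by_contra h
      push_neg at h
      exact h0 (LinearMap.ext fun v => by simpa using h v)
    have hz0 : lam (y0 * (Coalgebra.counit (R := k) z • 1)) = 0 := by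
      rw [← hant, Finset.mul_sum, map_sum]
      refine Finset.sum_eq_zero fun j _ => ?_
      rw [← mul_assoc]
      exact hcomp z hz j _
    rw [mul_smul_comm, mul_one, map_smul, smul_eq_mul] at hz0
    exact (mul_eq_zero.mp hz0).resolve_right hy0
  have hfin := csumR (⟨Finset.univ, fun j => b j, comp x, (hdec x).symm⟩ : Coalgebra.Repr k x (Fin (Module.finrank k A)))
  simp only at hfin
  rw [← hfin]
  refine Finset.sum_eq_zero fun j _ => ?_
  rw [heps _ (hcomp x hx j), zero_smul]

end nondeg

-- the map u ⊗ (v ⊗ z) ↦ (t * (u ⊗ v)) * (1 ⊗ S z)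
noncomputable def phi2 (t : A ⊗[k] A) : A ⊗[k] (A ⊗[k] A) →ₗ[k] A ⊗[k] A :=
  (LinearMap.mul' k (A ⊗[k] A)) ∘ₗ
    (LinearMap.lTensor (A ⊗[k] A) ((TensorProduct.mk k A A 1) ∘ₗ HopfAlgebra.antipode (R := k))) ∘ₗ
    (LinearMap.rTensor A (LinearMap.mulLeft k t)) ∘ₗ
    (TensorProduct.assoc k A A A).symm.toLinearMap

@[simp] lemma phi2_tmul (t : A ⊗[k] A) (u v z : A) :
    phi2 t (u ⊗ₜ[k] (v ⊗ₜ[k] z)) =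
      (t * (u ⊗ₜ[k] v)) * ((1 : A) ⊗ₜ[k] HopfAlgebra.antipode (R := k) z) := by
  simp [phi2]

/-- identity (6): for a right integral `Λ`, `ΔΛ · (y ⊗ 1) = ΔΛ · (1 ⊗ S y)`. -/
lemma six (Λ : A) (hright : ∀ z : A, Λ * z = Coalgebra.counit (R := k) z • Λ) (y : A) :
    (Coalgebra.comul (R := k) Λ) * (y ⊗ₜ[k] (1 : A))
      = (Coalgebra.comul (R := k) Λ) * ((1 : A) ⊗ₜ[k] HopfAlgebra.antipode (R := k) y) := by
  classical
  set S := HopfAlgebra.antipode (R := k) (A := A) with hS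
  set t := Coalgebra.comul (R := k) Λ with htdef
  have ht : ∀ v : A, t * Coalgebra.comul (R := k) v = Coalgebra.counit (R := k) v • t := by
    intro v
    rw [htdef, ← Bialgebra.comul_mul, hright v, map_smul]
  set ry := ℛ k y with hry
  set ryl : ∀ j, Coalgebra.Repr k (ry.left j) (A × A) := fun j => ℛ k (ry.left j) with hryl
  set ryr : ∀ j, Coalgebra.Repr k (ry.right j) (A × A) := fun j => ℛ k (ry.right j) with hryr
  have step1 : y ⊗ₜ[k] (1 : A) = ∑ j ∈ ry.index, ∑ n ∈ (ryr j).index,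
      ry.left j ⊗ₜ[k] ((ryr j).left n * S ((ryr j).right n)) := by
    calc y ⊗ₜ[k] (1 : A)
        = (∑ j ∈ ry.index, Coalgebra.counit (R := k) (ry.right j) • ry.left j) ⊗ₜ[k] (1 : A) := by
          rw [csumR ry]
      _ = ∑ j ∈ ry.index, ry.left j ⊗ₜ[k] (Coalgebra.counit (R := k) (ry.right j) • (1 : A)) := by
          rw [TensorProduct.sum_tmul]
          exact Finset.sum_congr rfl fun j _ => by
            rw [TensorProduct.smul_tmul, TensorProduct.tmul_smul]
      _ = _ := by
          refine Finset.sum_congr rfl fun j _ => ?_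
          rw [← HopfAlgebra.sum_mul_antipode_eq_smul (ryr j), TensorProduct.tmul_sum]
  calc t * (y ⊗ₜ[k] (1 : A))
      = ∑ j ∈ ry.index, ∑ n ∈ (ryr j).index,
          (t * (ry.left j ⊗ₜ[k] (ryr j).left n)) * ((1:A) ⊗ₜ[k] S ((ryr j).right n)) := by
        rw [step1, Finset.mul_sum]
        refine Finset.sum_congr rfl fun j _ => ?_
        rw [Finset.mul_sum]
        refine Finset.sum_congr rfl fun n _ => ?_
        rw [mul_assoc]
        congr 1
        rw [Algebra.TensorProduct.tmul_mul_tmul, mul_one]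
    _ = ∑ j ∈ ry.index, ∑ n ∈ (ryr j).index,
          phi2 t (ry.left j ⊗ₜ[k] ((ryr j).left n ⊗ₜ[k] (ryr j).right n)) := by
        refine Finset.sum_congr rfl fun j _ => Finset.sum_congr rfl fun n _ => ?_
        rw [phi2_tmul]
    _ = ∑ j ∈ ry.index, ∑ n ∈ (ryl j).index,
          phi2 t ((ryl j).left n ⊗ₜ[k] ((ryl j).right n ⊗ₜ[k] ry.right j)) :=
        (coassoc3 (phi2 t) ry ryl ryr).symm
    _ = ∑ j ∈ ry.index, Coalgebra.counit (R := k) (ry.left j) •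
          (t * ((1:A) ⊗ₜ[k] S (ry.right j))) := by
        refine Finset.sum_congr rfl fun j _ => ?_
        calc ∑ n ∈ (ryl j).index,
            phi2 t ((ryl j).left n ⊗ₜ[k] ((ryl j).right n ⊗ₜ[k] ry.right j))
            = ∑ n ∈ (ryl j).index,
                (t * ((ryl j).left n ⊗ₜ[k] (ryl j).right n)) * ((1:A) ⊗ₜ[k] S (ry.right j)) :=
              Finset.sum_congr rfl fun n _ => by rw [phi2_tmul]
          _ = (t * ∑ n ∈ (ryl j).index, ((ryl j).left n ⊗ₜ[k] (ryl j).right n)) *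
                ((1:A) ⊗ₜ[k] S (ry.right j)) := by
              rw [Finset.mul_sum, Finset.sum_mul]
          _ = _ := by
              rw [(ryl j).eq, ht, smul_mul_assoc]
    _ = t * ((1:A) ⊗ₜ[k] S y) := by
        calc ∑ j ∈ ry.index, Coalgebra.counit (R := k) (ry.left j) •
              (t * ((1:A) ⊗ₜ[k] S (ry.right j)))
            = t * ((1:A) ⊗ₜ[k]
                (∑ j ∈ ry.index, Coalgebra.counit (R := k) (ry.left j) • S (ry.right j))) := by
              rw [TensorProduct.tmul_sum, Finset.mul_sum]
              exact Finset.sum_congr rfl fun j _ => by rw [TensorProduct.tmul_smul, mul_smul_comm]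
          _ = _ := by
              congr 2
              calc ∑ j ∈ ry.index, Coalgebra.counit (R := k) (ry.left j) • S (ry.right j)
                  = S (∑ j ∈ ry.index, Coalgebra.counit (R := k) (ry.left j) • ry.right j) := by
                    rw [map_sum]
                    exact Finset.sum_congr rfl fun j _ => (map_smul S _ _).symm
                _ = S y := by rw [csumL ry]

end LamConj

open Coalgebra HopfAlgebra LinearMap LamConj in
/-- Let `A` be a finite-dimensional unimodular Hopf algebra over a field
`k` and let `λ` be a left integral in the dual.  Then `λ` is invariant under the conjugate
action: `λ(a₍₁₎ b S(a₍₂₎)) = ε(a) λ(b)` for all `a b ∈ A`. -/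
theorem lam_conjugate_invariant (k A : Type*) [Field k] [Ring A] [HopfAlgebra k A]
    [FiniteDimensional k A]
    (hu : ∀ Λ : A, (∀ a : A, a * Λ = Coalgebra.counit (R := k) a • Λ) ↔
      (∀ a : A, Λ * a = Coalgebra.counit (R := k) a • Λ))
    (lam : A →ₗ[k] k)
    (hlam : ∀ a : A, (TensorProduct.rid k A)
        ((LinearMap.lTensor A lam) (Coalgebra.comul (R := k) a)) = lam a • 1) :
    ∀ a b : A,
      lam ((LinearMap.mul' k A)
        (TensorProduct.map (LinearMap.mulRight k b) (HopfAlgebra.antipode (R := k))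
          (Coalgebra.comul (R := k) a))) =
      Coalgebra.counit (R := k) a * lam b := by
  classical
  by_cases h0 : lam = 0
  · intro a b; simp [h0]
  intro a b
  set S := HopfAlgebra.antipode (R := k) (A := A) with hS
  -- the "multiplication on the right" pairing map
  set Rmap : A →ₗ[k] (A →ₗ[k] k) := ((LinearMap.mul k A).flip).compr₂ lam with hRmap
  have hRapp : ∀ x y : A, Rmap x y = lam (y * x) := fun x y => rfl
  have hinj : Function.Injective Rmap := by
    intro u v huv
    have hz : ∀ y, lam (y * (u - v)) = 0 := by
      intro y
      have := LinearMap.congr_fun huv y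
      rw [hRapp, hRapp] at this
      rw [mul_sub, map_sub, this, sub_self]
    have := nondeg lam hlam h0 (u - v) hz
    exact sub_eq_zero.mp this
  have hsurj : Function.Surjective Rmap :=
    (LinearMap.injective_iff_surjective_of_finrank_eq_finrank
      (Subspace.dual_finrank_eq (V := A)).symm).mp hinj
  obtain ⟨Lam, hLam0⟩ := hsurj (Coalgebra.counit (R := k) (A := A))
  have hLam : ∀ y, lam (y * Lam) = Coalgebra.counit (R := k) y := by
    intro y
    rw [← hRapp, hLam0]
  have hleft : ∀ z : A, z * Lam = Coalgebra.counit (R := k) z • Lam := by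
    intro z
    apply hinj
    apply LinearMap.ext
    intro y
    simp only [hRapp]
    rw [← mul_assoc, hLam, mul_smul_comm, map_smul, hLam, smul_eq_mul,
      Bialgebra.counit_mul, mul_comm]
  have hright : ∀ z : A, Lam * z = Coalgebra.counit (R := k) z • Lam := (hu Lam).mp hleft
  set rt : Coalgebra.Repr k Lam (A × A) := ℛ k Lam with hrt
  have hlamLam : lam Lam = 1 := by
    have h := hLam 1
    rw [one_mul] at h
    rw [h, Bialgebra.counit_one]
  have hone : ∑ i ∈ rt.index, lam (rt.right i) • rt.left i = (1 : A) := by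
    have h := hl lam hlam Lam
    rw [← rt.eq] at h
    simp only [map_sum, CR_tmul] at h
    rw [hlamLam, one_smul] at h
    exact h
  have sixSum : ∀ y : A, ∑ i ∈ rt.index, (rt.left i * y) ⊗ₜ[k] rt.right i
      = ∑ i ∈ rt.index, rt.left i ⊗ₜ[k] (rt.right i * HopfAlgebra.antipode (R := k) y) := by
    intro y
    have h := six Lam hright y
    rw [← rt.eq] at h
    calc ∑ i ∈ rt.index, (rt.left i * y) ⊗ₜ[k] rt.right i
        = (∑ i ∈ rt.index, rt.left i ⊗ₜ[k] rt.right i) * (y ⊗ₜ[k] (1 : A)) := by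
          rw [Finset.sum_mul]
          exact Finset.sum_congr rfl fun i _ => by
            rw [Algebra.TensorProduct.tmul_mul_tmul, mul_one]
      _ = (∑ i ∈ rt.index, rt.left i ⊗ₜ[k] rt.right i) *
            ((1 : A) ⊗ₜ[k] HopfAlgebra.antipode (R := k) y) := h
      _ = ∑ i ∈ rt.index, rt.left i ⊗ₜ[k] (rt.right i * HopfAlgebra.antipode (R := k) y) := by
          rw [Finset.sum_mul]
          exact Finset.sum_congr rfl fun i _ => by
            rw [Algebra.TensorProduct.tmul_mul_tmul, mul_one]
  have nineteen : ∀ y : A,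
      ∑ i ∈ rt.index, lam (rt.right i * HopfAlgebra.antipode (R := k) y) • rt.left i = y := by
    intro y
    have h := congrArg (CR lam) (sixSum y)
    simp only [map_sum, CR_tmul] at h
    rw [← h]
    calc ∑ i ∈ rt.index, lam (rt.right i) • (rt.left i * y)
        = (∑ i ∈ rt.index, lam (rt.right i) • rt.left i) * y := by
          rw [Finset.sum_mul]
          exact Finset.sum_congr rfl fun i _ => (smul_mul_assoc _ _ _).symm
      _ = y := by rw [hone, one_mul]
  have Sinj : Function.Injective (HopfAlgebra.antipode (R := k) (A := A)) := by
    intro u v huv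
    have h := nineteen u
    rw [show HopfAlgebra.antipode (R := k) u = HopfAlgebra.antipode (R := k) v from huv] at h
    exact h.symm.trans (nineteen v)
  have Ssurj : Function.Surjective (HopfAlgebra.antipode (R := k) (A := A)) :=
    LinearMap.injective_iff_surjective.mp Sinj
  have SP : ∀ z : A,
      HopfAlgebra.antipode (R := k) (∑ i ∈ rt.index, lam (rt.right i * z) • rt.left i) = z := by
    intro z
    obtain ⟨y, rfl⟩ := Ssurj z
    rw [nineteen y]
  have four : ∀ x : A,
      ∑ i ∈ rt.index, lam (x * rt.right i) • rt.left i = HopfAlgebra.antipode (R := k) x := by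
    intro x
    have h := two lam hlam Lam x rt (ℛ k x)
      (fun i => ℛ k ((ℛ k x).left i)) (fun i => ℛ k ((ℛ k x).right i))
    rw [← h]
    calc ∑ i ∈ (ℛ k x).index,
        lam ((ℛ k x).right i * Lam) • HopfAlgebra.antipode (R := k) ((ℛ k x).left i)
        = ∑ i ∈ (ℛ k x).index, Coalgebra.counit (R := k) ((ℛ k x).right i) •
            HopfAlgebra.antipode (R := k) ((ℛ k x).left i) :=
          Finset.sum_congr rfl fun i _ => by rw [hLam]
      _ = HopfAlgebra.antipode (R := k)
            (∑ i ∈ (ℛ k x).index, Coalgebra.counit (R := k) ((ℛ k x).right i) • (ℛ k x).left i) := by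
          rw [map_sum]
          exact Finset.sum_congr rfl fun i _ =>
            (map_smul (HopfAlgebra.antipode (R := k) (A := A)) _ _).symm
      _ = HopfAlgebra.antipode (R := k) x := by rw [csumR (ℛ k x)]
  have key : ∀ x y : A,
      lam (x * y) = lam (y * HopfAlgebra.antipode (R := k) (HopfAlgebra.antipode (R := k) x)) := by
    intro x y
    obtain ⟨z, hz0⟩ := hsurj (lam ∘ₗ LinearMap.mulLeft k x)
    have hz : ∀ w, lam (w * z) = lam (x * w) := by
      intro w
      have h := LinearMap.congr_fun hz0 w
      rw [hRapp] at h
      simpa using h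
    have hzSS : z = HopfAlgebra.antipode (R := k) (HopfAlgebra.antipode (R := k) x) := by
      calc z = HopfAlgebra.antipode (R := k)
            (∑ i ∈ rt.index, lam (rt.right i * z) • rt.left i) := (SP z).symm
        _ = HopfAlgebra.antipode (R := k)
            (∑ i ∈ rt.index, lam (x * rt.right i) • rt.left i) := by
            congr 1
            exact Finset.sum_congr rfl fun i _ => by rw [hz]
        _ = _ := by rw [four]
    rw [← hzSS]
    exact (hz y).symm
  -- final assembly
  set ra := ℛ k a with hra
  rw [← ra.eq]
  simp only [map_sum, TensorProduct.map_tmul, LinearMap.mul'_apply, LinearMap.mulRight_apply]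
  calc ∑ i ∈ ra.index, lam (ra.left i * b * HopfAlgebra.antipode (R := k) (ra.right i))
      = ∑ i ∈ ra.index, lam (b * (HopfAlgebra.antipode (R := k) (ra.right i) *
          HopfAlgebra.antipode (R := k) (HopfAlgebra.antipode (R := k) (ra.left i)))) := by
        refine Finset.sum_congr rfl fun i _ => ?_
        rw [mul_assoc, key, mul_assoc]
    _ = ∑ i ∈ ra.index, lam (b * HopfAlgebra.antipode (R := k)
          (HopfAlgebra.antipode (R := k) (ra.left i) * ra.right i)) := by
        refine Finset.sum_congr rfl fun i _ => ?_
        rw [S_mul]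
    _ = lam (b * HopfAlgebra.antipode (R := k)
          (∑ i ∈ ra.index, HopfAlgebra.antipode (R := k) (ra.left i) * ra.right i)) := by
        rw [map_sum, Finset.mul_sum, map_sum]
    _ = Coalgebra.counit (R := k) a * lam b := by
        rw [HopfAlgebra.sum_antipode_mul_eq_smul ra, map_smul, S_one, mul_smul_comm,
          mul_one, map_smul, smul_eq_mul]
end

section
/- Let A be a Hopf algebra over a field k and let Λ ∈ A be a two-sided integral (both a left and a right integral). Then for every a ∈ A the following equality holds in A ⊗ A: a₍₁₎ S(Λ₍₁₎) S(a₍₂₎) ⊗ a₍₃₎ Λ₍₂₎ S(a₍₄₎) = ε(a) · (S(Λ₍₁₎) ⊗ Λ₍₂₎). In other words, the element U = S(Λ₍₁₎) ⊗ Λ₍₂₎ is invariant under the diagonal conjugate action a · (b ⊗ c) = (a₍₁₎ ▷ b) ⊗ (a₍₂₎ ▷ c), where a ▷ b = a₍₁₎ b S(a₍₂₎). -/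
open scoped TensorProduct

open scoped TensorProduct
open Coalgebra HopfAlgebra TensorProduct LinearMap

section aux
variable {k A : Type*} [Field k] [Ring A] [HopfAlgebra k A]

lemma X3_repA (x : A) (r : Coalgebra.Repr k x (A × A)) (rL : ∀ i : A × A, Coalgebra.Repr k (r.left i) (A × A)) :
    (Coalgebra.comul (R := k)).rTensor A (Coalgebra.comul x)
      = ∑ i ∈ r.index, ∑ j ∈ (rL i).index,
          ((rL i).left j ⊗ₜ[k] (rL i).right j) ⊗ₜ[k] r.right i := by
  rw [← r.eq, map_sum]
  refine Finset.sum_congr rfl fun i _ => ?_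
  rw [rTensor_tmul, ← (rL i).eq, sum_tmul]

lemma X3_repB (x : A) (r : Coalgebra.Repr k x (A × A)) (rR : ∀ i : A × A, Coalgebra.Repr k (r.right i) (A × A)) :
    (Coalgebra.comul (R := k)).rTensor A (Coalgebra.comul x)
      = ∑ i ∈ r.index, ∑ j ∈ (rR i).index,
          (r.left i ⊗ₜ[k] (rR i).left j) ⊗ₜ[k] (rR i).right j := by
  have h1 : (Coalgebra.comul (R := k)).lTensor A (Coalgebra.comul x)
      = ∑ i ∈ r.index, ∑ j ∈ (rR i).index,
          r.left i ⊗ₜ[k] ((rR i).left j ⊗ₜ[k] (rR i).right j) := by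
    rw [← r.eq, map_sum]
    refine Finset.sum_congr rfl fun i _ => ?_
    rw [lTensor_tmul, ← (rR i).eq, tmul_sum]
  have h2 := Coalgebra.coassoc_symm_apply (R := k) x
  rw [h1] at h2
  rw [← h2, ← LinearEquiv.coe_coe, map_sum]
  refine Finset.sum_congr rfl fun i _ => ?_
  rw [map_sum]
  refine Finset.sum_congr rfl fun j _ => ?_
  simp [TensorProduct.assoc_symm_tmul]

lemma repr_smul_left {x : A} (r : Coalgebra.Repr k x (A × A)) :
    ∑ i ∈ r.index, counit (R := k) (r.right i) • r.left i = x := by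
  have h := Coalgebra.sum_tmul_counit_eq r
  have h2 := congrArg (TensorProduct.rid k A) h
  simp only [map_sum, TensorProduct.rid_tmul, one_smul] at h2
  simpa using h2

lemma repr_smul_right {x : A} (r : Coalgebra.Repr k x (A × A)) :
    ∑ i ∈ r.index, counit (R := k) (r.left i) • r.right i = x := by
  have h := Coalgebra.sum_counit_tmul_eq r
  have h2 := congrArg (TensorProduct.lid k A) h
  simp only [map_sum, TensorProduct.lid_tmul, one_smul] at h2
  simpa using h2

/-- The linear map `(a ⊗ b) ⊗ (c ⊗ d) ↦ (S a * b) * (S d * S c)`. -/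
noncomputable def theta (k A : Type*) [Field k] [Ring A] [HopfAlgebra k A] :
    (A ⊗[k] A) ⊗[k] (A ⊗[k] A) →ₗ[k] A :=
  LinearMap.mul' k A ∘ₗ TensorProduct.map
    (LinearMap.mul' k A ∘ₗ (antipode (R := k)).rTensor A)
    (LinearMap.mul' k A ∘ₗ TensorProduct.map (antipode (R := k)) (antipode (R := k))
      ∘ₗ (TensorProduct.comm k A A).toLinearMap)

@[simp] lemma theta_tmul (a b c d : A) :
    theta k A ((a ⊗ₜ[k] b) ⊗ₜ[k] (c ⊗ₜ[k] d))
      = (antipode (R := k) a * b) * (antipode (R := k) d * antipode (R := k) c) := by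
  simp [theta]

/-- `(a ⊗ b) ⊗ c ↦ (a ⊗ b) ⊗ (c ⊗ 1)` as an algebra hom. -/
noncomputable def iota1 (k A : Type*) [Field k] [Ring A] [HopfAlgebra k A] :
    (A ⊗[k] A) ⊗[k] A →ₐ[k] (A ⊗[k] A) ⊗[k] (A ⊗[k] A) :=
  Algebra.TensorProduct.map (AlgHom.id k _) Algebra.TensorProduct.includeLeft

/-- `(a ⊗ b) ⊗ c ↦ (a ⊗ b) ⊗ (1 ⊗ c)` as an algebra hom. -/
noncomputable def iota2 (k A : Type*) [Field k] [Ring A] [HopfAlgebra k A] :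
    (A ⊗[k] A) ⊗[k] A →ₐ[k] (A ⊗[k] A) ⊗[k] (A ⊗[k] A) :=
  Algebra.TensorProduct.map (AlgHom.id k _) Algebra.TensorProduct.includeRight

@[simp] lemma iota1_tmul (a b c : A) :
    iota1 k A ((a ⊗ₜ[k] b) ⊗ₜ[k] c) = (a ⊗ₜ[k] b) ⊗ₜ[k] (c ⊗ₜ[k] (1 : A)) := by
  simp [iota1]

@[simp] lemma iota2_tmul (a b c : A) :
    iota2 k A ((a ⊗ₜ[k] b) ⊗ₜ[k] c) = (a ⊗ₜ[k] b) ⊗ₜ[k] ((1 : A) ⊗ₜ[k] c) := by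
  simp [iota2]


set_option maxHeartbeats 2000000 in
lemma antipode_mul_rev (x y : A) :
    antipode (R := k) (x * y) = antipode (R := k) y * antipode (R := k) x := by
  classical
  let rx := ℛ k x
  let ry := ℛ k y
  let rxL : ∀ i : A × A, Coalgebra.Repr k (rx.left i) (A × A) := fun i => ℛ k (rx.left i)
  let rxR : ∀ i : A × A, Coalgebra.Repr k (rx.right i) (A × A) := fun i => ℛ k (rx.right i)
  let ryL : ∀ m : A × A, Coalgebra.Repr k (ry.left m) (A × A) := fun m => ℛ k (ry.left m)
  let ryR : ∀ m : A × A, Coalgebra.Repr k (ry.right m) (A × A) := fun m => ℛ k (ry.right m)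
  -- the central element
  set Ω := iota1 k A ((Coalgebra.comul (R := k)).rTensor A (Coalgebra.comul x)) *
      iota2 k A ((Coalgebra.comul (R := k)).rTensor A (Coalgebra.comul y)) with hΩ
  -- evaluation via repB : Θ Ω = S (x * y)
  have hΩB : Ω = ∑ i ∈ rx.index, ∑ j ∈ (rxR i).index, ∑ m ∈ ry.index, ∑ n ∈ (ryR m).index,
      ((rx.left i * ry.left m) ⊗ₜ[k] ((rxR i).left j * (ryR m).left n)) ⊗ₜ[k]
        ((rxR i).right j ⊗ₜ[k] (ryR m).right n) := by
    rw [hΩ, X3_repB x rx rxR, X3_repB y ry ryR, map_sum, map_sum]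
    simp only [map_sum, iota1_tmul, iota2_tmul]
    simp only [Finset.sum_mul]
    simp only [Finset.mul_sum]
    simp only [Algebra.TensorProduct.tmul_mul_tmul, mul_one, one_mul]
  have hΩA : Ω = ∑ i ∈ rx.index, ∑ j ∈ (rxL i).index, ∑ m ∈ ry.index, ∑ n ∈ (ryL m).index,
      (((rxL i).left j * (ryL m).left n) ⊗ₜ[k] ((rxL i).right j * (ryL m).right n)) ⊗ₜ[k]
        (rx.right i ⊗ₜ[k] ry.right m) := by
    rw [hΩ, X3_repA x rx rxL, X3_repA y ry ryL, map_sum, map_sum]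
    simp only [map_sum, iota1_tmul, iota2_tmul]
    simp only [Finset.sum_mul]
    simp only [Finset.mul_sum]
    simp only [Algebra.TensorProduct.tmul_mul_tmul, mul_one, one_mul]
  -- evaluation via repB : theta Ω = S (x * y)
  have hB : theta k A Ω = antipode (R := k) (x * y) := by
    rw [hΩB]
    simp only [map_sum, theta_tmul]
    have key : ∀ i ∈ rx.index, ∀ m ∈ ry.index,
        (∑ j ∈ (rxR i).index, ∑ n ∈ (ryR m).index,
          (antipode (R := k) (rx.left i * ry.left m) * ((rxR i).left j * (ryR m).left n)) *
            (antipode (R := k) ((ryR m).right n) * antipode (R := k) ((rxR i).right j)))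
        = (counit (R := k) (rx.right i) * counit (R := k) (ry.right m)) •
            antipode (R := k) (rx.left i * ry.left m) := by
      intro i _ m _
      have hy := sum_mul_antipode_eq_smul (R := k) (ryR m)
      have hx := sum_mul_antipode_eq_smul (R := k) (rxR i)
      have inner : ∀ j, (∑ n ∈ (ryR m).index,
          (antipode (R := k) (rx.left i * ry.left m) * ((rxR i).left j * (ryR m).left n)) *
            (antipode (R := k) ((ryR m).right n) * antipode (R := k) ((rxR i).right j)))
          = counit (R := k) (ry.right m) •
              (antipode (R := k) (rx.left i * ry.left m) *
                ((rxR i).left j * antipode (R := k) ((rxR i).right j))) := by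
        intro j
        have h1 : ∀ n, (antipode (R := k) (rx.left i * ry.left m) *
              ((rxR i).left j * (ryR m).left n)) *
            (antipode (R := k) ((ryR m).right n) * antipode (R := k) ((rxR i).right j))
            = antipode (R := k) (rx.left i * ry.left m) * ((rxR i).left j *
                (((ryR m).left n * antipode (R := k) ((ryR m).right n)) *
                  antipode (R := k) ((rxR i).right j))) := by
          intro n; simp only [mul_assoc]
        rw [Finset.sum_congr rfl fun n _ => h1 n, ← Finset.mul_sum, ← Finset.mul_sum,
          ← Finset.sum_mul, hy, smul_mul_assoc, one_mul, mul_smul_comm, mul_smul_comm]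
      rw [Finset.sum_congr rfl fun j _ => inner j, ← Finset.smul_sum, ← Finset.mul_sum, hx,
        mul_smul_comm, mul_one, smul_smul, mul_comm]
    have hx2 := repr_smul_left (k := k) rx
    have hy2 := repr_smul_left (k := k) ry
    calc ∑ i ∈ rx.index, ∑ j ∈ (rxR i).index, ∑ m ∈ ry.index, ∑ n ∈ (ryR m).index,
          (antipode (R := k) (rx.left i * ry.left m) * ((rxR i).left j * (ryR m).left n)) *
            (antipode (R := k) ((ryR m).right n) * antipode (R := k) ((rxR i).right j))
        = ∑ i ∈ rx.index, ∑ m ∈ ry.index,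
            (counit (R := k) (rx.right i) * counit (R := k) (ry.right m)) •
              antipode (R := k) (rx.left i * ry.left m) := by
          refine Finset.sum_congr rfl fun i hi => ?_
          rw [Finset.sum_comm]
          exact Finset.sum_congr rfl fun m hm => key i hi m hm
      _ = antipode (R := k) (x * y) := by
          conv_rhs => rw [← hx2, ← hy2]
          rw [Finset.sum_mul]
          simp only [Finset.mul_sum, smul_mul_assoc, mul_smul_comm, map_sum, map_smul,
            smul_smul]
          exact Finset.sum_congr rfl fun i _ => Finset.sum_congr rfl fun m _ => by
            rw [mul_comm]
  -- evaluation via repA : theta Ω = S y * S x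
  have hA : theta k A Ω = antipode (R := k) y * antipode (R := k) x := by
    rw [hΩA]
    simp only [map_sum, theta_tmul]
    have key : ∀ i ∈ rx.index, ∀ m ∈ ry.index,
        (∑ j ∈ (rxL i).index, ∑ n ∈ (ryL m).index,
          (antipode (R := k) ((rxL i).left j * (ryL m).left n) *
              ((rxL i).right j * (ryL m).right n)) *
            (antipode (R := k) (ry.right m) * antipode (R := k) (rx.right i)))
        = (counit (R := k) (rx.left i) * counit (R := k) (ry.left m)) •
            (antipode (R := k) (ry.right m) * antipode (R := k) (rx.right i)) := by
      intro i _ m _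
      have hcm : (∑ j ∈ (rxL i).index, ∑ n ∈ (ryL m).index,
          ((rxL i).left j * (ryL m).left n) ⊗ₜ[k] ((rxL i).right j * (ryL m).right n))
          = Coalgebra.comul (R := k) (rx.left i * ry.left m) := by
        rw [Bialgebra.comul_mul, ← (rxL i).eq, ← (ryL m).eq]
        simp only [Finset.sum_mul]
        simp only [Finset.mul_sum]
        simp only [Algebra.TensorProduct.tmul_mul_tmul]
      have h2 := mul_antipode_rTensor_comul_apply (R := k) (a := rx.left i * ry.left m)
      rw [← hcm] at h2
      simp only [map_sum, rTensor_tmul, LinearMap.mul'_apply] at h2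
      calc (∑ j ∈ (rxL i).index, ∑ n ∈ (ryL m).index,
            (antipode (R := k) ((rxL i).left j * (ryL m).left n) *
                ((rxL i).right j * (ryL m).right n)) *
              (antipode (R := k) (ry.right m) * antipode (R := k) (rx.right i)))
          = (∑ j ∈ (rxL i).index, ∑ n ∈ (ryL m).index,
              antipode (R := k) ((rxL i).left j * (ryL m).left n) *
                ((rxL i).right j * (ryL m).right n)) *
              (antipode (R := k) (ry.right m) * antipode (R := k) (rx.right i)) := by
            rw [Finset.sum_mul]
            exact Finset.sum_congr rfl fun j _ => (Finset.sum_mul _ _ _).symm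
        _ = (counit (R := k) (rx.left i) * counit (R := k) (ry.left m)) •
              (antipode (R := k) (ry.right m) * antipode (R := k) (rx.right i)) := by
            rw [h2, Bialgebra.counit_mul, Algebra.smul_def]
    have hx2 := repr_smul_right (k := k) rx
    have hy2 := repr_smul_right (k := k) ry
    calc ∑ i ∈ rx.index, ∑ j ∈ (rxL i).index, ∑ m ∈ ry.index, ∑ n ∈ (ryL m).index,
          (antipode (R := k) ((rxL i).left j * (ryL m).left n) *
              ((rxL i).right j * (ryL m).right n)) *
            (antipode (R := k) (ry.right m) * antipode (R := k) (rx.right i))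
        = ∑ i ∈ rx.index, ∑ m ∈ ry.index,
            (counit (R := k) (rx.left i) * counit (R := k) (ry.left m)) •
              (antipode (R := k) (ry.right m) * antipode (R := k) (rx.right i)) := by
          refine Finset.sum_congr rfl fun i hi => ?_
          rw [Finset.sum_comm]
          exact Finset.sum_congr rfl fun m hm => key i hi m hm
      _ = antipode (R := k) y * antipode (R := k) x := by
          conv_rhs => rw [← hx2, ← hy2]
          simp only [map_sum, map_smul, Finset.sum_mul, Finset.mul_sum, smul_mul_smul_comm]
          exact Finset.sum_congr rfl fun i _ => Finset.sum_congr rfl fun m _ => by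
            rw [mul_comm]
  exact hB.symm.trans hA

/-- `(a ⊗ b) ⊗ v ↦ (P * (a ⊗ b)) * (1 ⊗ S v)`. -/
noncomputable def enn (k A : Type*) [Field k] [Ring A] [HopfAlgebra k A] (P : A ⊗[k] A) :
    (A ⊗[k] A) ⊗[k] A →ₗ[k] A ⊗[k] A :=
  LinearMap.mul' k (A ⊗[k] A) ∘ₗ TensorProduct.map (LinearMap.mulLeft k P)
    ((TensorProduct.mk k A A 1) ∘ₗ antipode (R := k))

@[simp] lemma enn_tmul (P : A ⊗[k] A) (t : A ⊗[k] A) (v : A) :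
    enn k A P (t ⊗ₜ[k] v) = (P * t) * ((1 : A) ⊗ₜ[k] antipode (R := k) v) := by
  simp [enn]

/-- `((α ⊗ β) ⊗ γ) ⊗ δ ↦ ((α ⊗ γ) * P) * (S β ⊗ S δ)`. -/
noncomputable def phi (k A : Type*) [Field k] [Ring A] [HopfAlgebra k A] (P : A ⊗[k] A) :
    ((A ⊗[k] A) ⊗[k] A) ⊗[k] A →ₗ[k] A ⊗[k] A :=
  LinearMap.mul' k (A ⊗[k] A) ∘ₗ
    TensorProduct.map (LinearMap.mulRight k P)
      (TensorProduct.map (antipode (R := k)) (antipode (R := k))) ∘ₗ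
    (TensorProduct.tensorTensorTensorComm k A A A A).toLinearMap ∘ₗ
    (TensorProduct.assoc k (A ⊗[k] A) A A).toLinearMap

@[simp] lemma phi_tmul (P : A ⊗[k] A) (α β γ δ : A) :
    phi k A P (((α ⊗ₜ[k] β) ⊗ₜ[k] γ) ⊗ₜ[k] δ)
      = ((α ⊗ₜ[k] γ) * P) * (antipode (R := k) β ⊗ₜ[k] antipode (R := k) δ) := by
  simp [phi]

end aux


set_option maxHeartbeats 4000000 in
/-- Let `A` be a Hopf algebra over a field `k` and `Λ ∈ A` a two-sided
integral.  Then for every `a ∈ A`,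
`a₍₁₎ S(Λ₍₁₎) S(a₍₂₎) ⊗ a₍₃₎ Λ₍₂₎ S(a₍₄₎) = ε(a) • (S(Λ₍₁₎) ⊗ Λ₍₂₎)` in `A ⊗ A`, i.e. the
element `U = S(Λ₍₁₎) ⊗ Λ₍₂₎` is invariant under the diagonal conjugate action.  Here
`a₍₁₎ ⊗ a₍₂₎ ⊗ a₍₃₎ ⊗ a₍₄₎` is the three-fold iterated coproduct of `a` and
`Λ₍₁₎ ⊗ Λ₍₂₎ = Δ(Λ)`. -/
theorem U_invariant (k A : Type*) [Field k] [Ring A] [HopfAlgebra k A]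
    (Λ : A)
    (hl : ∀ a : A, a * Λ = Coalgebra.counit (R := k) a • Λ)
    (hr : ∀ a : A, Λ * a = Coalgebra.counit (R := k) a • Λ)
    (a : A)
    (ι : Type*) (s : Finset ι) (w x y z : ι → A)
    (ha3 : (LinearMap.rTensor A (LinearMap.rTensor A (Coalgebra.comul (R := k) (A := A))))
        ((LinearMap.rTensor A (Coalgebra.comul (R := k) (A := A)))
          (Coalgebra.comul (R := k) a))
      = ∑ i ∈ s, ((w i ⊗ₜ[k] x i) ⊗ₜ[k] y i) ⊗ₜ[k] z i)
    (κ : Type*) (t : Finset κ) (Λ1 Λ2 : κ → A)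
    (hΛrep : Coalgebra.comul (R := k) Λ = ∑ j ∈ t, Λ1 j ⊗ₜ[k] Λ2 j) :
    ∑ i ∈ s, ∑ j ∈ t,
        (w i * HopfAlgebra.antipode (R := k) (Λ1 j) * HopfAlgebra.antipode (R := k) (x i))
          ⊗ₜ[k] (y i * Λ2 j * HopfAlgebra.antipode (R := k) (z i)) =
      Coalgebra.counit (R := k) a •
        ∑ j ∈ t, HopfAlgebra.antipode (R := k) (Λ1 j) ⊗ₜ[k] Λ2 j := by
  classical
  have hH1 : ∀ b : A, Coalgebra.comul (R := k) b * Coalgebra.comul (R := k) Λ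
      = Coalgebra.counit (R := k) b • Coalgebra.comul (R := k) Λ := fun b => by
    rw [← Bialgebra.comul_mul, hl b, map_smul]
  have hH2 : ∀ b : A, Coalgebra.comul (R := k) Λ * Coalgebra.comul (R := k) b
      = Coalgebra.counit (R := k) b • Coalgebra.comul (R := k) Λ := fun b => by
    rw [← Bialgebra.comul_mul, hr b, map_smul]
  -- the key commutation property coming from Λ being a right integral
  have hR1 : ∀ c : A, Coalgebra.comul (R := k) Λ * (c ⊗ₜ[k] (1 : A))
      = Coalgebra.comul (R := k) Λ * ((1 : A) ⊗ₜ[k] HopfAlgebra.antipode (R := k) c) := by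
    intro c
    let rc := ℛ k c
    let rcL : ∀ i : A × A, Coalgebra.Repr k (rc.left i) (A × A) := fun i => ℛ k (rc.left i)
    let rcR : ∀ i : A × A, Coalgebra.Repr k (rc.right i) (A × A) := fun i => ℛ k (rc.right i)
    have e1 : enn k A (Coalgebra.comul (R := k) Λ)
        ((Coalgebra.comul (R := k)).rTensor A (Coalgebra.comul c))
        = Coalgebra.comul (R := k) Λ * (c ⊗ₜ[k] (1 : A)) := by
      rw [X3_repB c rc rcR]
      simp only [map_sum, enn_tmul]
      have inner : ∀ i ∈ rc.index, (∑ j ∈ (rcR i).index,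
          (Coalgebra.comul (R := k) Λ * (rc.left i ⊗ₜ[k] (rcR i).left j)) *
            ((1 : A) ⊗ₜ[k] HopfAlgebra.antipode (R := k) ((rcR i).right j)))
          = Coalgebra.counit (R := k) (rc.right i) •
              (Coalgebra.comul (R := k) Λ * (rc.left i ⊗ₜ[k] (1 : A))) := by
        intro i _
        have h1 : ∀ j, (Coalgebra.comul (R := k) Λ * (rc.left i ⊗ₜ[k] (rcR i).left j)) *
            ((1 : A) ⊗ₜ[k] HopfAlgebra.antipode (R := k) ((rcR i).right j))
            = Coalgebra.comul (R := k) Λ *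
                (rc.left i ⊗ₜ[k]
                  ((rcR i).left j * HopfAlgebra.antipode (R := k) ((rcR i).right j))) := by
          intro j
          rw [mul_assoc, Algebra.TensorProduct.tmul_mul_tmul, mul_one]
        rw [Finset.sum_congr rfl fun j _ => h1 j, ← Finset.mul_sum, ← tmul_sum,
          sum_mul_antipode_eq_smul (rcR i), tmul_smul, mul_smul_comm]
      rw [Finset.sum_congr rfl inner]
      have : ∀ i, Coalgebra.counit (R := k) (rc.right i) •
          (Coalgebra.comul (R := k) Λ * (rc.left i ⊗ₜ[k] (1 : A)))
          = Coalgebra.comul (R := k) Λ *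
              ((Coalgebra.counit (R := k) (rc.right i) • rc.left i) ⊗ₜ[k] (1 : A)) := by
        intro i
        rw [← smul_tmul', mul_smul_comm]
      rw [Finset.sum_congr rfl fun i _ => this i, ← Finset.mul_sum, ← sum_tmul,
        repr_smul_left rc]
    have e2 : enn k A (Coalgebra.comul (R := k) Λ)
        ((Coalgebra.comul (R := k)).rTensor A (Coalgebra.comul c))
        = Coalgebra.comul (R := k) Λ * ((1 : A) ⊗ₜ[k] HopfAlgebra.antipode (R := k) c) := by
      rw [X3_repA c rc rcL]
      simp only [map_sum, enn_tmul]
      have inner : ∀ i ∈ rc.index, (∑ j ∈ (rcL i).index,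
          (Coalgebra.comul (R := k) Λ * ((rcL i).left j ⊗ₜ[k] (rcL i).right j)) *
            ((1 : A) ⊗ₜ[k] HopfAlgebra.antipode (R := k) (rc.right i)))
          = Coalgebra.counit (R := k) (rc.left i) •
              (Coalgebra.comul (R := k) Λ *
                ((1 : A) ⊗ₜ[k] HopfAlgebra.antipode (R := k) (rc.right i))) := by
        intro i _
        rw [← Finset.sum_mul, ← Finset.mul_sum, (rcL i).eq, hH2, smul_mul_assoc]
      rw [Finset.sum_congr rfl inner]
      have : ∀ i, Coalgebra.counit (R := k) (rc.left i) •
          (Coalgebra.comul (R := k) Λ *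
            ((1 : A) ⊗ₜ[k] HopfAlgebra.antipode (R := k) (rc.right i)))
          = Coalgebra.comul (R := k) Λ *
              ((1 : A) ⊗ₜ[k]
                HopfAlgebra.antipode (R := k)
                  (Coalgebra.counit (R := k) (rc.left i) • rc.right i)) := by
        intro i
        rw [map_smul, tmul_smul, mul_smul_comm]
      rw [Finset.sum_congr rfl fun i _ => this i, ← Finset.mul_sum, ← tmul_sum, ← map_sum,
        repr_smul_right rc]
    rw [← e1, e2]
  -- the commutation property for the element U
  have hR1' : ∀ c : A, (∑ j ∈ t, HopfAlgebra.antipode (R := k) (Λ1 j) ⊗ₜ[k]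
        (Λ2 j * HopfAlgebra.antipode (R := k) c))
      = ∑ j ∈ t, (HopfAlgebra.antipode (R := k) c * HopfAlgebra.antipode (R := k) (Λ1 j))
          ⊗ₜ[k] Λ2 j := by
    intro c
    have h := hR1 c
    rw [hΛrep] at h
    simp only [Finset.sum_mul, Algebra.TensorProduct.tmul_mul_tmul, mul_one, one_mul] at h
    have h2 := congrArg (TensorProduct.map (HopfAlgebra.antipode (R := k)) (LinearMap.id)) h
    simp only [map_sum, TensorProduct.map_tmul, LinearMap.id_apply] at h2
    calc (∑ j ∈ t, HopfAlgebra.antipode (R := k) (Λ1 j) ⊗ₜ[k]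
          (Λ2 j * HopfAlgebra.antipode (R := k) c)) = _ := h2.symm
      _ = _ := Finset.sum_congr rfl fun j _ => by rw [antipode_mul_rev]
  -- representations of the four-fold coproduct of `a`
  let ra := ℛ k a
  let rb : ∀ i : A × A, Coalgebra.Repr k (ra.left i) (A × A) := fun i => ℛ k (ra.left i)
  let rf : ∀ i : A × A, ∀ j : A × A, Coalgebra.Repr k ((rb i).right j) (A × A) :=
    fun i j => ℛ k ((rb i).right j)
  have hX4 : (LinearMap.rTensor A (LinearMap.rTensor A (Coalgebra.comul (R := k) (A := A))))
        ((LinearMap.rTensor A (Coalgebra.comul (R := k) (A := A))) (Coalgebra.comul (R := k) a))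
      = ∑ i ∈ ra.index, ∑ j ∈ (rb i).index, ∑ p ∈ (rf i j).index,
          ((((rb i).left j ⊗ₜ[k] (rf i j).left p) ⊗ₜ[k] (rf i j).right p) ⊗ₜ[k] ra.right i) := by
    rw [← ra.eq, map_sum]
    simp only [rTensor_tmul]
    rw [map_sum]
    simp only [rTensor_tmul]
    refine Finset.sum_congr rfl fun i _ => ?_
    rw [X3_repB (ra.left i) (rb i) (rf i)]
    simp only [sum_tmul]
  -- the left-hand side is `phi` applied to the four-fold coproduct
  have hLHS : (∑ i ∈ s, ∑ j ∈ t,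
        (w i * HopfAlgebra.antipode (R := k) (Λ1 j) * HopfAlgebra.antipode (R := k) (x i))
          ⊗ₜ[k] (y i * Λ2 j * HopfAlgebra.antipode (R := k) (z i)))
      = phi k A (∑ j ∈ t, HopfAlgebra.antipode (R := k) (Λ1 j) ⊗ₜ[k] Λ2 j)
          ((LinearMap.rTensor A (LinearMap.rTensor A (Coalgebra.comul (R := k) (A := A))))
            ((LinearMap.rTensor A (Coalgebra.comul (R := k) (A := A)))
              (Coalgebra.comul (R := k) a))) := by
    rw [ha3, map_sum]
    simp only [phi_tmul]
    simp only [Finset.mul_sum, Finset.sum_mul, Algebra.TensorProduct.tmul_mul_tmul]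
  rw [hLHS, hX4, map_sum]
  simp only [map_sum, phi_tmul]
  simp only [Finset.mul_sum, Finset.sum_mul, Algebra.TensorProduct.tmul_mul_tmul]
  -- now the goal is a quadruple sum; collapse the inner double sums
  have key : ∀ i ∈ ra.index, ∀ j ∈ (rb i).index,
      (∑ p ∈ (rf i j).index, ∑ q ∈ t,
        (((rb i).left j * HopfAlgebra.antipode (R := k) (Λ1 q)) *
            HopfAlgebra.antipode (R := k) ((rf i j).left p))
          ⊗ₜ[k] (((rf i j).right p * Λ2 q) * HopfAlgebra.antipode (R := k) (ra.right i)))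
      = Coalgebra.counit (R := k) ((rb i).right j) •
          ∑ q ∈ t, ((rb i).left j * HopfAlgebra.antipode (R := k) (Λ1 q))
            ⊗ₜ[k] (Λ2 q * HopfAlgebra.antipode (R := k) (ra.right i)) := by
    intro i _ j _
    have hf := hH1 ((rb i).right j)
    rw [hΛrep, ← (rf i j).eq] at hf
    simp only [Finset.sum_mul, Finset.mul_sum, Algebra.TensorProduct.tmul_mul_tmul] at hf
    have h2 := congrArg (TensorProduct.map
      ((LinearMap.mulLeft k ((rb i).left j)) ∘ₗ HopfAlgebra.antipode (R := k))
      (LinearMap.mulRight k (HopfAlgebra.antipode (R := k) (ra.right i)))) hf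
    simp only [map_sum, map_smul, TensorProduct.map_tmul, LinearMap.coe_comp,
      Function.comp_apply, LinearMap.mulLeft_apply, LinearMap.mulRight_apply] at h2
    calc (∑ p ∈ (rf i j).index, ∑ q ∈ t,
          (((rb i).left j * HopfAlgebra.antipode (R := k) (Λ1 q)) *
              HopfAlgebra.antipode (R := k) ((rf i j).left p))
            ⊗ₜ[k] (((rf i j).right p * Λ2 q) * HopfAlgebra.antipode (R := k) (ra.right i)))
        = ∑ p ∈ (rf i j).index, ∑ q ∈ t,
            ((rb i).left j *
                HopfAlgebra.antipode (R := k) ((rf i j).left p * Λ1 q))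
              ⊗ₜ[k] (((rf i j).right p * Λ2 q) * HopfAlgebra.antipode (R := k) (ra.right i)) := by
          refine Finset.sum_congr rfl fun p _ => Finset.sum_congr rfl fun q _ => ?_
          rw [antipode_mul_rev, ← mul_assoc]
      _ = Coalgebra.counit (R := k) ((rb i).right j) •
            ∑ q ∈ t, ((rb i).left j * HopfAlgebra.antipode (R := k) (Λ1 q))
              ⊗ₜ[k] (Λ2 q * HopfAlgebra.antipode (R := k) (ra.right i)) :=
          Finset.sum_comm.trans h2
  calc ∑ i ∈ ra.index, ∑ j ∈ (rb i).index, ∑ p ∈ (rf i j).index, ∑ q ∈ t,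
        (((rb i).left j * HopfAlgebra.antipode (R := k) (Λ1 q)) *
            HopfAlgebra.antipode (R := k) ((rf i j).left p))
          ⊗ₜ[k] (((rf i j).right p * Λ2 q) * HopfAlgebra.antipode (R := k) (ra.right i))
      = ∑ i ∈ ra.index, ∑ q ∈ t,
          ((ra.left i * HopfAlgebra.antipode (R := k) (Λ1 q)))
            ⊗ₜ[k] (Λ2 q * HopfAlgebra.antipode (R := k) (ra.right i)) := by
        refine Finset.sum_congr rfl fun i hi => ?_
        rw [Finset.sum_congr rfl fun j hj => key i hi j hj]
        have step : ∀ j, Coalgebra.counit (R := k) ((rb i).right j) •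
            (∑ q ∈ t, ((rb i).left j * HopfAlgebra.antipode (R := k) (Λ1 q))
              ⊗ₜ[k] (Λ2 q * HopfAlgebra.antipode (R := k) (ra.right i)))
            = ∑ q ∈ t,
                (((Coalgebra.counit (R := k) ((rb i).right j) • (rb i).left j) *
                    HopfAlgebra.antipode (R := k) (Λ1 q))
                  ⊗ₜ[k] (Λ2 q * HopfAlgebra.antipode (R := k) (ra.right i))) := by
          intro j
          rw [Finset.smul_sum]
          exact Finset.sum_congr rfl fun q _ => by rw [smul_tmul', ← smul_mul_assoc]
        rw [Finset.sum_congr rfl fun j _ => step j, Finset.sum_comm]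
        refine Finset.sum_congr rfl fun q _ => ?_
        rw [← sum_tmul, ← Finset.sum_mul, repr_smul_left (rb i)]
    _ = Coalgebra.counit (R := k) a •
          ∑ j ∈ t, HopfAlgebra.antipode (R := k) (Λ1 j) ⊗ₜ[k] Λ2 j := by
        have hmul : ∀ i, (∑ q ∈ t, (ra.left i * HopfAlgebra.antipode (R := k) (Λ1 q))
              ⊗ₜ[k] (Λ2 q * HopfAlgebra.antipode (R := k) (ra.right i)))
            = ∑ q ∈ t, (ra.left i * (HopfAlgebra.antipode (R := k) (ra.right i) *
                HopfAlgebra.antipode (R := k) (Λ1 q))) ⊗ₜ[k] Λ2 q := by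
          intro i
          have h3 := congrArg (TensorProduct.map (LinearMap.mulLeft k (ra.left i))
            (LinearMap.id)) (hR1' (ra.right i))
          simpa only [map_sum, TensorProduct.map_tmul, LinearMap.mulLeft_apply,
            LinearMap.id_apply, mul_assoc] using h3
        rw [Finset.sum_congr rfl fun i _ => hmul i, Finset.sum_comm, Finset.smul_sum]
        refine Finset.sum_congr rfl fun q _ => ?_
        have h4 : ∀ i, (ra.left i * (HopfAlgebra.antipode (R := k) (ra.right i) *
              HopfAlgebra.antipode (R := k) (Λ1 q))) ⊗ₜ[k] Λ2 q
            = ((ra.left i * HopfAlgebra.antipode (R := k) (ra.right i)) *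
                HopfAlgebra.antipode (R := k) (Λ1 q)) ⊗ₜ[k] Λ2 q := by
          intro i; rw [mul_assoc]
        rw [Finset.sum_congr rfl fun i _ => h4 i, ← sum_tmul, ← Finset.sum_mul,
          sum_mul_antipode_eq_smul (R := k) ra, smul_mul_assoc, one_mul, smul_tmul']
end

section
/- Let A be a finite-dimensional unimodular Hopf algebra over a field k, let λ : A → k be a nonzero left integral in the dual, and assume λ(z) = λ(S(z)) for every z in the center Z(A) of A. Then for every z ∈ Z(A) the following equality holds in A: λ(S(z₍₁₎)) · z₍₂₎ = λ(z₍₂₎) · S(z₍₁₎) (implicit summation over the Sweedler components of Δ(z) understood). -/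
open scoped TensorProduct
open Coalgebra HopfAlgebra

namespace CentralBalanceAux

variable {k A : Type*} [Field k] [Ring A] [HopfAlgebra k A]

lemma counit_left_collapse {a : A} {ι : Type*} (r : Coalgebra.Repr k a ι) :
    ∑ i ∈ r.index, Coalgebra.counit (R := k) (r.left i) • r.right i = a := by
  have h := congrArg (TensorProduct.lid k A) (Coalgebra.sum_counit_tmul_eq r)
  rw [map_sum] at h
  simp only [TensorProduct.lid_tmul] at h
  rw [h]; simp

lemma counit_right_collapse {a : A} {ι : Type*} (r : Coalgebra.Repr k a ι) :
    ∑ i ∈ r.index, Coalgebra.counit (R := k) (r.right i) • r.left i = a := by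
  have h := congrArg (TensorProduct.rid k A) (Coalgebra.sum_tmul_counit_eq r)
  rw [map_sum] at h
  simp only [TensorProduct.rid_tmul] at h
  rw [h]; simp

variable (lam : A →ₗ[k] k)

lemma L1 (hlam : ∀ a : A, (TensorProduct.rid k A)
      ((LinearMap.lTensor A lam) (Coalgebra.comul (R := k) a)) = lam a • 1)
    {a : A} {ι : Type*} (r : Coalgebra.Repr k a ι) :
    ∑ i ∈ r.index, lam (r.right i) • r.left i = lam a • 1 := by
  have h := hlam a
  rw [← r.eq] at h
  simpa [map_sum] using h

/-- `hlam` applied to a product, in double-sum form. -/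
lemma L1mul (hlam : ∀ a : A, (TensorProduct.rid k A)
      ((LinearMap.lTensor A lam) (Coalgebra.comul (R := k) a)) = lam a • 1)
    {x y : A} {ι κ : Type*} (rx : Coalgebra.Repr k x ι) (ry : Coalgebra.Repr k y κ) :
    ∑ j ∈ rx.index, ∑ m ∈ ry.index,
        lam (rx.right j * ry.right m) • (rx.left j * ry.left m) = lam (x * y) • 1 := by
  have h := hlam (x * y)
  rw [Bialgebra.comul_mul, ← rx.eq, ← ry.eq, Finset.sum_mul_sum] at h
  simp only [Algebra.TensorProduct.tmul_mul_tmul] at h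
  simpa [map_sum, TensorProduct.rid_tmul] using h

/-- The key identity `∑ c₍₁₎ λ(a c₍₂₎) = ∑ S(a₍₁₎) λ(a₍₂₎ c)`. -/
lemma star (hlam : ∀ a : A, (TensorProduct.rid k A)
      ((LinearMap.lTensor A lam) (Coalgebra.comul (R := k) a)) = lam a • 1)
    (a c : A) {ι κ : Type*} (ra : Coalgebra.Repr k a ι) (rc : Coalgebra.Repr k c κ) :
    ∑ m ∈ rc.index, lam (a * rc.right m) • rc.left m
      = ∑ i ∈ ra.index, lam (ra.right i * c) • HopfAlgebra.antipode (R := k) (ra.left i) := by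
  classical
  set S : A →ₗ[k] A := HopfAlgebra.antipode (R := k) with hS
  set r1 : ∀ i, Coalgebra.Repr k (ra.left i) (A × A) := fun i => Coalgebra.Repr.arbitrary k (ra.left i)
    with hr1
  set r2 : ∀ i, Coalgebra.Repr k (ra.right i) (A × A) := fun i => Coalgebra.Repr.arbitrary k (ra.right i)
    with hr2
  -- the bilinear map N
  set N : A →ₗ[k] A →ₗ[k] A := LinearMap.mk₂ k
      (fun y z => ∑ m ∈ rc.index, lam (z * rc.right m) • (y * rc.left m))
      (by intro y₁ y₂ z; simp [add_mul, smul_add, Finset.sum_add_distrib])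
      (by intro t y z; simp [smul_mul_assoc, Finset.smul_sum, smul_comm _ t])
      (by intro y z₁ z₂; simp [add_mul, add_smul, Finset.sum_add_distrib])
      (by intro t y z; simp [smul_mul_assoc, Finset.smul_sum, mul_smul]) with hN
  set M : A ⊗[k] (A ⊗[k] A) →ₗ[k] A :=
    (LinearMap.mul' k A) ∘ₗ (LinearMap.lTensor A (TensorProduct.lift N)) with hM
  have coas := Coalgebra.sum_map_tmul_tmul_eq (f := S) (g := (LinearMap.id : A →ₗ[k] A))
    (h := (LinearMap.id : A →ₗ[k] A)) a (repr := ra) (a₁ := r1) (a₂ := r2)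
  have E := congrArg M coas
  simp only [map_sum, hM, LinearMap.comp_apply, LinearMap.lTensor_tmul,
    TensorProduct.lift.tmul, LinearMap.mul'_apply, LinearMap.id_coe, id_eq, hN,
    LinearMap.mk₂_apply] at E
  -- Left side of E equals the RHS of the statement
  have hL : ∑ i ∈ ra.index, ∑ j ∈ (r2 i).index,
      S (ra.left i) * ∑ m ∈ rc.index,
        lam ((r2 i).right j * rc.right m) • ((r2 i).left j * rc.left m)
      = ∑ i ∈ ra.index, lam (ra.right i * c) • S (ra.left i) := by
    refine Finset.sum_congr rfl fun i _ => ?_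
    rw [← Finset.mul_sum]
    have hprod := L1mul lam hlam (r2 i) rc
    rw [hprod, mul_smul_comm, mul_one]
  -- Right side of E equals the LHS of the statement
  have hR : ∑ i ∈ ra.index, ∑ j ∈ (r1 i).index,
      S ((r1 i).left j) * ∑ m ∈ rc.index,
        lam (ra.right i * rc.right m) • ((r1 i).right j * rc.left m)
      = ∑ m ∈ rc.index, lam (a * rc.right m) • rc.left m := by
    have step1 : ∀ i ∈ ra.index, ∑ j ∈ (r1 i).index,
        S ((r1 i).left j) * ∑ m ∈ rc.index,
          lam (ra.right i * rc.right m) • ((r1 i).right j * rc.left m)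
        = ∑ m ∈ rc.index, (lam (ra.right i * rc.right m)
            * Coalgebra.counit (R := k) (ra.left i)) • rc.left m := by
      intro i _
      have collapse : ∑ j ∈ (r1 i).index, S ((r1 i).left j) * (r1 i).right j
          = Coalgebra.counit (R := k) (ra.left i) • (1 : A) :=
        HopfAlgebra.sum_antipode_mul_eq_smul (r1 i)
      calc ∑ j ∈ (r1 i).index,
            S ((r1 i).left j) * ∑ m ∈ rc.index,
              lam (ra.right i * rc.right m) • ((r1 i).right j * rc.left m)
          = ∑ j ∈ (r1 i).index, ∑ m ∈ rc.index,
              S ((r1 i).left j) * (lam (ra.right i * rc.right m) • ((r1 i).right j * rc.left m)) :=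
            Finset.sum_congr rfl fun j _ => Finset.mul_sum _ _ _
        _ = ∑ m ∈ rc.index, ∑ j ∈ (r1 i).index,
              S ((r1 i).left j) * (lam (ra.right i * rc.right m) • ((r1 i).right j * rc.left m)) :=
            Finset.sum_comm
        _ = ∑ m ∈ rc.index, (lam (ra.right i * rc.right m)
              * Coalgebra.counit (R := k) (ra.left i)) • rc.left m := by
            refine Finset.sum_congr rfl fun m _ => ?_
            calc ∑ j ∈ (r1 i).index,
                  S ((r1 i).left j) * (lam (ra.right i * rc.right m) • ((r1 i).right j * rc.left m))
                = ∑ j ∈ (r1 i).index, lam (ra.right i * rc.right m) •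
                    ((S ((r1 i).left j) * (r1 i).right j) * rc.left m) := by
                  refine Finset.sum_congr rfl fun j _ => ?_
                  rw [mul_smul_comm, mul_assoc]
              _ = lam (ra.right i * rc.right m) •
                    ((∑ j ∈ (r1 i).index, S ((r1 i).left j) * (r1 i).right j) * rc.left m) := by
                  rw [Finset.sum_mul, Finset.smul_sum]
              _ = (lam (ra.right i * rc.right m)
                    * Coalgebra.counit (R := k) (ra.left i)) • rc.left m := by
                  rw [collapse, smul_mul_assoc, one_mul, smul_smul]
    calc ∑ i ∈ ra.index, ∑ j ∈ (r1 i).index,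
        S ((r1 i).left j) * ∑ m ∈ rc.index,
          lam (ra.right i * rc.right m) • ((r1 i).right j * rc.left m)
        = ∑ i ∈ ra.index, ∑ m ∈ rc.index, (lam (ra.right i * rc.right m)
            * Coalgebra.counit (R := k) (ra.left i)) • rc.left m :=
          Finset.sum_congr rfl step1
      _ = ∑ m ∈ rc.index, (∑ i ∈ ra.index, lam (ra.right i * rc.right m)
            * Coalgebra.counit (R := k) (ra.left i)) • rc.left m := by
          rw [Finset.sum_comm]
          exact Finset.sum_congr rfl fun m _ => (Finset.sum_smul).symm
      _ = ∑ m ∈ rc.index, lam (a * rc.right m) • rc.left m := by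
          refine Finset.sum_congr rfl fun m _ => ?_
          congr 1
          have : ∑ i ∈ ra.index, lam (ra.right i * rc.right m)
              * Coalgebra.counit (R := k) (ra.left i)
              = lam ((∑ i ∈ ra.index, Coalgebra.counit (R := k) (ra.left i) • ra.right i)
                  * rc.right m) := by
            rw [Finset.sum_mul]
            rw [map_sum]
            refine Finset.sum_congr rfl fun i _ => ?_
            rw [smul_mul_assoc, map_smul, smul_eq_mul, mul_comm]
          rw [this, counit_left_collapse]
  rw [← hR, ← E, hL]


section Conv

variable {B : Type*} [Ring B] [Algebra k B]

/-- convolution product on linear maps from a coalgebra to an algebra -/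
noncomputable def convo (f g : A →ₗ[k] B) : A →ₗ[k] B :=
  (LinearMap.mul' k B) ∘ₗ (TensorProduct.map f g) ∘ₗ (Coalgebra.comul (R := k))

lemma convo_repr (f g : A →ₗ[k] B) {a : A} {ι : Type*} (r : Coalgebra.Repr k a ι) :
    convo f g a = ∑ i ∈ r.index, f (r.left i) * g (r.right i) := by
  rw [convo, LinearMap.comp_apply, LinearMap.comp_apply, ← r.eq, map_sum, map_sum]
  simp [TensorProduct.map_tmul, LinearMap.mul'_apply]

/-- the unit for convolution -/
noncomputable def cunit : A →ₗ[k] B :=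
  (Algebra.linearMap k B) ∘ₗ (Coalgebra.counit (R := k))

lemma cunit_apply (a : A) :
    (cunit : A →ₗ[k] B) a = algebraMap k B (Coalgebra.counit (R := k) a) := rfl

lemma convo_cunit_left (f : A →ₗ[k] B) : convo cunit f = f := by
  apply LinearMap.ext
  intro a
  set r := Coalgebra.Repr.arbitrary k a
  rw [convo_repr cunit f r]
  calc ∑ i ∈ r.index, cunit (B := B) (r.left i) * f (r.right i)
      = ∑ i ∈ r.index, f (Coalgebra.counit (R := k) (r.left i) • r.right i) := by
        refine Finset.sum_congr rfl fun i _ => ?_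
        rw [cunit_apply, ← Algebra.smul_def, map_smul]
    _ = f a := by rw [← map_sum, counit_left_collapse r]

lemma convo_cunit_right (f : A →ₗ[k] B) : convo f cunit = f := by
  apply LinearMap.ext
  intro a
  set r := Coalgebra.Repr.arbitrary k a
  rw [convo_repr f cunit r]
  calc ∑ i ∈ r.index, f (r.left i) * cunit (B := B) (r.right i)
      = ∑ i ∈ r.index, f (Coalgebra.counit (R := k) (r.right i) • r.left i) := by
        refine Finset.sum_congr rfl fun i _ => ?_
        rw [cunit_apply, ← Algebra.commutes, ← Algebra.smul_def, map_smul]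
    _ = f a := by rw [← map_sum, counit_right_collapse r]

lemma convo_assoc (f g h : A →ₗ[k] B) : convo (convo f g) h = convo f (convo g h) := by
  apply LinearMap.ext
  intro a
  set r := Coalgebra.Repr.arbitrary k a with hr
  set r1 : ∀ i, Coalgebra.Repr k (r.left i) (A × A) := fun i => Coalgebra.Repr.arbitrary k (r.left i)
    with hr1
  set r2 : ∀ i, Coalgebra.Repr k (r.right i) (A × A) := fun i => Coalgebra.Repr.arbitrary k (r.right i)
    with hr2
  have coas := Coalgebra.sum_map_tmul_tmul_eq (f := f) (g := g) (h := h) a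
    (repr := r) (a₁ := r1) (a₂ := r2)
  have E := congrArg ((LinearMap.mul' k B) ∘ₗ (LinearMap.lTensor B (LinearMap.mul' k B))) coas
  simp only [map_sum, LinearMap.comp_apply, LinearMap.lTensor_tmul, LinearMap.mul'_apply] at E
  have hLHS : ∑ i ∈ r.index, ∑ j ∈ (r2 i).index,
      f (r.left i) * (g ((r2 i).left j) * h ((r2 i).right j)) = convo f (convo g h) a := by
    rw [convo_repr f (convo g h) r]
    refine Finset.sum_congr rfl fun i _ => ?_
    rw [← Finset.mul_sum, convo_repr g h (r2 i)]
  have hRHS : ∑ i ∈ r.index, ∑ j ∈ (r1 i).index,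
      f ((r1 i).left j) * (g ((r1 i).right j) * h (r.right i)) = convo (convo f g) h a := by
    rw [convo_repr (convo f g) h r]
    refine Finset.sum_congr rfl fun i _ => ?_
    rw [convo_repr f g (r1 i), Finset.sum_mul]
    exact Finset.sum_congr rfl fun j _ => (mul_assoc _ _ _).symm
  rw [← hLHS, ← hRHS]
  exact E.symm

end Conv

section AntiComul

noncomputable def iota1 : A →ₗ[k] A ⊗[k] A :=
  (Algebra.TensorProduct.includeLeft : A →ₐ[k] A ⊗[k] A).toLinearMap

noncomputable def iota2 : A →ₗ[k] A ⊗[k] A :=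
  (Algebra.TensorProduct.includeRight : A →ₐ[k] A ⊗[k] A).toLinearMap

@[simp] lemma iota1_apply (a : A) : iota1 (k := k) a = a ⊗ₜ[k] 1 := rfl
@[simp] lemma iota2_apply (a : A) : iota2 (k := k) a = (1 : A) ⊗ₜ[k] a := rfl

lemma convo_iota1_antipode :
    convo (iota1 (k := k) (A := A)) (iota1 ∘ₗ HopfAlgebra.antipode (R := k)) = cunit := by
  apply LinearMap.ext
  intro a
  set r := Coalgebra.Repr.arbitrary k a
  rw [convo_repr _ _ r]
  calc ∑ i ∈ r.index, iota1 (k := k) (r.left i)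
        * (iota1 ∘ₗ HopfAlgebra.antipode (R := k)) (r.right i)
      = ∑ i ∈ r.index, (r.left i * HopfAlgebra.antipode (R := k) (r.right i)) ⊗ₜ[k] (1 : A) := by
        refine Finset.sum_congr rfl fun i _ => ?_
        simp [Algebra.TensorProduct.tmul_mul_tmul]
    _ = (∑ i ∈ r.index, r.left i * HopfAlgebra.antipode (R := k) (r.right i)) ⊗ₜ[k] (1 : A) := by
        rw [TensorProduct.sum_tmul]
    _ = cunit a := by
        rw [HopfAlgebra.sum_mul_antipode_eq_algebraMap_counit r, cunit_apply,
          Algebra.TensorProduct.algebraMap_apply]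

lemma convo_antipode_iota1 :
    convo (iota1 ∘ₗ HopfAlgebra.antipode (R := k)) (iota1 (k := k) (A := A)) = cunit := by
  apply LinearMap.ext
  intro a
  set r := Coalgebra.Repr.arbitrary k a
  rw [convo_repr _ _ r]
  calc ∑ i ∈ r.index, (iota1 ∘ₗ HopfAlgebra.antipode (R := k)) (r.left i)
        * iota1 (k := k) (r.right i)
      = ∑ i ∈ r.index, (HopfAlgebra.antipode (R := k) (r.left i) * r.right i) ⊗ₜ[k] (1 : A) := by
        refine Finset.sum_congr rfl fun i _ => ?_
        simp [Algebra.TensorProduct.tmul_mul_tmul]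
    _ = (∑ i ∈ r.index, HopfAlgebra.antipode (R := k) (r.left i) * r.right i) ⊗ₜ[k] (1 : A) := by
        rw [TensorProduct.sum_tmul]
    _ = cunit a := by
        rw [HopfAlgebra.sum_antipode_mul_eq_algebraMap_counit r, cunit_apply,
          Algebra.TensorProduct.algebraMap_apply]

lemma convo_iota2_antipode :
    convo (iota2 (k := k) (A := A)) (iota2 ∘ₗ HopfAlgebra.antipode (R := k)) = cunit := by
  apply LinearMap.ext
  intro a
  set r := Coalgebra.Repr.arbitrary k a
  rw [convo_repr _ _ r]
  calc ∑ i ∈ r.index, iota2 (k := k) (r.left i)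
        * (iota2 ∘ₗ HopfAlgebra.antipode (R := k)) (r.right i)
      = ∑ i ∈ r.index, (1 : A) ⊗ₜ[k] (r.left i * HopfAlgebra.antipode (R := k) (r.right i)) := by
        refine Finset.sum_congr rfl fun i _ => ?_
        simp [Algebra.TensorProduct.tmul_mul_tmul]
    _ = (1 : A) ⊗ₜ[k] (∑ i ∈ r.index, r.left i * HopfAlgebra.antipode (R := k) (r.right i)) := by
        rw [TensorProduct.tmul_sum]
    _ = cunit a := by
        rw [HopfAlgebra.sum_mul_antipode_eq_algebraMap_counit r, cunit_apply,
          Algebra.TensorProduct.algebraMap_apply']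

lemma convo_antipode_iota2 :
    convo (iota2 ∘ₗ HopfAlgebra.antipode (R := k)) (iota2 (k := k) (A := A)) = cunit := by
  apply LinearMap.ext
  intro a
  set r := Coalgebra.Repr.arbitrary k a
  rw [convo_repr _ _ r]
  calc ∑ i ∈ r.index, (iota2 ∘ₗ HopfAlgebra.antipode (R := k)) (r.left i)
        * iota2 (k := k) (r.right i)
      = ∑ i ∈ r.index, (1 : A) ⊗ₜ[k] (HopfAlgebra.antipode (R := k) (r.left i) * r.right i) := by
        refine Finset.sum_congr rfl fun i _ => ?_
        simp [Algebra.TensorProduct.tmul_mul_tmul]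
    _ = (1 : A) ⊗ₜ[k] (∑ i ∈ r.index, HopfAlgebra.antipode (R := k) (r.left i) * r.right i) := by
        rw [TensorProduct.tmul_sum]
    _ = cunit a := by
        rw [HopfAlgebra.sum_antipode_mul_eq_algebraMap_counit r, cunit_apply,
          Algebra.TensorProduct.algebraMap_apply']

lemma comul_eq_convo :
    (Coalgebra.comul (R := k) (A := A)) = convo (iota1 (k := k)) (iota2 (k := k)) := by
  apply LinearMap.ext
  intro a
  set r := Coalgebra.Repr.arbitrary k a
  rw [convo_repr _ _ r, ← r.eq]
  refine Finset.sum_congr rfl fun i _ => ?_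
  simp [Algebra.TensorProduct.tmul_mul_tmul]

/-- the twisted antipode-square map -/
noncomputable def Gmap : A →ₗ[k] A ⊗[k] A :=
  (TensorProduct.comm k A A).toLinearMap ∘ₗ
    (TensorProduct.map (HopfAlgebra.antipode (R := k)) (HopfAlgebra.antipode (R := k))) ∘ₗ
      (Coalgebra.comul (R := k))

lemma Gmap_eq_convo :
    Gmap (k := k) (A := A)
      = convo (iota2 ∘ₗ HopfAlgebra.antipode (R := k)) (iota1 ∘ₗ HopfAlgebra.antipode (R := k)) := by
  apply LinearMap.ext
  intro a
  set r := Coalgebra.Repr.arbitrary k a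
  rw [convo_repr _ _ r, Gmap, LinearMap.comp_apply, LinearMap.comp_apply, ← r.eq, map_sum, map_sum]
  refine Finset.sum_congr rfl fun i _ => ?_
  simp [Algebra.TensorProduct.tmul_mul_tmul]

lemma convo_comul_F :
    convo (Coalgebra.comul (R := k) (A := A)) ((Coalgebra.comul (R := k)) ∘ₗ
      HopfAlgebra.antipode (R := k)) = cunit := by
  apply LinearMap.ext
  intro a
  set r := Coalgebra.Repr.arbitrary k a
  rw [convo_repr _ _ r]
  calc ∑ i ∈ r.index, Coalgebra.comul (R := k) (r.left i)
        * ((Coalgebra.comul (R := k)) ∘ₗ HopfAlgebra.antipode (R := k)) (r.right i)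
      = Coalgebra.comul (R := k)
          (∑ i ∈ r.index, r.left i * HopfAlgebra.antipode (R := k) (r.right i)) := by
        rw [map_sum]
        refine Finset.sum_congr rfl fun i _ => ?_
        rw [LinearMap.comp_apply, Bialgebra.comul_mul]
    _ = cunit a := by
        rw [HopfAlgebra.sum_mul_antipode_eq_smul r, map_smul, Bialgebra.comul_one, cunit_apply,
          Algebra.algebraMap_eq_smul_one]

lemma convo_G_comul :
    convo (Gmap (k := k) (A := A)) (Coalgebra.comul (R := k)) = cunit := by
  rw [Gmap_eq_convo, comul_eq_convo, convo_assoc, ← convo_assoc (iota1 ∘ₗ HopfAlgebra.antipode (R := k)),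
    convo_antipode_iota1, convo_cunit_left, convo_antipode_iota2]

lemma comul_antipode_eq_Gmap :
    (Coalgebra.comul (R := k) (A := A)) ∘ₗ HopfAlgebra.antipode (R := k) = Gmap (k := k) := by
  have h1 := convo_comul_F (k := k) (A := A)
  have h2 := convo_G_comul (k := k) (A := A)
  calc (Coalgebra.comul (R := k) (A := A)) ∘ₗ HopfAlgebra.antipode (R := k)
      = convo cunit ((Coalgebra.comul (R := k)) ∘ₗ HopfAlgebra.antipode (R := k)) :=
        (convo_cunit_left _).symm
    _ = convo (convo (Gmap (k := k)) (Coalgebra.comul (R := k)))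
          ((Coalgebra.comul (R := k)) ∘ₗ HopfAlgebra.antipode (R := k)) := by rw [h2]
    _ = convo (Gmap (k := k)) (convo (Coalgebra.comul (R := k))
          ((Coalgebra.comul (R := k)) ∘ₗ HopfAlgebra.antipode (R := k))) := convo_assoc _ _ _
    _ = convo (Gmap (k := k)) cunit := by rw [h1]
    _ = Gmap (k := k) := convo_cunit_right _

/-- The antipode is an anti-coalgebra morphism, in Sweedler form. -/
lemma comul_antipode {a : A} {ι : Type*} (r : Coalgebra.Repr k a ι) :
    Coalgebra.comul (R := k) (HopfAlgebra.antipode (R := k) a)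
      = ∑ i ∈ r.index, HopfAlgebra.antipode (R := k) (r.right i)
          ⊗ₜ[k] HopfAlgebra.antipode (R := k) (r.left i) := by
  have h := LinearMap.congr_fun (comul_antipode_eq_Gmap (k := k) (A := A)) a
  rw [LinearMap.comp_apply] at h
  rw [h, Gmap, LinearMap.comp_apply, LinearMap.comp_apply, ← r.eq, map_sum, map_sum]
  refine Finset.sum_congr rfl fun i _ => ?_
  simp

end AntiComul

section FinDim

variable [FiniteDimensional k A]

/-- contraction of the left tensor factor against a functional -/
noncomputable def cleft (f : A →ₗ[k] k) : A ⊗[k] A →ₗ[k] A :=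
  (TensorProduct.lid k A).toLinearMap ∘ₗ (LinearMap.rTensor A f)

@[simp] lemma cleft_tmul (f : A →ₗ[k] k) (x y : A) : cleft f (x ⊗ₜ[k] y) = f x • y := by
  simp [cleft]

lemma basis_expand (t : A ⊗[k] A) :
    ∑ i, (Module.finBasis k A) i ⊗ₜ[k] cleft ((Module.finBasis k A).coord i) t = t := by
  set b := Module.finBasis k A
  induction t using TensorProduct.induction_on with
  | zero => simp
  | tmul x y =>
    have : ∀ i, b i ⊗ₜ[k] cleft (b.coord i) (x ⊗ₜ[k] y)
        = (b.repr x i • b i) ⊗ₜ[k] y := by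
      intro i
      rw [cleft_tmul, TensorProduct.smul_tmul, Module.Basis.coord_apply]
    rw [Finset.sum_congr rfl fun i _ => this i, ← TensorProduct.sum_tmul, b.sum_repr]
  | add u v hu hv =>
    simp only [map_add, TensorProduct.tmul_add, Finset.sum_add_distrib, hu, hv]

/-- the representation of `comul u` whose left components are a basis -/
noncomputable def basisRepr (u : A) : Coalgebra.Repr k u (Fin (Module.finrank k A)) where
  index := Finset.univ
  left := Module.finBasis k A
  right := fun i => cleft ((Module.finBasis k A).coord i) (Coalgebra.comul (R := k) u)
  eq := basis_expand (Coalgebra.comul (R := k) u)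

lemma right_components (lam : A →ₗ[k] k)
    (hlam : ∀ a : A, (TensorProduct.rid k A)
      ((LinearMap.lTensor A lam) (Coalgebra.comul (R := k) a)) = lam a • 1)
    {u : A} (hu : ∀ x : A, lam (x * u) = 0) (j) (x : A) :
    lam (x * cleft ((Module.finBasis k A).coord j) (Coalgebra.comul (R := k) u)) = 0 := by
  have hstar := star lam hlam x u (Coalgebra.Repr.arbitrary k x) (basisRepr u)
  have h0 : ∑ i ∈ (Coalgebra.Repr.arbitrary k x).index,
      lam ((Coalgebra.Repr.arbitrary k x).right i * u) •
        HopfAlgebra.antipode (R := k) ((Coalgebra.Repr.arbitrary k x).left i) = (0 : A) := by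
    refine Finset.sum_eq_zero fun i _ => ?_
    rw [hu, zero_smul]
  rw [h0] at hstar
  have hstar' : ∑ m : Fin (Module.finrank k A),
      lam (x * cleft ((Module.finBasis k A).coord m) (Coalgebra.comul (R := k) u))
        • (Module.finBasis k A) m = 0 := hstar
  exact Fintype.linearIndependent_iff.mp (Module.finBasis k A).linearIndependent
    (fun m => lam (x * cleft ((Module.finBasis k A).coord m) (Coalgebra.comul (R := k) u)))
    hstar' j

lemma counit_vanish (lam : A →ₗ[k] k)
    (hlam : ∀ a : A, (TensorProduct.rid k A)
      ((LinearMap.lTensor A lam) (Coalgebra.comul (R := k) a)) = lam a • 1)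
    (hne : lam ≠ 0) {u : A} (hu : ∀ x : A, lam (x * u) = 0) :
    Coalgebra.counit (R := k) u = 0 := by
  obtain ⟨x0, hx0⟩ : ∃ x0, lam x0 ≠ 0 := by
    by_contra h
    push_neg at h
    exact hne (LinearMap.ext fun x => h x)
  have h1 : Coalgebra.counit (R := k) u • (1 : A)
      = ∑ j : Fin (Module.finrank k A), HopfAlgebra.antipode (R := k) ((Module.finBasis k A) j)
          * cleft ((Module.finBasis k A).coord j) (Coalgebra.comul (R := k) u) :=
    (HopfAlgebra.sum_antipode_mul_eq_smul (basisRepr (k := k) u)).symm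
  have h2 : lam (x0 * (Coalgebra.counit (R := k) u • (1 : A)))
      = Coalgebra.counit (R := k) u * lam x0 := by
    rw [mul_smul_comm, mul_one, map_smul, smul_eq_mul]
  rw [h1] at h2
  have h3 : lam (x0 * ∑ j : Fin (Module.finrank k A),
      HopfAlgebra.antipode (R := k) ((Module.finBasis k A) j)
        * cleft ((Module.finBasis k A).coord j) (Coalgebra.comul (R := k) u)) = 0 := by
    rw [Finset.mul_sum, map_sum]
    refine Finset.sum_eq_zero fun j _ => ?_
    rw [← mul_assoc]
    exact right_components lam hlam hu j _
  rw [h3] at h2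
  exact (mul_eq_zero.mp h2.symm).resolve_right hx0

lemma nondeg_right (lam : A →ₗ[k] k)
    (hlam : ∀ a : A, (TensorProduct.rid k A)
      ((LinearMap.lTensor A lam) (Coalgebra.comul (R := k) a)) = lam a • 1)
    (hne : lam ≠ 0) {u : A} (hu : ∀ x : A, lam (x * u) = 0) :
    u = 0 := by
  have h : ∑ j : Fin (Module.finrank k A),
      Coalgebra.counit (R := k) (cleft ((Module.finBasis k A).coord j)
        (Coalgebra.comul (R := k) u)) • (Module.finBasis k A) j = u :=
    counit_right_collapse (basisRepr (k := k) u)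
  rw [← h]
  refine Finset.sum_eq_zero fun j _ => ?_
  rw [counit_vanish lam hlam hne (right_components lam hlam hu j), zero_smul]

/-- the pairing map `u ↦ λ(· u)` -/
noncomputable def Phi (lam : A →ₗ[k] k) : A →ₗ[k] Module.Dual k A :=
  LinearMap.mk₂ k (fun u x => lam (x * u))
    (by intro u v x; simp [mul_add])
    (by intro t u x; simp [mul_smul_comm])
    (by intro u x y; simp [add_mul])
    (by intro t u x; simp [smul_mul_assoc])

@[simp] lemma Phi_apply (u x : A) : Phi lam u x = lam (x * u) := rfl

lemma Phi_injective (lam : A →ₗ[k] k)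
    (hlam : ∀ a : A, (TensorProduct.rid k A)
      ((LinearMap.lTensor A lam) (Coalgebra.comul (R := k) a)) = lam a • 1)
    (hne : lam ≠ 0) : Function.Injective (Phi lam) := by
  rw [← LinearMap.ker_eq_bot, LinearMap.ker_eq_bot']
  intro u hu0
  exact nondeg_right lam hlam hne fun x => by
    have := LinearMap.congr_fun hu0 x
    simpa using this

lemma Phi_surjective (lam : A →ₗ[k] k)
    (hlam : ∀ a : A, (TensorProduct.rid k A)
      ((LinearMap.lTensor A lam) (Coalgebra.comul (R := k) a)) = lam a • 1)
    (hne : lam ≠ 0) : Function.Surjective (Phi lam) :=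
  (LinearMap.injective_iff_surjective_of_finrank_eq_finrank
    (Subspace.dual_finrank_eq (K := k) (V := A)).symm).mp (Phi_injective lam hlam hne)

lemma exists_integral (lam : A →ₗ[k] k)
    (hlam : ∀ a : A, (TensorProduct.rid k A)
      ((LinearMap.lTensor A lam) (Coalgebra.comul (R := k) a)) = lam a • 1)
    (hne : lam ≠ 0) :
    ∃ Λ : A, (∀ x : A, lam (x * Λ) = Coalgebra.counit (R := k) x) ∧
      (∀ a : A, a * Λ = Coalgebra.counit (R := k) a • Λ) := by
  obtain ⟨Λ, hΛ⟩ := Phi_surjective lam hlam hne (Coalgebra.counit (R := k) (A := A))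
  have hx : ∀ x : A, lam (x * Λ) = Coalgebra.counit (R := k) x := fun x =>
    LinearMap.congr_fun hΛ x
  refine ⟨Λ, hx, fun a => Phi_injective lam hlam hne ?_⟩
  apply LinearMap.ext
  intro x
  have h1 : Phi lam (a * Λ) x = Coalgebra.counit (R := k) x * Coalgebra.counit (R := k) a := by
    rw [Phi_apply, ← mul_assoc, hx, Bialgebra.counit_mul]
  have h2 : Phi lam (Coalgebra.counit (R := k) a • Λ) x
      = Coalgebra.counit (R := k) x * Coalgebra.counit (R := k) a := by
    rw [map_smul]
    simp only [LinearMap.smul_apply, Phi_apply, hx, smul_eq_mul]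
    ring
  rw [h1, h2]

lemma antipode_surjective (lam : A →ₗ[k] k)
    (hlam : ∀ a : A, (TensorProduct.rid k A)
      ((LinearMap.lTensor A lam) (Coalgebra.comul (R := k) a)) = lam a • 1)
    (hne : lam ≠ 0)
    (hu : ∀ Λ : A, (∀ a : A, a * Λ = Coalgebra.counit (R := k) a • Λ) ↔
      (∀ a : A, Λ * a = Coalgebra.counit (R := k) a • Λ)) :
    Function.Surjective (HopfAlgebra.antipode (R := k) (A := A)) := by
  obtain ⟨Λ, hxΛ, hleft⟩ := exists_integral lam hlam hne
  have hright : ∀ a : A, Λ * a = Coalgebra.counit (R := k) a • Λ := (hu Λ).mp hleft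
  have lamΛ : lam Λ = 1 := by
    have := hxΛ 1
    rwa [one_mul, Bialgebra.counit_one] at this
  have hΛx : ∀ x : A, lam (Λ * x) = Coalgebra.counit (R := k) x := by
    intro x
    rw [hright x, map_smul, lamΛ, smul_eq_mul, mul_one]
  intro c
  set rΛ := Coalgebra.Repr.arbitrary k Λ
  set rc := Coalgebra.Repr.arbitrary k c
  have hstar := star lam hlam Λ c rΛ rc
  have hLHS : ∑ m ∈ rc.index, lam (Λ * rc.right m) • rc.left m = c := by
    rw [Finset.sum_congr rfl fun m _ => by rw [hΛx (rc.right m)]]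
    exact counit_right_collapse rc
  rw [hLHS] at hstar
  refine ⟨∑ i ∈ rΛ.index, lam (rΛ.right i * c) • rΛ.left i, ?_⟩
  rw [map_sum]
  simp only [map_smul]
  exact hstar.symm

lemma antipode_injective (lam : A →ₗ[k] k)
    (hlam : ∀ a : A, (TensorProduct.rid k A)
      ((LinearMap.lTensor A lam) (Coalgebra.comul (R := k) a)) = lam a • 1)
    (hne : lam ≠ 0)
    (hu : ∀ Λ : A, (∀ a : A, a * Λ = Coalgebra.counit (R := k) a • Λ) ↔
      (∀ a : A, Λ * a = Coalgebra.counit (R := k) a • Λ)) :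
    Function.Injective (HopfAlgebra.antipode (R := k) (A := A)) :=
  (LinearMap.injective_iff_surjective).mpr (antipode_surjective lam hlam hne hu)

end FinDim

lemma antipode_one : HopfAlgebra.antipode (R := k) (1 : A) = 1 := by
  have h := HopfAlgebra.mul_antipode_rTensor_comul_apply (R := k) (A := A) (a := (1 : A))
  rw [Bialgebra.comul_one] at h
  simpa [Algebra.TensorProduct.one_def] using h

end CentralBalanceAux

open CentralBalanceAux

/-- Let `A` be a finite-dimensional unimodular Hopf algebra over a field
`k`, let `λ` be a nonzero left integral in the dual, and assume `λ(z) = λ(S(z))` for every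
central `z`.  Then for every `z` in the center of `A`,
`λ(S(z₍₁₎)) • z₍₂₎ = λ(z₍₂₎) • S(z₍₁₎)` in `A` (summation over the Sweedler components of
`Δ(z)` understood). -/
theorem central_balance (k A : Type*) [Field k] [Ring A] [HopfAlgebra k A]
    [FiniteDimensional k A]
    (hu : ∀ Λ : A, (∀ a : A, a * Λ = Coalgebra.counit (R := k) a • Λ) ↔
      (∀ a : A, Λ * a = Coalgebra.counit (R := k) a • Λ))
    (lam : A →ₗ[k] k) (hne : lam ≠ 0)
    (hlam : ∀ a : A, (TensorProduct.rid k A)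
        ((LinearMap.lTensor A lam) (Coalgebra.comul (R := k) a)) = lam a • 1)
    (hSlam : ∀ z : A, (∀ w : A, z * w = w * z) →
      lam z = lam (HopfAlgebra.antipode (R := k) z)) :
    ∀ z : A, (∀ w : A, z * w = w * z) →
      (TensorProduct.lid k A)
          ((LinearMap.rTensor A (lam ∘ₗ HopfAlgebra.antipode (R := k)))
            (Coalgebra.comul (R := k) z)) =
        (TensorProduct.rid k A)
          ((LinearMap.lTensor A lam)
            (TensorProduct.map (HopfAlgebra.antipode (R := k)) LinearMap.id
              (Coalgebra.comul (R := k) z))) := by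
  intro z hz
  set rz := Coalgebra.Repr.arbitrary k z with hrz
  have hL : (TensorProduct.lid k A)
      ((LinearMap.rTensor A (lam ∘ₗ HopfAlgebra.antipode (R := k)))
        (Coalgebra.comul (R := k) z))
      = ∑ i ∈ rz.index, lam (HopfAlgebra.antipode (R := k) (rz.left i)) • rz.right i := by
    rw [← rz.eq, map_sum, map_sum]
    simp [LinearMap.rTensor_tmul, TensorProduct.lid_tmul]
  have hR : (TensorProduct.rid k A)
      ((LinearMap.lTensor A lam)
        (TensorProduct.map (HopfAlgebra.antipode (R := k)) LinearMap.id
          (Coalgebra.comul (R := k) z)))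
      = ∑ i ∈ rz.index, lam (rz.right i) • HopfAlgebra.antipode (R := k) (rz.left i) := by
    rw [← rz.eq, map_sum, map_sum, map_sum]
    simp [TensorProduct.map_tmul, LinearMap.lTensor_tmul, TensorProduct.rid_tmul]
  rw [hL, hR]
  -- `Y = λ(z) • 1`
  have hY : ∑ i ∈ rz.index, lam (rz.right i) • HopfAlgebra.antipode (R := k) (rz.left i)
      = lam z • 1 := by
    have h1 : HopfAlgebra.antipode (R := k)
        (∑ i ∈ rz.index, lam (rz.right i) • rz.left i)
        = ∑ i ∈ rz.index, lam (rz.right i) • HopfAlgebra.antipode (R := k) (rz.left i) := by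
      rw [map_sum]
      exact Finset.sum_congr rfl fun i _ => map_smul _ _ _
    rw [← h1, L1 lam hlam rz, map_smul, CentralBalanceAux.antipode_one]
  -- `S X = λ(z) • 1` as well
  have hX : HopfAlgebra.antipode (R := k)
      (∑ i ∈ rz.index, lam (HopfAlgebra.antipode (R := k) (rz.left i)) • rz.right i)
      = lam z • 1 := by
    have h2 : HopfAlgebra.antipode (R := k)
        (∑ i ∈ rz.index, lam (HopfAlgebra.antipode (R := k) (rz.left i)) • rz.right i)
        = ∑ i ∈ rz.index, lam (HopfAlgebra.antipode (R := k) (rz.left i)) •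
            HopfAlgebra.antipode (R := k) (rz.right i) := by
      rw [map_sum]
      exact Finset.sum_congr rfl fun i _ => map_smul _ _ _
    rw [h2, hSlam z hz]
    exact L1 lam hlam ⟨rz.index, fun i => HopfAlgebra.antipode (R := k) (rz.right i),
      fun i => HopfAlgebra.antipode (R := k) (rz.left i), (comul_antipode rz).symm⟩
  apply antipode_injective lam hlam hne hu
  rw [hX, hY, map_smul, CentralBalanceAux.antipode_one]
end
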